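/- arXiv:1801.02473 — 5 statements merged into one kernel-verified Lean document; each statement's English description precedes it below -/
import Mathlib

section
/- Let Δ : S(X) → S(Y) be a surjective isometry between the unit spheres of two Banach spaces, and let M be a convex subset of S(X). Then M is a maximal proper face of the closed unit ball B_X if and only if Δ(M) (the image of M under Δ) is a maximal proper face of the closed unit ball B_Y. -/
/-- `F` is a face of the convex set `C`: a nonempty convex subset of `C` such that whenever a
nontrivial convex combination of two points of `C` lies in `F`, both points lie in `F`. -/
def IsFace {X : Type*} [NormedAddCommGroup X] [NormedSpace ℝ X] (C F : Set X) : Prop :=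
  F.Nonempty ∧ F ⊆ C ∧ Convex ℝ F ∧
    ∀ ⦃x : X⦄, x ∈ C → ∀ ⦃y : X⦄, y ∈ C → ∀ ⦃α : ℝ⦄, 0 < α → α < 1 →
      α • x + (1 - α) • y ∈ F → x ∈ F ∧ y ∈ F

/-- `F` is a maximal proper face of the convex set `C`: a proper face of `C` which is not
strictly contained in any other proper face of `C`. -/
def IsMaximalProperFace {X : Type*} [NormedAddCommGroup X] [NormedSpace ℝ X]
    (C F : Set X) : Prop :=
  IsFace C F ∧ F ≠ C ∧ ∀ G : Set X, IsFace C G → G ≠ C → F ⊆ G → G = F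

open Set

section Aux

variable {E : Type*} [NormedAddCommGroup E] [NormedSpace ℝ E]

/-- A norm-one functional equal to `1` at two unit vectors whose sum has norm `2`. -/
lemma tingley_exists_pair_functional {x y : E} (hx : ‖x‖ = 1) (hy : ‖y‖ = 1)
    (hxy : ‖x + y‖ = 2) :
    ∃ f : E →L[ℝ] ℝ, ‖f‖ = 1 ∧ f x = 1 ∧ f y = 1 := by
  have hne : x + y ≠ 0 := by
    intro h
    rw [h, norm_zero] at hxy; norm_num at hxy
  obtain ⟨f, hf1, hfx⟩ := exists_dual_vector ℝ (x + y) (norm_ne_zero_iff.mpr hne)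
  have hsum : f x + f y = 2 := by
    have h2 : f (x + y) = ‖x + y‖ := by exact_mod_cast hfx
    rw [map_add, hxy] at h2
    exact h2
  have hbx : f x ≤ 1 := by
    calc f x ≤ |f x| := le_abs_self _
    _ = ‖f x‖ := (Real.norm_eq_abs _).symm
    _ ≤ ‖f‖ * ‖x‖ := f.le_opNorm x
    _ = 1 := by rw [hf1, hx]; ring
  have hby : f y ≤ 1 := by
    calc f y ≤ |f y| := le_abs_self _
    _ = ‖f y‖ := (Real.norm_eq_abs _).symm
    _ ≤ ‖f‖ * ‖y‖ := f.le_opNorm y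
    _ = 1 := by rw [hf1, hy]; ring
  exact ⟨f, hf1, by linarith, by linarith⟩

/-- Any convex combination of two unit vectors whose sum has norm 2 is a unit vector. -/
lemma tingley_norm_combo {x y : E} (hx : ‖x‖ = 1) (hy : ‖y‖ = 1) (hxy : ‖x + y‖ = 2)
    {a b : ℝ} (ha : 0 ≤ a) (hb : 0 ≤ b) (hab : a + b = 1) :
    ‖a • x + b • y‖ = 1 := by
  obtain ⟨f, hf1, hfx, hfy⟩ := tingley_exists_pair_functional hx hy hxy
  have hup : ‖a • x + b • y‖ ≤ 1 := by
    calc ‖a • x + b • y‖ ≤ ‖a • x‖ + ‖b • y‖ := norm_add_le _ _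
    _ = |a| * ‖x‖ + |b| * ‖y‖ := by rw [norm_smul, norm_smul, Real.norm_eq_abs, Real.norm_eq_abs]
    _ = 1 := by rw [hx, hy, abs_of_nonneg ha, abs_of_nonneg hb]; linarith
  have hlo : (1 : ℝ) ≤ ‖a • x + b • y‖ := by
    have h1 : f (a • x + b • y) = 1 := by
      rw [map_add, map_smul, map_smul, smul_eq_mul, smul_eq_mul, hfx, hfy]
      linarith
    calc (1 : ℝ) = f (a • x + b • y) := h1.symm
    _ ≤ |f (a • x + b • y)| := le_abs_self _
    _ = ‖f (a • x + b • y)‖ := (Real.norm_eq_abs _).symm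
    _ ≤ ‖f‖ * ‖a • x + b • y‖ := f.le_opNorm _
    _ = ‖a • x + b • y‖ := by rw [hf1, one_mul]
  linarith

/-- Two members of a convex set of unit vectors have sum of norm 2. -/
lemma tingley_share_of_mem {K : Set E} (hK : Convex ℝ K) (hKS : ∀ z ∈ K, ‖z‖ = 1)
    {z z' : E} (hz : z ∈ K) (hz' : z' ∈ K) : ‖z + z'‖ = 2 := by
  have hmid : (1/2 : ℝ) • z + (1/2 : ℝ) • z' ∈ K :=
    hK hz hz' (by norm_num) (by norm_num) (by norm_num)
  have h1 : ‖(1/2 : ℝ) • z + (1/2 : ℝ) • z'‖ = 1 := hKS _ hmid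
  have h2 : z + z' = (2:ℝ) • ((1/2 : ℝ) • z + (1/2 : ℝ) • z') := by
    rw [smul_add, smul_smul, smul_smul]; norm_num
  rw [h2, norm_smul, h1, Real.norm_eq_abs]
  norm_num

/-- Absorption: a maximal convex subset of the unit sphere contains every unit vector sharing
a "flat segment" with all its members. -/
lemma tingley_absorb {M : Set E} (hconv : Convex ℝ M) (hunit : ∀ x ∈ M, ‖x‖ = 1)
    (hne : M.Nonempty)
    (hmax : ∀ K : Set E, Convex ℝ K → (∀ y ∈ K, ‖y‖ = 1) → M ⊆ K → K = M)
    {y : E} (hy : ‖y‖ = 1) (hsh : ∀ x ∈ M, ‖x + y‖ = 2) : y ∈ M := by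
  set K := convexJoin ℝ M {y} with hKdef
  have hKconv : Convex ℝ K := hconv.convexJoin (convex_singleton y)
  have hKunit : ∀ z ∈ K, ‖z‖ = 1 := by
    intro z hzK
    rw [hKdef, mem_convexJoin] at hzK
    obtain ⟨a, haM, b, hb, hzseg⟩ := hzK
    rw [mem_singleton_iff] at hb
    subst hb
    obtain ⟨u, v, hu, hv, huv, rfl⟩ := hzseg
    exact tingley_norm_combo (hunit a haM) hy (hsh a haM) hu hv huv
  have hMK : M ⊆ K := by
    intro x hxM
    rw [hKdef, mem_convexJoin]
    exact ⟨x, hxM, y, mem_singleton y, left_mem_segment ℝ x y⟩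
  have hKM : K = M := hmax K hKconv hKunit hMK
  obtain ⟨x₀, hx₀⟩ := hne
  have : y ∈ K := by
    rw [hKdef, mem_convexJoin]
    exact ⟨x₀, hx₀, y, mem_singleton y, right_mem_segment ℝ x₀ y⟩
  rwa [hKM] at this

/-- Zorn: any convex set of unit vectors is contained in a maximal one. -/
lemma tingley_exists_maximal_convex (K₀ : Set E) (h₀conv : Convex ℝ K₀)
    (h₀unit : ∀ y ∈ K₀, ‖y‖ = 1) :
    ∃ D : Set E, K₀ ⊆ D ∧ Convex ℝ D ∧ (∀ y ∈ D, ‖y‖ = 1) ∧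
      ∀ K : Set E, Convex ℝ K → (∀ y ∈ K, ‖y‖ = 1) → D ⊆ K → K = D := by
  set 𝒜 : Set (Set E) := {K | Convex ℝ K ∧ ∀ y ∈ K, ‖y‖ = 1} with h𝒜
  have hzorn := zorn_subset_nonempty 𝒜 ?_ K₀ ⟨h₀conv, h₀unit⟩
  · obtain ⟨m, hK₀m, hmem, hmax⟩ := hzorn
    refine ⟨m, hK₀m, hmem.1, hmem.2, ?_⟩
    intro K hKc hKu hmK
    exact subset_antisymm (hmax ⟨hKc, hKu⟩ hmK) hmK
  · intro c hc hchain hcne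
    refine ⟨⋃₀ c, ⟨?_, ?_⟩, fun s hs => subset_sUnion_of_mem hs⟩
    · -- convexity of a chain union
      intro p hp q hq a b ha hb hab
      obtain ⟨s, hs, hps⟩ := hp
      obtain ⟨t, ht, hqt⟩ := hq
      rcases hchain.total hs ht with hst | hts
      · exact subset_sUnion_of_mem ht ((hc ht).1 (hst hps) hqt ha hb hab)
      · exact subset_sUnion_of_mem hs ((hc hs).1 hps (hts hqt) ha hb hab)
    · rintro y ⟨s, hs, hys⟩
      exact (hc hs).2 y hys

end Aux

section TingleyPair

variable {X : Type*} [NormedAddCommGroup X] [NormedSpace ℝ X]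
variable {Y : Type*} [NormedAddCommGroup Y] [NormedSpace ℝ Y]

/-- The key lemma (Tanaka): a surjective isometry between unit spheres preserves the relation
`‖x + y‖ = 2`. -/
lemma tingley_pair (A : X → Y) (B : Y → X)
    (hmapA : ∀ x : X, ‖x‖ = 1 → ‖A x‖ = 1)
    (hmapB : ∀ y : Y, ‖y‖ = 1 → ‖B y‖ = 1)
    (hisoA : ∀ x y : X, ‖x‖ = 1 → ‖y‖ = 1 → ‖A x - A y‖ = ‖x - y‖)
    (hAB : ∀ y : Y, ‖y‖ = 1 → A (B y) = y)
    {x y : X} (hx : ‖x‖ = 1) (hy : ‖y‖ = 1) (hxy : ‖x + y‖ = 2) :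
    ‖A x + A y‖ = 2 := by
  have hAx := hmapA x hx
  have hAy := hmapA y hy
  have hup : ‖A x + A y‖ ≤ 2 := by
    calc ‖A x + A y‖ ≤ ‖A x‖ + ‖A y‖ := norm_add_le _ _
    _ = 2 := by rw [hAx, hAy]; norm_num
  -- the key step: for every `t ∈ (0,1)` the combination `z t` satisfies `‖A x + A (z t)‖ = 2`
  have key : ∀ t : ℝ, 0 < t → t < 1 → ‖A x + A ((1 - t) • x + t • y)‖ = 2 := by
    intro t ht ht1
    set z := (1 - t) • x + t • y with hzdef
    have hz : ‖z‖ = 1 := tingley_norm_combo hx hy hxy (by linarith) (by linarith) (by ring)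
    have hAz : ‖A z‖ = 1 := hmapA z hz
    have hnAz : ‖-A z‖ = 1 := by rw [norm_neg]; exact hAz
    set w := B (-A z) with hwdef
    have hw : ‖w‖ = 1 := hmapB _ hnAz
    have hAw : A w = -A z := hAB _ hnAz
    -- ‖z - w‖ = 2
    have hzw : ‖z - w‖ = 2 := by
      rw [← hisoA z w hz hw, hAw, sub_neg_eq_add]
      have : A z + A z = (2:ℝ) • A z := by rw [two_smul]
      rw [this, norm_smul, hAz, Real.norm_eq_abs]
      norm_num
    -- z - w is a convex combination of x - w and y - w
    have hcomb : z - w = (1 - t) • (x - w) + t • (y - w) := by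
      rw [hzdef]; module
    have hxw2 : ‖x - w‖ ≤ 2 := by
      calc ‖x - w‖ ≤ ‖x‖ + ‖w‖ := norm_sub_le _ _
      _ = 2 := by rw [hx, hw]; norm_num
    have hyw2 : ‖y - w‖ ≤ 2 := by
      calc ‖y - w‖ ≤ ‖y‖ + ‖w‖ := norm_sub_le _ _
      _ = 2 := by rw [hy, hw]; norm_num
    have hineq : 2 ≤ (1 - t) * ‖x - w‖ + t * ‖y - w‖ := by
      calc (2:ℝ) = ‖z - w‖ := hzw.symm
      _ = ‖(1 - t) • (x - w) + t • (y - w)‖ := by rw [hcomb]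
      _ ≤ ‖(1 - t) • (x - w)‖ + ‖t • (y - w)‖ := norm_add_le _ _
      _ = (1 - t) * ‖x - w‖ + t * ‖y - w‖ := by
          rw [norm_smul, norm_smul, Real.norm_eq_abs, Real.norm_eq_abs,
            abs_of_nonneg (by linarith : (0:ℝ) ≤ 1 - t), abs_of_nonneg (le_of_lt ht)]
    have hxw : ‖x - w‖ = 2 := by nlinarith
    -- transfer back through A
    have : ‖A x - A w‖ = 2 := by rw [hisoA x w hx hw]; exact hxw
    rw [hAw, sub_neg_eq_add] at this
    exact this
  -- now let `t → 1`
  rcases eq_or_ne x y with rfl | hne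
  · have : A x + A x = (2:ℝ) • A x := by rw [two_smul]
    rw [this, norm_smul, hAx, Real.norm_eq_abs]; norm_num
  · have hd : (0:ℝ) < ‖x - y‖ := by
      rw [norm_pos_iff, sub_ne_zero]; exact hne
    have hlow : ∀ ε : ℝ, 0 < ε → 2 - ε ≤ ‖A x + A y‖ := by
      intro ε hε
      set t : ℝ := max (1/2) (1 - ε / (2 * ‖x - y‖)) with htdef
      have ht : 0 < t := lt_of_lt_of_le (by norm_num) (le_max_left _ _)
      have ht1 : t < 1 := by
        apply max_lt (by norm_num)
        have : 0 < ε / (2 * ‖x - y‖) := by positivity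
        linarith
      have h1t : (1 - t) * ‖x - y‖ ≤ ε / 2 := by
        have h1 : 1 - ε / (2 * ‖x - y‖) ≤ t := le_max_right _ _
        have h2 : 1 - t ≤ ε / (2 * ‖x - y‖) := by linarith
        calc (1 - t) * ‖x - y‖ ≤ (ε / (2 * ‖x - y‖)) * ‖x - y‖ := by
              apply mul_le_mul_of_nonneg_right h2 (le_of_lt hd)
        _ = ε / 2 := by field_simp
      set z := (1 - t) • x + t • y with hzdef
      have hz : ‖z‖ = 1 := tingley_norm_combo hx hy hxy (by linarith) (by linarith) (by ring)
      have hkey := key t ht ht1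
      have hzy : ‖z - y‖ = (1 - t) * ‖x - y‖ := by
        have : z - y = (1 - t) • (x - y) := by
          rw [hzdef]; module
        rw [this, norm_smul, Real.norm_eq_abs, abs_of_nonneg (by linarith : (0:ℝ) ≤ 1 - t)]
      have hAzy : ‖A z - A y‖ = (1 - t) * ‖x - y‖ := by
        rw [hisoA z y hz hy]; exact hzy
      have : ‖A x + A y‖ ≥ ‖A x + A z‖ - ‖A z - A y‖ := by
        have h3 : A x + A z = (A x + A y) + (A z - A y) := by abel
        have := norm_add_le (A x + A y) (A z - A y)
        rw [← h3] at this
        linarith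
      rw [hkey, hAzy] at this
      linarith
    by_contra hcon
    have hlt : ‖A x + A y‖ < 2 := lt_of_le_of_ne hup hcon
    have := hlow ((2 - ‖A x + A y‖) / 2) (by linarith)
    linarith

end TingleyPair

section TingleyStar

variable {E : Type*} [NormedAddCommGroup E] [NormedSpace ℝ E]

/-- If a unit vector `z` spans a flat segment with a positive convex combination, then it does so
with each of the vectors involved. -/
lemma tingley_star_mono {ι : Type*} {t : Finset ι} {w : ι → ℝ} {ξ : ι → E}
    (hw : ∀ i ∈ t, 0 ≤ w i) (hsum : ∑ i ∈ t, w i = 1) (hξ : ∀ i ∈ t, ‖ξ i‖ = 1)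
    {z : E} (hz : ‖z‖ = 1) (hzp : ‖z + ∑ i ∈ t, w i • ξ i‖ = 2)
    {i : ι} (hi : i ∈ t) (hwi : 0 < w i) : ‖z + ξ i‖ = 2 := by
  set p := ∑ i ∈ t, w i • ξ i with hpdef
  have hpnorm : ‖p‖ ≤ 1 := by
    calc ‖p‖ ≤ ∑ j ∈ t, ‖w j • ξ j‖ := norm_sum_le _ _
    _ = ∑ j ∈ t, w j := by
        apply Finset.sum_congr rfl
        intro j hj
        rw [norm_smul, hξ j hj, Real.norm_eq_abs, abs_of_nonneg (hw j hj), mul_one]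
    _ = 1 := hsum
  have hpnorm' : ‖p‖ = 1 := by
    have h1 : (2:ℝ) ≤ 1 + ‖p‖ := by
      calc (2:ℝ) = ‖z + p‖ := hzp.symm
      _ ≤ ‖z‖ + ‖p‖ := norm_add_le _ _
      _ = 1 + ‖p‖ := by rw [hz]
    linarith
  obtain ⟨f, hf1, hfz, hfp⟩ := tingley_exists_pair_functional hz hpnorm' hzp
  have hb : ∀ j ∈ t, f (ξ j) ≤ 1 := by
    intro j hj
    calc f (ξ j) ≤ |f (ξ j)| := le_abs_self _
    _ = ‖f (ξ j)‖ := (Real.norm_eq_abs _).symm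
    _ ≤ ‖f‖ * ‖ξ j‖ := f.le_opNorm _
    _ = 1 := by rw [hf1, hξ j hj, one_mul]
  have hfsum : ∑ j ∈ t, w j * f (ξ j) = 1 := by
    have : f p = ∑ j ∈ t, w j * f (ξ j) := by
      rw [hpdef, map_sum]
      apply Finset.sum_congr rfl
      intro j _
      rw [map_smul, smul_eq_mul]
    rw [← this, hfp]
  have hzero : ∑ j ∈ t, w j * (1 - f (ξ j)) = 0 := by
    have : ∑ j ∈ t, w j * (1 - f (ξ j)) = (∑ j ∈ t, w j) - ∑ j ∈ t, w j * f (ξ j) := by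
      rw [← Finset.sum_sub_distrib]
      apply Finset.sum_congr rfl
      intro j _
      ring
    rw [this, hsum, hfsum]; ring
  have hterm : w i * (1 - f (ξ i)) = 0 := by
    have := (Finset.sum_eq_zero_iff_of_nonneg ?_).1 hzero i hi
    · exact this
    · intro j hj
      have := hb j hj
      have := hw j hj
      nlinarith
  have hfξ : f (ξ i) = 1 := by
    rcases mul_eq_zero.1 hterm with h | h
    · exact absurd h (ne_of_gt hwi)
    · linarith
  have hle : ‖z + ξ i‖ ≤ 2 := by
    calc ‖z + ξ i‖ ≤ ‖z‖ + ‖ξ i‖ := norm_add_le _ _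
    _ = 2 := by rw [hz, hξ i hi]; norm_num
  have hge : (2:ℝ) ≤ ‖z + ξ i‖ := by
    have h1 : f (z + ξ i) = 2 := by rw [map_add, hfz, hfξ]; norm_num
    calc (2:ℝ) = f (z + ξ i) := h1.symm
    _ ≤ |f (z + ξ i)| := le_abs_self _
    _ = ‖f (z + ξ i)‖ := (Real.norm_eq_abs _).symm
    _ ≤ ‖f‖ * ‖z + ξ i‖ := f.le_opNorm _
    _ = ‖z + ξ i‖ := by rw [hf1, one_mul]
  linarith

end TingleyStar

section TingleyMain

variable {X : Type*} [NormedAddCommGroup X] [NormedSpace ℝ X]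
variable {Y : Type*} [NormedAddCommGroup Y] [NormedSpace ℝ Y]

/-- Main step: the image of a maximal convex subset of the unit sphere under a surjective
isometry of spheres is a maximal convex subset of the unit sphere. -/
lemma tingley_main (A : X → Y) (B : Y → X)
    (hmapA : ∀ x : X, ‖x‖ = 1 → ‖A x‖ = 1)
    (hmapB : ∀ y : Y, ‖y‖ = 1 → ‖B y‖ = 1)
    (hisoA : ∀ x y : X, ‖x‖ = 1 → ‖y‖ = 1 → ‖A x - A y‖ = ‖x - y‖)
    (hisoB : ∀ x y : Y, ‖x‖ = 1 → ‖y‖ = 1 → ‖B x - B y‖ = ‖x - y‖)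
    (hAB : ∀ y : Y, ‖y‖ = 1 → A (B y) = y)
    (hBA : ∀ x : X, ‖x‖ = 1 → B (A x) = x)
    (M : Set X) (hM : ∀ x ∈ M, ‖x‖ = 1) (hne : M.Nonempty) (hconv : Convex ℝ M)
    (hmax : ∀ K : Set X, Convex ℝ K → (∀ y ∈ K, ‖y‖ = 1) → M ⊆ K → K = M) :
    (∀ y ∈ A '' M, ‖y‖ = 1) ∧ (A '' M).Nonempty ∧ Convex ℝ (A '' M) ∧
      ∀ K : Set Y, Convex ℝ K → (∀ y ∈ K, ‖y‖ = 1) → A '' M ⊆ K → K = A '' M := by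
  classical
  have himgunit : ∀ y ∈ A '' M, ‖y‖ = 1 := by
    rintro y ⟨x, hx, rfl⟩
    exact hmapA x (hM x hx)
  -- Step 1: every point of the convex hull of `A '' M` is a unit vector.
  have hull_unit : ∀ q ∈ convexHull ℝ (A '' M), ‖q‖ = 1 := by
    intro q hq
    rw [convexHull_eq] at hq
    obtain ⟨ι, t, w, z, hw0, hw1, hzmem, hq⟩ := hq
    set t' := t.filter (fun i => 0 < w i) with ht'def
    have ht't : t' ⊆ t := Finset.filter_subset _ _
    have hw' : ∀ i ∈ t', 0 < w i := by
      intro i hi; exact (Finset.mem_filter.1 hi).2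
    have hsum' : ∑ i ∈ t', w i = 1 := by
      rw [ht'def, Finset.sum_filter_of_ne]
      · exact hw1
      · intro i hi hwi
        exact lt_of_le_of_ne (hw0 i hi) (Ne.symm hwi)
    -- choose preimages in M
    have hzim : ∀ i ∈ t', ∃ x, x ∈ M ∧ A x = z i := by
      intro i hi
      obtain ⟨x, hx, hAx⟩ := hzmem i (ht't hi)
      exact ⟨x, hx, hAx⟩
    set ξ : ι → X := fun i => if h : ∃ x, x ∈ M ∧ A x = z i then h.choose else hne.choose
      with hξdef
    have hξM : ∀ i, ξ i ∈ M := by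
      intro i
      rw [hξdef]
      dsimp only
      split_ifs with h
      · exact h.choose_spec.1
      · exact hne.choose_spec
    have hAξ : ∀ i ∈ t', A (ξ i) = z i := by
      intro i hi
      have h := hzim i hi
      rw [hξdef]
      dsimp only
      rw [dif_pos h]
      exact h.choose_spec.2
    set p := ∑ i ∈ t', w i • ξ i with hpdef
    have hpM : p ∈ M := hconv.sum_mem (fun i hi => (hw' i hi).le) hsum' (fun i _ => hξM i)
    have hp1 : ‖p‖ = 1 := hM p hpM
    have hAp1 : ‖A p‖ = 1 := hmapA p hp1
    -- maximal convex set containing `A p`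
    obtain ⟨D, hseed, hDconv, hDunit, hDmax⟩ :=
      tingley_exists_maximal_convex {A p} (convex_singleton _)
        (by rintro y rfl; exact hAp1)
    have hApD : A p ∈ D := hseed rfl
    have hDne : D.Nonempty := ⟨A p, hApD⟩
    -- each `z i` (positive weight) lies in `D`
    have hzD : ∀ i ∈ t', z i ∈ D := by
      intro i hi
      have hzi1 : ‖z i‖ = 1 := by
        rw [← hAξ i hi]; exact hmapA _ (hM _ (hξM i))
      apply tingley_absorb hDconv hDunit hDne hDmax hzi1
      intro d hd
      have hd1 : ‖d‖ = 1 := hDunit d hd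
      have h1 : ‖d + A p‖ = 2 := tingley_share_of_mem hDconv hDunit hd hApD
      have h2 : ‖B d + p‖ = 2 := by
        have := tingley_pair B A hmapB hmapA hisoB hBA hd1 hAp1 h1
        rwa [hBA p hp1] at this
      have h3 : ‖B d + ξ i‖ = 2 := by
        have hBd1 : ‖B d‖ = 1 := hmapB d hd1
        exact tingley_star_mono (fun j hj => (hw' j hj).le) hsum'
          (fun j _ => hM _ (hξM j)) hBd1 (by rw [← hpdef]; exact h2) hi (hw' i hi)
      have h4 := tingley_pair A B hmapA hmapB hisoA hAB (hmapB d hd1) (hM _ (hξM i)) h3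
      rwa [hAB d hd1, hAξ i hi] at h4
    -- conclude `q ∈ D`
    have hq' : q = ∑ i ∈ t', w i • z i := by
      rw [← hq, Finset.centerMass_eq_of_sum_1 _ _ hw1, ht'def, Finset.sum_filter_of_ne]
      intro i hi hne'
      by_contra hcon
      push_neg at hcon
      have : w i = 0 := le_antisymm hcon (hw0 i hi)
      rw [this, zero_smul] at hne'
      exact hne' rfl
    have hqD : q ∈ D := by
      rw [hq']
      exact hDconv.sum_mem (fun i hi => (hw' i hi).le) hsum' (fun i hi => hzD i hi)
    exact hDunit q hqD
  -- Step 2: a maximal convex set containing the hull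
  obtain ⟨D, hsub, hDconv, hDunit, hDmax⟩ :=
    tingley_exists_maximal_convex (convexHull ℝ (A '' M)) (convex_convexHull ℝ _) hull_unit
  have hAMD : A '' M ⊆ D := (subset_convexHull ℝ _).trans hsub
  -- Step 3: the sandwich
  have hDAM : D ⊆ A '' M := by
    intro d hd
    have hd1 : ‖d‖ = 1 := hDunit d hd
    have hBd1 : ‖B d‖ = 1 := hmapB d hd1
    have hBdM : B d ∈ M := by
      apply tingley_absorb hconv hM hne hmax hBd1
      intro x hxM
      have h1 : ‖A x + d‖ = 2 :=
        tingley_share_of_mem hDconv hDunit (hAMD ⟨x, hxM, rfl⟩) hd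
      have h2 := tingley_pair B A hmapB hmapA hisoB hBA (hmapA x (hM x hxM)) hd1 h1
      rwa [hBA x (hM x hxM)] at h2
    exact ⟨B d, hBdM, hAB d hd1⟩
  have hEq : A '' M = D := subset_antisymm hAMD hDAM
  refine ⟨himgunit, hne.image A, ?_, ?_⟩
  · rw [hEq]; exact hDconv
  · intro K hKc hKu hKsub
    have h1 : D ⊆ K := by rw [← hEq]; exact hKsub
    have := hDmax K hKc hKu h1
    rw [this, hEq]

end TingleyMain

section Faces

variable {E : Type*} [NormedAddCommGroup E] [NormedSpace ℝ E]

/-- Separation: a nonempty convex subset of the unit sphere admits a supporting functional. -/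
lemma tingley_exists_functional {K : Set E} (hK : Convex ℝ K) (hKs : ∀ x ∈ K, ‖x‖ = 1)
    (hne : K.Nonempty) :
    ∃ f : E →L[ℝ] ℝ, ‖f‖ ≤ 1 ∧ ∀ x ∈ K, f x = 1 := by
  obtain ⟨f, u, h₁, h₂⟩ := geometric_hahn_banach_open (convex_ball (0:E) 1) Metric.isOpen_ball hK
    (by
      rw [Set.disjoint_left]
      intro a ha haK
      rw [mem_ball_zero_iff] at ha
      rw [hKs a haK] at ha
      exact lt_irrefl 1 ha)
  have hu : 0 < u := by
    have h0 : (0:E) ∈ Metric.ball (0:E) 1 := by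
      rw [mem_ball_zero_iff, norm_zero]; norm_num
    have := h₁ 0 h0
    rwa [map_zero] at this
  have hfu : ∀ x : E, ‖f x‖ ≤ u * ‖x‖ := by
    intro x
    by_contra hcon
    push_neg at hcon
    have hx0 : x ≠ 0 := by
      intro h
      rw [h, map_zero, norm_zero, norm_zero, mul_zero] at hcon
      exact lt_irrefl 0 hcon
    have hfx0 : ‖f x‖ ≠ 0 := by
      intro h
      rw [h] at hcon
      have : 0 ≤ u * ‖x‖ := by positivity
      linarith
    have hfxpos : 0 < ‖f x‖ := lt_of_le_of_ne (norm_nonneg _) (Ne.symm hfx0)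
    set a := (u / ‖f x‖) • x with hadef
    have hanorm : ‖a‖ < 1 := by
      rw [hadef, norm_smul, Real.norm_eq_abs, abs_of_pos (by positivity : 0 < u / ‖f x‖)]
      rw [div_mul_eq_mul_div, div_lt_one hfxpos]
      linarith
    have ha : a ∈ Metric.ball (0:E) 1 := by rwa [mem_ball_zero_iff]
    have hna : -a ∈ Metric.ball (0:E) 1 := by
      rw [mem_ball_zero_iff, norm_neg]; rwa [mem_ball_zero_iff] at ha
    have h3 := h₁ a ha
    have h4 := h₁ (-a) hna
    rw [map_neg] at h4
    have habs : ‖f a‖ < u := by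
      rw [Real.norm_eq_abs, abs_lt]; constructor <;> linarith
    have : ‖f a‖ = u := by
      have h5 : ‖f a‖ = (u / ‖f x‖) * ‖f x‖ := by
        rw [hadef, map_smul, smul_eq_mul, Real.norm_eq_abs, abs_mul,
          abs_of_pos (by positivity : 0 < u / ‖f x‖), Real.norm_eq_abs]
      rw [h5, div_mul_cancel₀ _ hfx0]
    linarith
  have hfnorm : ‖f‖ ≤ u := f.opNorm_le_bound (le_of_lt hu) hfu
  have hKval : ∀ x ∈ K, f x = u := by
    intro x hxK
    have hle : f x ≤ u := by
      calc f x ≤ |f x| := le_abs_self _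
      _ = ‖f x‖ := (Real.norm_eq_abs _).symm
      _ ≤ ‖f‖ * ‖x‖ := f.le_opNorm x
      _ = ‖f‖ := by rw [hKs x hxK, mul_one]
      _ ≤ u := hfnorm
    exact le_antisymm hle (h₂ x hxK)
  refine ⟨u⁻¹ • f, ?_, ?_⟩
  · apply ContinuousLinearMap.opNorm_le_bound _ zero_le_one
    intro x
    rw [ContinuousLinearMap.smul_apply, smul_eq_mul, one_mul, Real.norm_eq_abs, abs_mul,
      abs_of_pos (by positivity : (0:ℝ) < u⁻¹), ← Real.norm_eq_abs]
    calc u⁻¹ * ‖f x‖ ≤ u⁻¹ * (u * ‖x‖) := by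
          apply mul_le_mul_of_nonneg_left (hfu x) (by positivity)
    _ = ‖x‖ := by field_simp
  · intro x hxK
    rw [ContinuousLinearMap.smul_apply, smul_eq_mul, hKval x hxK]
    field_simp

/-- Every proper face of the closed unit ball consists of unit vectors. -/
lemma tingley_proper_face_unit {G : Set E}
    (hface : IsFace (Metric.closedBall (0:E) 1) G)
    (hne : G ≠ Metric.closedBall (0:E) 1) : ∀ x ∈ G, ‖x‖ = 1 := by
  intro x hx
  have hx1 : ‖x‖ ≤ 1 := by
    have := hface.2.1 hx
    rwa [mem_closedBall_zero_iff] at this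
  by_contra hcon
  have hlt : ‖x‖ < 1 := lt_of_le_of_ne hx1 hcon
  apply hne
  apply subset_antisymm hface.2.1
  intro y hy
  rw [mem_closedBall_zero_iff] at hy
  set α : ℝ := (1 - ‖x‖)/2 with hαdef
  have hα : 0 < α := by rw [hαdef]; linarith
  have hα1 : α < 1 := by
    have := norm_nonneg x
    rw [hαdef]; linarith
  have h1α : (0:ℝ) < 1 - α := by linarith
  set w := (1 - α)⁻¹ • (x - α • y) with hwdef
  have hwnorm : ‖w‖ ≤ 1 := by
    have hxy : ‖x - α • y‖ ≤ ‖x‖ + α := by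
      calc ‖x - α • y‖ ≤ ‖x‖ + ‖α • y‖ := norm_sub_le _ _
      _ = ‖x‖ + α * ‖y‖ := by rw [norm_smul, Real.norm_eq_abs, abs_of_pos hα]
      _ ≤ ‖x‖ + α := by nlinarith
    have hkey : ‖x‖ + α = 1 - α := by rw [hαdef]; ring
    rw [hwdef, norm_smul, Real.norm_eq_abs, abs_of_pos (by positivity : (0:ℝ) < (1-α)⁻¹)]
    rw [← hkey] at h1α ⊢
    rw [inv_mul_le_iff₀ (by linarith), mul_one]
    linarith
  have hyball : y ∈ Metric.closedBall (0:E) 1 := by rwa [mem_closedBall_zero_iff]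
  have hwball : w ∈ Metric.closedBall (0:E) 1 := by rwa [mem_closedBall_zero_iff]
  have hcombo : α • y + (1 - α) • w = x := by
    rw [hwdef, smul_inv_smul₀ (by linarith : (1:ℝ) - α ≠ 0)]
    abel
  have := hface.2.2.2 hyball hwball hα hα1 (by rw [hcombo]; exact hx)
  exact this.1

/-- From a maximal proper face to a maximal convex subset of the sphere. -/
lemma tingley_T1 {M : Set E}
    (h : IsMaximalProperFace (Metric.closedBall (0:E) 1) M) :
    (∀ x ∈ M, ‖x‖ = 1) ∧ M.Nonempty ∧ Convex ℝ M ∧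
      ∀ K : Set E, Convex ℝ K → (∀ y ∈ K, ‖y‖ = 1) → M ⊆ K → K = M := by
  have hunit : ∀ x ∈ M, ‖x‖ = 1 := tingley_proper_face_unit h.1 h.2.1
  refine ⟨hunit, h.1.1, h.1.2.2.1, ?_⟩
  intro K hKc hKu hMK
  have hKne : K.Nonempty := h.1.1.mono hMK
  obtain ⟨f, hf1, hfK⟩ := tingley_exists_functional hKc hKu hKne
  set G : Set E := {x ∈ Metric.closedBall (0:E) 1 | f x = 1} with hGdef
  have hfle : ∀ x ∈ Metric.closedBall (0:E) 1, f x ≤ 1 := by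
    intro x hxb
    rw [mem_closedBall_zero_iff] at hxb
    calc f x ≤ |f x| := le_abs_self _
    _ = ‖f x‖ := (Real.norm_eq_abs _).symm
    _ ≤ ‖f‖ * ‖x‖ := f.le_opNorm x
    _ ≤ 1 := by nlinarith [norm_nonneg (f : E →L[ℝ] ℝ), norm_nonneg x]
  have hKG : K ⊆ G := by
    intro x hxK
    refine ⟨?_, hfK x hxK⟩
    rw [mem_closedBall_zero_iff, hKu x hxK]
  have hGface : IsFace (Metric.closedBall (0:E) 1) G := by
    refine ⟨h.1.1.mono (hMK.trans hKG), fun x hx => hx.1, ?_, ?_⟩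
    · intro p hp q hq a b ha hb hab
      refine ⟨convex_closedBall 0 1 hp.1 hq.1 ha hb hab, ?_⟩
      rw [map_add, map_smul, map_smul, smul_eq_mul, smul_eq_mul, hp.2, hq.2]
      linarith
    · intro p hp q hq α hα hα1 hcombo
      have hfp := hfle p hp
      have hfq := hfle q hq
      have hsum : α * f p + (1 - α) * f q = 1 := by
        have := hcombo.2
        rwa [map_add, map_smul, map_smul, smul_eq_mul, smul_eq_mul] at this
      have hfp1 : f p = 1 := by nlinarith
      have hfq1 : f q = 1 := by nlinarith
      exact ⟨⟨hp, hfp1⟩, ⟨hq, hfq1⟩⟩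
  have hGne : G ≠ Metric.closedBall (0:E) 1 := by
    intro hcon
    have h0 : (0:E) ∈ Metric.closedBall (0:E) 1 := by
      rw [mem_closedBall_zero_iff, norm_zero]; norm_num
    rw [← hcon] at h0
    have := h0.2
    rw [map_zero] at this
    norm_num at this
  have hGM : G = M := h.2.2 G hGface hGne (hMK.trans hKG)
  exact subset_antisymm (hKG.trans (le_of_eq hGM)) hMK

/-- From a maximal convex subset of the sphere to a maximal proper face. -/
lemma tingley_T2 {M : Set E} (hunit : ∀ x ∈ M, ‖x‖ = 1) (hne : M.Nonempty)
    (hconv : Convex ℝ M)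
    (hmax : ∀ K : Set E, Convex ℝ K → (∀ y ∈ K, ‖y‖ = 1) → M ⊆ K → K = M) :
    IsMaximalProperFace (Metric.closedBall (0:E) 1) M := by
  obtain ⟨f, hf1, hfM⟩ := tingley_exists_functional hconv hunit hne
  set K : Set E := {x | f x = 1 ∧ ‖x‖ ≤ 1} with hKdef
  have hKu : ∀ x ∈ K, ‖x‖ = 1 := by
    intro x hxK
    refine le_antisymm hxK.2 ?_
    calc (1:ℝ) = f x := hxK.1.symm
    _ ≤ |f x| := le_abs_self _
    _ = ‖f x‖ := (Real.norm_eq_abs _).symm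
    _ ≤ ‖f‖ * ‖x‖ := f.le_opNorm x
    _ ≤ ‖x‖ := by nlinarith [norm_nonneg (f : E →L[ℝ] ℝ), norm_nonneg x]
  have hKc : Convex ℝ K := by
    intro p hp q hq a b ha hb hab
    constructor
    · rw [map_add, map_smul, map_smul, smul_eq_mul, smul_eq_mul, hp.1, hq.1]
      linarith
    · calc ‖a • p + b • q‖ ≤ ‖a • p‖ + ‖b • q‖ := norm_add_le _ _
      _ = a * ‖p‖ + b * ‖q‖ := by
          rw [norm_smul, norm_smul, Real.norm_eq_abs, Real.norm_eq_abs,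
            abs_of_nonneg ha, abs_of_nonneg hb]
      _ ≤ 1 := by nlinarith [hp.2, hq.2, norm_nonneg p, norm_nonneg q]
  have hMK : M ⊆ K := by
    intro x hxM
    exact ⟨hfM x hxM, le_of_eq (hunit x hxM)⟩
  have hKM : K = M := hmax K hKc hKu hMK
  have hball : M ⊆ Metric.closedBall (0:E) 1 := by
    intro x hxM
    rw [mem_closedBall_zero_iff, hunit x hxM]
  have hfle : ∀ x ∈ Metric.closedBall (0:E) 1, f x ≤ 1 := by
    intro x hxb
    rw [mem_closedBall_zero_iff] at hxb
    calc f x ≤ |f x| := le_abs_self _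
    _ = ‖f x‖ := (Real.norm_eq_abs _).symm
    _ ≤ ‖f‖ * ‖x‖ := f.le_opNorm x
    _ ≤ 1 := by nlinarith [norm_nonneg (f : E →L[ℝ] ℝ), norm_nonneg x]
  refine ⟨⟨hne, hball, hconv, ?_⟩, ?_, ?_⟩
  · intro p hp q hq α hα hα1 hcombo
    have hcomboK : α • p + (1 - α) • q ∈ K := by rw [hKM]; exact hcombo
    have hsum : α * f p + (1 - α) * f q = 1 := by
      have := hcomboK.1
      rwa [map_add, map_smul, map_smul, smul_eq_mul, smul_eq_mul] at this
    have hfp := hfle p hp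
    have hfq := hfle q hq
    have hfp1 : f p = 1 := by nlinarith
    have hfq1 : f q = 1 := by nlinarith
    rw [mem_closedBall_zero_iff] at hp hq
    constructor
    · rw [← hKM]; exact ⟨hfp1, hp⟩
    · rw [← hKM]; exact ⟨hfq1, hq⟩
  · intro hcon
    have h0 : (0:E) ∈ Metric.closedBall (0:E) 1 := by
      rw [mem_closedBall_zero_iff, norm_zero]; norm_num
    rw [← hcon] at h0
    have := hunit 0 h0
    rw [norm_zero] at this
    norm_num at this
  · intro G hGface hGne hMG
    exact hmax G hGface.2.2.1 (tingley_proper_face_unit hGface hGne) hMG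

end Faces

/-- (Cheng–Dong; Tanaka) A surjective isometry between the unit spheres of two Banach spaces
maps maximal proper faces of the closed unit ball onto maximal proper faces of the closed
unit ball. -/
theorem surjective_sphere_isometry_maximal_face_iff
    {X Y : Type*} [NormedAddCommGroup X] [NormedSpace ℝ X] [CompleteSpace X]
    [NormedAddCommGroup Y] [NormedSpace ℝ Y] [CompleteSpace Y]
    (Δ : X → Y)
    (hmap : ∀ x : X, ‖x‖ = 1 → ‖Δ x‖ = 1)
    (hsurj : ∀ y : Y, ‖y‖ = 1 → ∃ x : X, ‖x‖ = 1 ∧ Δ x = y)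
    (hiso : ∀ x y : X, ‖x‖ = 1 → ‖y‖ = 1 → ‖Δ x - Δ y‖ = ‖x - y‖)
    (M : Set X) (hM : ∀ x ∈ M, ‖x‖ = 1) (hMconv : Convex ℝ M) :
    IsMaximalProperFace (Metric.closedBall (0 : X) 1) M ↔
      IsMaximalProperFace (Metric.closedBall (0 : Y) 1) (Δ '' M) := by

  classical
  -- construct the inverse map on spheres
  set Θ : Y → X := fun y => if h : ∃ x : X, ‖x‖ = 1 ∧ Δ x = y then h.choose else 0 with hΘdef
  have hΘspec : ∀ y : Y, ‖y‖ = 1 → ‖Θ y‖ = 1 ∧ Δ (Θ y) = y := by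
    intro y hy
    have h : ∃ x : X, ‖x‖ = 1 ∧ Δ x = y := hsurj y hy
    rw [hΘdef]
    dsimp only
    rw [dif_pos h]
    exact h.choose_spec
  have hΘmap : ∀ y : Y, ‖y‖ = 1 → ‖Θ y‖ = 1 := fun y hy => (hΘspec y hy).1
  have hΔΘ : ∀ y : Y, ‖y‖ = 1 → Δ (Θ y) = y := fun y hy => (hΘspec y hy).2
  have hΘΔ : ∀ x : X, ‖x‖ = 1 → Θ (Δ x) = x := by
    intro x hx
    have h1 : ‖Δ x‖ = 1 := hmap x hx
    have h2 : Δ (Θ (Δ x)) = Δ x := hΔΘ _ h1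
    have h3 := hiso (Θ (Δ x)) x (hΘmap _ h1) hx
    rw [h2, sub_self, norm_zero] at h3
    have := (norm_eq_zero.1 h3.symm)
    rwa [sub_eq_zero] at this
  have hΘiso : ∀ y y' : Y, ‖y‖ = 1 → ‖y'‖ = 1 → ‖Θ y - Θ y'‖ = ‖y - y'‖ := by
    intro y y' hy hy'
    calc ‖Θ y - Θ y'‖ = ‖Δ (Θ y) - Δ (Θ y')‖ :=
          (hiso (Θ y) (Θ y') (hΘmap y hy) (hΘmap y' hy')).symm
    _ = ‖y - y'‖ := by rw [hΔΘ y hy, hΔΘ y' hy']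
  constructor
  · intro h
    obtain ⟨hu, hne, hc, hm⟩ := tingley_T1 h
    obtain ⟨hu', hne', hc', hm'⟩ :=
      tingley_main Δ Θ hmap hΘmap hiso hΘiso hΔΘ hΘΔ M hu hne hc hm
    exact tingley_T2 hu' hne' hc' hm'
  · intro h
    obtain ⟨hu, hne, hc, hm⟩ := tingley_T1 h
    obtain ⟨hu', hne', hc', hm'⟩ :=
      tingley_main Θ Δ hΘmap hmap hΘiso hiso hΘΔ hΔΘ (Δ '' M) hu hne hc hm
    have hid : Θ '' (Δ '' M) = M := by
      ext x
      constructor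
      · rintro ⟨y, ⟨x', hx', rfl⟩, rfl⟩
        rw [hΘΔ x' (hM x' hx')]
        exact hx'
      · intro hx
        exact ⟨Δ x, ⟨x, hx, rfl⟩, hΘΔ x (hM x hx)⟩
    rw [hid] at hu' hne' hc' hm'
    exact tingley_T2 hu' hne' hc' hm'
end

section
/- Let X and Y be real normed spaces and let Δ : S(X) → S(Y) be a surjective isometry between their unit spheres. Then for any x, y ∈ S(X), one has ‖x + y‖ = 2 if and only if ‖Δ(x) + Δ(y)‖ = 2. -/
open NormedSpace

/-- Key auxiliary lemma: a surjective isometry between unit spheres maps pairs with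
`‖x + y‖ = 2` to pairs with `‖Δ x + Δ y‖ = 2`. -/
lemma sphere_isometry_forward {X Y : Type*} [NormedAddCommGroup X] [NormedSpace ℝ X]
    [NormedAddCommGroup Y] [NormedSpace ℝ Y]
    (Δ : X → Y)
    (hmap : ∀ x : X, ‖x‖ = 1 → ‖Δ x‖ = 1)
    (hsurj : ∀ y : Y, ‖y‖ = 1 → ∃ x : X, ‖x‖ = 1 ∧ Δ x = y)
    (hiso : ∀ x y : X, ‖x‖ = 1 → ‖y‖ = 1 → ‖Δ x - Δ y‖ = ‖x - y‖)
    (x y : X) (hx : ‖x‖ = 1) (hy : ‖y‖ = 1) (hxy : ‖x + y‖ = 2) :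
    ‖Δ x + Δ y‖ = 2 := by
  obtain ⟨w₀, hw₀, hΔw₀⟩ := hsurj (-(Δ y)) (by rw [norm_neg]; exact hmap y hy)
  have key : ‖x - w₀‖ = ‖Δ x + Δ y‖ := by
    rw [← hiso x w₀ hx hw₀, hΔw₀, sub_neg_eq_add]
  have main : ∀ t : ℝ, 0 < t → t < 1 → 2 - t * ‖x - y‖ ≤ ‖x - w₀‖ := by
    intro t ht0 ht1
    set z : X := y + t • (x - y) with hzdef
    have hz1 : ‖z‖ ≤ 1 := by
      have hrep : z = t • x + (1 - t) • y := by
        rw [hzdef]; module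
      rw [hrep]
      calc ‖t • x + (1 - t) • y‖ ≤ ‖t • x‖ + ‖(1 - t) • y‖ := norm_add_le _ _
        _ = t * 1 + (1 - t) * 1 := by
            rw [norm_smul, norm_smul, hx, hy, Real.norm_eq_abs, Real.norm_eq_abs,
              abs_of_pos ht0, abs_of_pos (by linarith)]
        _ = 1 := by ring
    have hz2 : 1 ≤ ‖z‖ := by
      have hrep : x + y = z + ((1 - t) • x + t • y) := by rw [hzdef]; module
      have haux : ‖(1 - t) • x + t • y‖ ≤ 1 := by
        calc ‖(1 - t) • x + t • y‖ ≤ ‖(1 - t) • x‖ + ‖t • y‖ := norm_add_le _ _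
          _ = (1 - t) * 1 + t * 1 := by
              rw [norm_smul, norm_smul, hx, hy, Real.norm_eq_abs, Real.norm_eq_abs,
                abs_of_pos (by linarith), abs_of_pos ht0]
          _ = 1 := by ring
      have htri := norm_add_le z ((1 - t) • x + t • y)
      rw [← hrep, hxy] at htri
      linarith
    have hzu : ‖z‖ = 1 := le_antisymm hz1 hz2
    obtain ⟨w, hwu, hΔw⟩ := hsurj (-(Δ z)) (by rw [norm_neg]; exact hmap z hzu)
    have hzw : ‖z - w‖ = 2 := by
      rw [← hiso z w hzu hwu, hΔw, sub_neg_eq_add, ← two_smul ℝ (Δ z), norm_smul,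
        hmap z hzu]
      norm_num
    have hww₀ : ‖w₀ - w‖ = t * ‖x - y‖ := by
      have h1 : ‖w₀ - w‖ = ‖Δ w₀ - Δ w‖ := (hiso w₀ w hw₀ hwu).symm
      rw [hΔw₀, hΔw] at h1
      have h2 : -Δ y - -Δ z = Δ z - Δ y := by abel
      rw [h2, hiso z y hzu hy] at h1
      have h3 : z - y = t • (x - y) := by rw [hzdef]; abel
      rw [h1, h3, norm_smul, Real.norm_eq_abs, abs_of_pos ht0]
    have hzwne : z - w ≠ 0 := by
      intro h0
      rw [h0, norm_zero] at hzw
      norm_num at hzw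
    obtain ⟨h, hh, hhv⟩ := exists_dual_vector ℝ (z - w) (norm_ne_zero_iff.mpr hzwne)
    have hhv' : h z - h w = 2 := by
      have : h (z - w) = ‖z - w‖ := by exact_mod_cast hhv
      rw [map_sub] at this
      rw [this, hzw]
    have hb : ∀ u : X, ‖u‖ = 1 → h u ≤ 1 ∧ -1 ≤ h u := by
      intro u hu
      have hop := h.le_opNorm u
      rw [hh, hu, one_mul, Real.norm_eq_abs] at hop
      exact ⟨by linarith [le_abs_self (h u)], by linarith [neg_abs_le (h u)]⟩
    have hz_eq : h z = 1 := by
      have h1 := hb z hzu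
      have h2 := hb w hwu
      linarith
    have hw_eq : h w = -1 := by
      have h1 := hb z hzu
      linarith
    have hzlin : h z = h y + t * h (x - y) := by
      rw [hzdef, map_add, map_smul, smul_eq_mul]
    have hxy_nonneg : 0 ≤ h (x - y) := by
      have h1 := (hb y hy).1
      have h2 : 0 ≤ t * h (x - y) := by linarith [hzlin, hz_eq]
      nlinarith
    have hx_ge : 1 ≤ h x := by
      have h1 : h x = h y + h (x - y) := by rw [← map_add]; congr 1; abel
      have : h y = 1 - t * h (x - y) := by linarith [hzlin, hz_eq]
      nlinarith
    have hw₀_le : h w₀ ≤ -1 + t * ‖x - y‖ := by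
      have h1 : h (w₀ - w) ≤ ‖w₀ - w‖ := by
        have hop := h.le_opNorm (w₀ - w)
        rw [hh, one_mul, Real.norm_eq_abs] at hop
        linarith [le_abs_self (h (w₀ - w))]
      rw [map_sub, hww₀] at h1
      linarith
    have hfinal : h (x - w₀) ≤ ‖x - w₀‖ := by
      have hop := h.le_opNorm (x - w₀)
      rw [hh, one_mul, Real.norm_eq_abs] at hop
      linarith [le_abs_self (h (x - w₀))]
    rw [map_sub] at hfinal
    linarith
  have h2le : 2 ≤ ‖x - w₀‖ := by
    by_contra hc
    push_neg at hc
    set d := ‖x - y‖ with hd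
    have hd0 : 0 ≤ d := norm_nonneg _
    set ε := 2 - ‖x - w₀‖ with hε
    have hε0 : 0 < ε := by linarith
    have hε2 : ε ≤ 2 := by
      have := norm_nonneg (x - w₀)
      linarith
    set t := ε / (2 * (d + 2)) with ht
    have ht0 : 0 < t := by positivity
    have ht1 : t < 1 := by
      rw [ht, div_lt_one (by positivity)]
      nlinarith
    have hmt := main t ht0 ht1
    have htd : t * d < ε := by
      rw [ht, div_mul_eq_mul_div, div_lt_iff₀ (by positivity)]
      nlinarith
    linarith
  rw [key] at h2le
  have hle : ‖Δ x + Δ y‖ ≤ 2 := by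
    calc ‖Δ x + Δ y‖ ≤ ‖Δ x‖ + ‖Δ y‖ := norm_add_le _ _
      _ = 2 := by rw [hmap x hx, hmap y hy]; norm_num
  linarith

/-- (Fang–Wang, Ding) A surjective isometry between the unit spheres of two real normed
spaces preserves the relation `‖x + y‖ = 2`. -/
theorem surjective_sphere_isometry_norm_add_eq_two_iff
    {X Y : Type*} [NormedAddCommGroup X] [NormedSpace ℝ X]
    [NormedAddCommGroup Y] [NormedSpace ℝ Y]
    (Δ : X → Y)
    (hmap : ∀ x : X, ‖x‖ = 1 → ‖Δ x‖ = 1)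
    (hsurj : ∀ y : Y, ‖y‖ = 1 → ∃ x : X, ‖x‖ = 1 ∧ Δ x = y)
    (hiso : ∀ x y : X, ‖x‖ = 1 → ‖y‖ = 1 → ‖Δ x - Δ y‖ = ‖x - y‖) :
    ∀ x y : X, ‖x‖ = 1 → ‖y‖ = 1 → (‖x + y‖ = 2 ↔ ‖Δ x + Δ y‖ = 2) := by
  intro x y hx hy
  constructor
  · exact sphere_isometry_forward Δ hmap hsurj hiso x y hx hy
  · intro h2
    -- construct the inverse map and apply the forward lemma to it
    have hinj : ∀ a b : X, ‖a‖ = 1 → ‖b‖ = 1 → Δ a = Δ b → a = b := by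
      intro a b ha hb hab
      have := hiso a b ha hb
      rw [hab, sub_self, norm_zero] at this
      have := (norm_eq_zero.mp this.symm)
      exact sub_eq_zero.mp this
    choose g hg1 hg2 using hsurj
    classical
    set Δ' : Y → X := fun v => if hv : ‖v‖ = 1 then g v hv else 0 with hΔ'
    have hΔ'val : ∀ v : Y, (hv : ‖v‖ = 1) → Δ' v = g v hv := by
      intro v hv; simp [hΔ', hv]
    have hmap' : ∀ v : Y, ‖v‖ = 1 → ‖Δ' v‖ = 1 := by
      intro v hv; rw [hΔ'val v hv]; exact hg1 v hv
    have hΔΔ' : ∀ v : Y, (hv : ‖v‖ = 1) → Δ (Δ' v) = v := by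
      intro v hv; rw [hΔ'val v hv]; exact hg2 v hv
    have hΔ'Δ : ∀ a : X, ‖a‖ = 1 → Δ' (Δ a) = a := by
      intro a ha
      have h1 : ‖Δ a‖ = 1 := hmap a ha
      exact hinj _ _ (hmap' _ h1) ha (by rw [hΔΔ' (Δ a) h1])
    have hsurj' : ∀ a : X, ‖a‖ = 1 → ∃ v : Y, ‖v‖ = 1 ∧ Δ' v = a := by
      intro a ha
      exact ⟨Δ a, hmap a ha, hΔ'Δ a ha⟩
    have hiso' : ∀ u v : Y, ‖u‖ = 1 → ‖v‖ = 1 → ‖Δ' u - Δ' v‖ = ‖u - v‖ := by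
      intro u v hu hv
      have := hiso (Δ' u) (Δ' v) (hmap' u hu) (hmap' v hv)
      rw [hΔΔ' u hu, hΔΔ' v hv] at this
      exact this.symm
    have := sphere_isometry_forward Δ' hmap' hsurj' hiso' (Δ x) (Δ y)
      (hmap x hx) (hmap y hy) h2
    rwa [hΔ'Δ x hx, hΔ'Δ y hy] at this
end

section
/- Let Δ : S(X) → S(Y) be a surjective isometry between the unit spheres of two Banach spaces. If M is a maximal proper face of the closed unit ball B_X, then Δ(−M) = −Δ(M), where −M = {−x : x ∈ M}. -/
section Aux

variable {X : Type*} [NormedAddCommGroup X] [NormedSpace ℝ X]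

/-- Every point of a maximal proper face of the closed unit ball has norm one. -/
lemma IsMaximalProperFace.norm_eq_one {M : Set X}
    (hM : IsMaximalProperFace (Metric.closedBall (0 : X) 1) M) :
    ∀ m ∈ M, ‖m‖ = 1 := by
  intro m hm
  have hle : ‖m‖ ≤ 1 := by
    have := hM.1.2.1 hm
    rwa [Metric.mem_closedBall, dist_zero_right] at this
  by_contra hne
  have hlt : ‖m‖ < 1 := lt_of_le_of_ne hle hne
  apply hM.2.1
  refine Set.Subset.antisymm hM.1.2.1 ?_
  intro z hz
  have hz1 : ‖z‖ ≤ 1 := by rwa [Metric.mem_closedBall, dist_zero_right] at hz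
  have hm0 : (0:ℝ) ≤ ‖m‖ := norm_nonneg m
  set α : ℝ := (1 - ‖m‖) / 2 with hα
  have hα0 : 0 < α := by rw [hα]; linarith
  have hα1 : α < 1 := by rw [hα]; linarith
  have h1α : (0:ℝ) < 1 - α := by linarith
  set y : X := (1 - α)⁻¹ • (m - α • z) with hy
  have hyC : y ∈ Metric.closedBall (0 : X) 1 := by
    rw [Metric.mem_closedBall, dist_zero_right, hy]
    have h1 : ‖m - α • z‖ ≤ ‖m‖ + α * ‖z‖ := by
      calc ‖m - α • z‖ ≤ ‖m‖ + ‖α • z‖ := norm_sub_le _ _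
      _ = ‖m‖ + |α| * ‖z‖ := by rw [norm_smul, Real.norm_eq_abs]
      _ = ‖m‖ + α * ‖z‖ := by rw [abs_of_pos hα0]
    have h2 : ‖m‖ + α * ‖z‖ ≤ ‖m‖ + α := by nlinarith
    have h3 : ‖m‖ + α = 1 - α := by rw [hα]; ring
    calc ‖(1 - α)⁻¹ • (m - α • z)‖ = |(1 - α)⁻¹| * ‖m - α • z‖ := by
          rw [norm_smul, Real.norm_eq_abs]
    _ = (1 - α)⁻¹ * ‖m - α • z‖ := by rw [abs_of_pos (by positivity)]
    _ ≤ (1 - α)⁻¹ * (1 - α) := by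
          apply mul_le_mul_of_nonneg_left _ (by positivity)
          calc ‖m - α • z‖ ≤ ‖m‖ + α * ‖z‖ := h1
          _ ≤ ‖m‖ + α := h2
          _ = 1 - α := h3
    _ = 1 := by field_simp
  have hcombo : α • z + (1 - α) • y ∈ M := by
    have : α • z + (1 - α) • y = m := by
      rw [hy, smul_inv_smul₀ (ne_of_gt h1α)]
      abel
    rwa [this]
  exact (hM.1.2.2.2 hz hyC hα0 hα1 hcombo).1

set_option linter.unusedSectionVars false in
/-- The negation of the closed unit ball is itself. -/
lemma neg_unit_closedBall : -(Metric.closedBall (0 : X) 1) = Metric.closedBall (0 : X) 1 := by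
  ext z
  simp [Metric.mem_closedBall, dist_zero_right]

/-- The negation of a face of the closed unit ball is a face. -/
lemma IsFace.neg {F : Set X} (hF : IsFace (Metric.closedBall (0 : X) 1) F) :
    IsFace (Metric.closedBall (0 : X) 1) (-F) := by
  obtain ⟨⟨m, hm⟩, hsub, hconv, hface⟩ := hF
  refine ⟨⟨-m, by simpa using hm⟩, ?_, hconv.neg, ?_⟩
  · intro z hz
    have : -z ∈ F := hz
    have := hsub this
    rw [Metric.mem_closedBall, dist_zero_right] at this ⊢
    rwa [norm_neg] at this
  · intro x hx y hy α hα0 hα1 hcombo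
    have hx' : -x ∈ Metric.closedBall (0 : X) 1 := by
      rw [Metric.mem_closedBall, dist_zero_right, norm_neg]
      rwa [Metric.mem_closedBall, dist_zero_right] at hx
    have hy' : -y ∈ Metric.closedBall (0 : X) 1 := by
      rw [Metric.mem_closedBall, dist_zero_right, norm_neg]
      rwa [Metric.mem_closedBall, dist_zero_right] at hy
    have hcombo' : α • (-x) + (1 - α) • (-y) ∈ F := by
      have h1 : α • (-x) + (1 - α) • (-y) = -(α • x + (1 - α) • y) := by
        rw [smul_neg, smul_neg]; abel
      rw [h1]
      exact hcombo
    have := hface hx' hy' hα0 hα1 hcombo'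
    constructor
    · show -x ∈ F; exact this.1
    · show -y ∈ F; exact this.2

/-- The negation of a maximal proper face of the closed unit ball is a maximal proper face. -/
lemma IsMaximalProperFace.neg {M : Set X}
    (hM : IsMaximalProperFace (Metric.closedBall (0 : X) 1) M) :
    IsMaximalProperFace (Metric.closedBall (0 : X) 1) (-M) := by
  refine ⟨hM.1.neg, ?_, ?_⟩
  · intro h
    have h0 : (0 : X) ∈ -M := by
      rw [h, Metric.mem_closedBall, dist_zero_right, norm_zero]; norm_num
    have h0' : (0 : X) ∈ M := by simpa using h0
    have := hM.norm_eq_one 0 h0'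
    simp at this
  · intro G hG hGne hsubG
    have hsub' : M ⊆ -G := by
      intro m hm
      rw [Set.mem_neg]
      apply hsubG
      simpa using hm
    have hGneg : IsFace (Metric.closedBall (0 : X) 1) (-G) := hG.neg
    have hGnegne : -G ≠ Metric.closedBall (0 : X) 1 := by
      intro h
      apply hGne
      rw [← neg_neg G, h, neg_unit_closedBall]
    have := hM.2.2 (-G) hGneg hGnegne hsub'
    rw [← neg_neg G, this]

/-- The separation lemma: a norm-one point "opposite" the antipode of every point of a maximal
proper face `M` (i.e. `‖x + m‖ = 2` for all `m ∈ M`) belongs to `M`. -/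
lemma IsMaximalProperFace.mem_of_opposed {M : Set X}
    (hM : IsMaximalProperFace (Metric.closedBall (0 : X) 1) M)
    {x : X} (hx : ‖x‖ = 1) (hopp : ∀ m ∈ M, ‖x + m‖ = 2) : x ∈ M := by
  classical
  set C : Set X := convexJoin ℝ {x} M with hC
  have hCconv : Convex ℝ C := (convex_singleton x).convexJoin hM.1.2.2.1
  -- every point of C has norm at least 1
  have hCnorm : ∀ z ∈ C, 1 ≤ ‖z‖ := by
    intro z hz
    rw [hC, mem_convexJoin] at hz
    obtain ⟨p, hp, m, hm, hseg⟩ := hz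
    rw [Set.mem_singleton_iff] at hp
    rw [hp] at hseg
    obtain ⟨a, b, ha, hb, hab, rfl⟩ := hseg
    have hm1 : ‖m‖ = 1 := hM.norm_eq_one m hm
    have h2 : ‖x + m‖ = 2 := hopp m hm
    have hid : x + m = (a • x + b • m) + (b • x + a • m) := by
      have h1 : (a : ℝ) + b = 1 := hab
      calc x + m = (1:ℝ) • x + (1:ℝ) • m := by rw [one_smul, one_smul]
      _ = (a + b) • x + (a + b) • m := by rw [h1]
      _ = (a • x + b • m) + (b • x + a • m) := by
          rw [add_smul, add_smul]; abel
    have hle : ‖b • x + a • m‖ ≤ 1 := by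
      calc ‖b • x + a • m‖ ≤ ‖b • x‖ + ‖a • m‖ := norm_add_le _ _
      _ = |b| * ‖x‖ + |a| * ‖m‖ := by rw [norm_smul, norm_smul, Real.norm_eq_abs, Real.norm_eq_abs]
      _ = b * 1 + a * 1 := by rw [abs_of_nonneg ha, abs_of_nonneg hb, hx, hm1]
      _ = 1 := by linarith
    have : (2:ℝ) ≤ ‖a • x + b • m‖ + 1 := by
      calc (2:ℝ) = ‖x + m‖ := h2.symm
      _ = ‖(a • x + b • m) + (b • x + a • m)‖ := by rw [← hid]
      _ ≤ ‖a • x + b • m‖ + ‖b • x + a • m‖ := norm_add_le _ _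
      _ ≤ ‖a • x + b • m‖ + 1 := by linarith
    linarith
  -- C is disjoint from the open unit ball
  have hdisj : Disjoint (Metric.ball (0 : X) 1) C := by
    rw [Set.disjoint_left]
    intro z hz hzC
    rw [Metric.mem_ball, dist_zero_right] at hz
    exact absurd (hCnorm z hzC) (by linarith)
  obtain ⟨f, u, hball, hCge⟩ :=
    geometric_hahn_banach_open (convex_ball (0:X) 1) Metric.isOpen_ball hCconv hdisj
  -- u is positive
  have hu0 : 0 < u := by
    have := hball 0 (by simp [Metric.mem_ball])
    simpa using this
  -- f is at most u on the closed unit ball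
  have hfle : ∀ z : X, ‖z‖ ≤ 1 → f z ≤ u := by
    intro z hz
    by_contra hgt
    push_neg at hgt
    have hfz0 : 0 < f z := lt_trans hu0 hgt
    set r : ℝ := (u + f z) / (2 * f z) with hr
    have hr0 : 0 < r := by positivity
    have hr1 : r < 1 := by
      rw [hr, div_lt_one (by positivity)]
      linarith
    have hmem : r • z ∈ Metric.ball (0:X) 1 := by
      rw [Metric.mem_ball, dist_zero_right, norm_smul, Real.norm_eq_abs, abs_of_pos hr0]
      calc r * ‖z‖ ≤ r * 1 := by nlinarith
      _ < 1 := by linarith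
    have := hball _ hmem
    rw [map_smul, smul_eq_mul] at this
    have hrfz : r * f z = (u + f z) / 2 := by
      rw [hr]; field_simp
    rw [hrfz] at this
    linarith
  -- the hyperplane section is a face containing M and x
  set G : Set X := {z : X | z ∈ Metric.closedBall (0 : X) 1 ∧ f z = u} with hG
  have hxC : x ∈ C := by
    obtain ⟨m, hm⟩ := hM.1.1
    rw [hC, mem_convexJoin]
    exact ⟨x, rfl, m, hm, left_mem_segment ℝ x m⟩
  have hMC : ∀ m ∈ M, m ∈ C := by
    intro m hm
    rw [hC, mem_convexJoin]
    exact ⟨x, rfl, m, hm, right_mem_segment ℝ x m⟩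
  have hmemG : ∀ z ∈ C, ‖z‖ ≤ 1 → z ∈ G := by
    intro z hz hz1
    refine ⟨by rwa [Metric.mem_closedBall, dist_zero_right], ?_⟩
    exact le_antisymm (hfle z hz1) (hCge z hz)
  have hxG : x ∈ G := hmemG x hxC (le_of_eq hx)
  have hMG : M ⊆ G := by
    intro m hm
    exact hmemG m (hMC m hm) (le_of_eq (hM.norm_eq_one m hm))
  have hGface : IsFace (Metric.closedBall (0 : X) 1) G := by
    refine ⟨⟨x, hxG⟩, fun z hz => hz.1, ?_, ?_⟩
    · intro z₁ h₁ z₂ h₂ a b ha hb hab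
      refine ⟨(convex_closedBall (0:X) 1) h₁.1 h₂.1 ha hb hab, ?_⟩
      rw [map_add, map_smul, map_smul, smul_eq_mul, smul_eq_mul, h₁.2, h₂.2]
      rw [← add_mul, hab, one_mul]
    · intro p hp q hq α hα0 hα1 hcombo
      have hfp : f p ≤ u := hfle p (by rwa [Metric.mem_closedBall, dist_zero_right] at hp)
      have hfq : f q ≤ u := hfle q (by rwa [Metric.mem_closedBall, dist_zero_right] at hq)
      have heq : α * f p + (1 - α) * f q = u := by
        have := hcombo.2
        rwa [map_add, map_smul, map_smul, smul_eq_mul, smul_eq_mul] at this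
      have hfp' : f p = u := by nlinarith
      have hfq' : f q = u := by nlinarith
      exact ⟨⟨hp, hfp'⟩, ⟨hq, hfq'⟩⟩
  have hGne : G ≠ Metric.closedBall (0 : X) 1 := by
    intro h
    have h0 : (0:X) ∈ G := by
      rw [h, Metric.mem_closedBall, dist_zero_right, norm_zero]; norm_num
    have := h0.2
    rw [map_zero] at this
    linarith
  have := hM.2.2 G hGface hGne hMG
  rw [← this]
  exact hxG

end Aux

/-- (Mori; after Tingley) A surjective isometry between the unit spheres of two Banach spaces
maps the antipode of a maximal proper face of the closed unit ball onto the antipode of its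
image: `Δ(−M) = −Δ(M)`. -/
theorem surjective_sphere_isometry_image_neg_maximal_face
    {X Y : Type*} [NormedAddCommGroup X] [NormedSpace ℝ X] [CompleteSpace X]
    [NormedAddCommGroup Y] [NormedSpace ℝ Y] [CompleteSpace Y]
    (Δ : X → Y)
    (hmap : ∀ x : X, ‖x‖ = 1 → ‖Δ x‖ = 1)
    (hsurj : ∀ y : Y, ‖y‖ = 1 → ∃ x : X, ‖x‖ = 1 ∧ Δ x = y)
    (hiso : ∀ x y : X, ‖x‖ = 1 → ‖y‖ = 1 → ‖Δ x - Δ y‖ = ‖x - y‖)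
    (M : Set X) (hM : IsMaximalProperFace (Metric.closedBall (0 : X) 1) M) :
    Δ '' (-M) = -(Δ '' M) := by
  -- Key step: for every maximal proper face `F` and `m₀ ∈ F`, the preimage of `-Δ(-m₀)`
  -- belongs to `F`.
  have key : ∀ F : Set X, IsMaximalProperFace (Metric.closedBall (0 : X) 1) F →
      ∀ m₀ ∈ F, ∃ x' : X, x' ∈ F ∧ Δ x' = -Δ (-m₀) := by
    intro F hF m₀ hm₀
    have hm₀1 : ‖m₀‖ = 1 := hF.norm_eq_one m₀ hm₀
    have hnm₀1 : ‖(-m₀ : X)‖ = 1 := by rwa [norm_neg]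
    have hΔnm₀ : ‖-Δ (-m₀)‖ = 1 := by rw [norm_neg]; exact hmap _ hnm₀1
    obtain ⟨x', hx'1, hx'2⟩ := hsurj _ hΔnm₀
    refine ⟨x', ?_, hx'2⟩
    apply hF.mem_of_opposed hx'1
    intro m' hm'
    have hm'1 : ‖m'‖ = 1 := hF.norm_eq_one m' hm'
    have hub : ‖x' + m'‖ ≤ 2 := by
      calc ‖x' + m'‖ ≤ ‖x'‖ + ‖m'‖ := norm_add_le _ _
      _ = 2 := by rw [hx'1, hm'1]; norm_num
    have hlb : ∀ t : ℝ, 0 < t → t < 1 → 2 - 2 * t ≤ ‖x' + m'‖ := by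
      intro t ht0 ht1
      set c : X := (1 - t) • m₀ + t • m' with hc
      have hcF : c ∈ F := hF.1.2.2.1 hm₀ hm' (by linarith) ht0.le (by ring)
      have hc1 : ‖c‖ = 1 := hF.norm_eq_one c hcF
      have hnc1 : ‖(-c : X)‖ = 1 := by rwa [norm_neg]
      have hΔnc : ‖-Δ (-c)‖ = 1 := by rw [norm_neg]; exact hmap _ hnc1
      obtain ⟨z, hz1, hz2⟩ := hsurj _ hΔnc
      -- ‖z + c‖ = 2
      have hzc : ‖z + c‖ = 2 := by
        have h1 : ‖z + c‖ = ‖Δ z - Δ (-c)‖ := by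
          rw [hiso z (-c) hz1 hnc1, sub_neg_eq_add]
        rw [h1, hz2]
        have h2 : -Δ (-c) - Δ (-c) = -((2:ℝ) • Δ (-c)) := by
          rw [two_smul]; abel
        rw [h2, norm_neg, norm_smul, Real.norm_eq_abs, hmap _ hnc1]
        norm_num
      -- ‖z + m'‖ ≥ 2
      have hzm₀ : ‖z + m₀‖ ≤ 2 := by
        calc ‖z + m₀‖ ≤ ‖z‖ + ‖m₀‖ := norm_add_le _ _
        _ = 2 := by rw [hz1, hm₀1]; norm_num
      have hzm' : 2 ≤ ‖z + m'‖ := by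
        have hid : z + c = (1 - t) • (z + m₀) + t • (z + m') := by
          rw [hc, smul_add, smul_add]
          have : (1 - t) • z + t • z = z := by
            rw [← add_smul]
            norm_num
          calc z + ((1 - t) • m₀ + t • m')
              = ((1 - t) • z + t • z) + ((1 - t) • m₀ + t • m') := by rw [this]
          _ = (1 - t) • z + (1 - t) • m₀ + (t • z + t • m') := by abel
        have h3 : (2:ℝ) ≤ (1 - t) * ‖z + m₀‖ + t * ‖z + m'‖ := by
          calc (2:ℝ) = ‖z + c‖ := hzc.symm
          _ = ‖(1 - t) • (z + m₀) + t • (z + m')‖ := by rw [hid]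
          _ ≤ ‖(1 - t) • (z + m₀)‖ + ‖t • (z + m')‖ := norm_add_le _ _
          _ = (1 - t) * ‖z + m₀‖ + t * ‖z + m'‖ := by
              rw [norm_smul, norm_smul, Real.norm_eq_abs, Real.norm_eq_abs,
                abs_of_pos (by linarith : (0:ℝ) < 1 - t), abs_of_pos ht0]
        nlinarith
      -- ‖x' - z‖ ≤ 2t
      have hxz : ‖x' - z‖ ≤ 2 * t := by
        have h1 : ‖x' - z‖ = ‖Δ x' - Δ z‖ := (hiso x' z hx'1 hz1).symm
        rw [h1, hx'2, hz2, neg_sub_neg, hiso _ _ hnc1 hnm₀1]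
        have h2 : (-c : X) - -m₀ = m₀ - c := by abel
        rw [h2, hc]
        have h3 : m₀ - ((1 - t) • m₀ + t • m') = t • (m₀ - m') := by
          rw [smul_sub]
          have : m₀ = (1 - t) • m₀ + t • m₀ := by
            rw [← add_smul]; norm_num
          calc m₀ - ((1 - t) • m₀ + t • m')
              = ((1 - t) • m₀ + t • m₀) - ((1 - t) • m₀ + t • m') := by rw [← this]
          _ = t • m₀ - t • m' := by abel
        rw [h3, norm_smul, Real.norm_eq_abs, abs_of_pos ht0]
        have h4 : ‖m₀ - m'‖ ≤ 2 := by
          calc ‖m₀ - m'‖ ≤ ‖m₀‖ + ‖m'‖ := norm_sub_le _ _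
          _ = 2 := by rw [hm₀1, hm'1]; norm_num
        nlinarith
      -- combine
      have h5 : ‖z + m'‖ ≤ ‖x' + m'‖ + ‖z - x'‖ := by
        have hid2 : z + m' = (x' + m') + (z - x') := by abel
        calc ‖z + m'‖ = ‖(x' + m') + (z - x')‖ := by rw [← hid2]
        _ ≤ ‖x' + m'‖ + ‖z - x'‖ := norm_add_le _ _
      have h6 : ‖z - x'‖ = ‖x' - z‖ := norm_sub_rev _ _
      linarith
    -- take the limit t → 0
    have h2le : 2 ≤ ‖x' + m'‖ := by
      by_contra hlt
      push_neg at hlt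
      have hN0 : (0:ℝ) ≤ ‖x' + m'‖ := norm_nonneg _
      set t : ℝ := (2 - ‖x' + m'‖) / 4 with ht
      have ht0 : 0 < t := by rw [ht]; linarith
      have ht1 : t < 1 := by rw [ht]; linarith
      have := hlb t ht0 ht1
      rw [ht] at this
      linarith
    linarith
  -- Assemble the two inclusions.
  ext y
  constructor
  · rintro ⟨x, hx, rfl⟩
    -- x ∈ -M, show Δ x ∈ -(Δ '' M)
    rw [Set.mem_neg]
    have hxM : -x ∈ M := by rwa [Set.mem_neg] at hx
    obtain ⟨x', hx'M, hx'Δ⟩ := key M hM (-x) hxM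
    rw [neg_neg] at hx'Δ
    exact ⟨x', hx'M, hx'Δ.symm ▸ rfl⟩
  · intro hy
    rw [Set.mem_neg] at hy
    obtain ⟨m, hm, hΔm⟩ := hy
    obtain ⟨x', hx'M, hx'Δ⟩ := key (-M) hM.neg (-m) (by rwa [Set.mem_neg, neg_neg])
    rw [neg_neg] at hx'Δ
    refine ⟨x', hx'M, ?_⟩
    rw [hx'Δ, hΔm, neg_neg]
end

section
/- Let Γ₁ and Γ₂ be index sets and let Δ : S(ℓ¹_ℝ(Γ₁)) → S(ℓ¹_ℝ(Γ₂)) be a surjective isometry between the unit spheres. Then there exist a bijection σ : Γ₂ → Γ₁ and signs θ_j ∈ {−1, 1} for j ∈ Γ₂ such that for every x ∈ S(ℓ¹_ℝ(Γ₁)) and every j ∈ Γ₂, (Δ(x))(j) = θ_j · x(σ(j)). In particular, Δ extends to a surjective real-linear isometry from ℓ¹_ℝ(Γ₁) onto ℓ¹_ℝ(Γ₂). -/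
open scoped ENNReal

namespace T1
variable {Γ : Type*}

theorem norm1 (f : lp (fun _ : Γ => ℝ) 1) : ‖f‖ = ∑' i, |(f : ∀ _ : Γ, ℝ) i| := by
  have := lp.norm_eq_tsum_rpow (p := 1) (by norm_num) f
  simpa using this

theorem summable (f : lp (fun _ : Γ => ℝ) 1) : Summable fun i => |(f : ∀ _ : Γ, ℝ) i| := by
  have h := lp.memℓp f
  rw [memℓp_gen_iff (by norm_num : (0:ℝ) < (1:ℝ≥0∞).toReal)] at h
  simpa using h

theorem memℓp_one {f : Γ → ℝ} (h : Summable fun i => |f i|) : Memℓp f 1 := by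
  rw [memℓp_gen_iff (by norm_num : (0:ℝ) < (1:ℝ≥0∞).toReal)]
  simpa using h

theorem key (a b : ℝ) : a * b ≤ 0 ↔ |a - b| = |a| + |b| := by
  rcases abs_cases a with ⟨h1,h2⟩|⟨h1,h2⟩ <;> rcases abs_cases b with ⟨h3,h4⟩|⟨h3,h4⟩ <;>
    rcases abs_cases (a-b) with ⟨h5,h6⟩|⟨h5,h6⟩ <;> constructor <;> intro hh <;> nlinarith

theorem diff (t c : ℝ) (ht : |t| ≤ 1) (hc : c = 1 ∨ c = -1) : (|t + c| - |t - c|)/2 = c * t := by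
  have ht' := abs_le.mp ht
  cases hc with
  | inl h =>
    subst h
    rcases abs_cases (t+1) with ⟨e1,f1⟩|⟨e1,f1⟩ <;> rcases abs_cases (t-1) with ⟨e2,f2⟩|⟨e2,f2⟩ <;>
      linarith
  | inr h =>
    subst h
    rcases abs_cases (t+(-1)) with ⟨e1,f1⟩|⟨e1,f1⟩ <;>
      rcases abs_cases (t-(-1)) with ⟨e2,f2⟩|⟨e2,f2⟩ <;> linarith

variable [DecidableEq Γ]

theorem norm_sub_single (x : lp (fun _ : Γ => ℝ) 1) (i : Γ) (c : ℝ) :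
    ‖x - lp.single 1 i c‖ = ‖x‖ + (|(x : ∀ _ : Γ, ℝ) i - c| - |(x : ∀ _ : Γ, ℝ) i|) := by
  rw [T1.norm1, T1.norm1]
  have hcoe : ∀ j, |((x - lp.single 1 i c : lp (fun _ : Γ => ℝ) 1) : ∀ _ : Γ, ℝ) j|
      = |(x : ∀ _ : Γ, ℝ) j| + (if j = i then |(x : ∀ _ : Γ, ℝ) i - c| - |(x : ∀ _ : Γ, ℝ) i| else 0) := by
    intro j
    have : ((x - lp.single 1 i c : lp (fun _ : Γ => ℝ) 1) : ∀ _ : Γ, ℝ) j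
        = (x : ∀ _ : Γ, ℝ) j - (if j = i then c else 0) := by
      rw [lp.coeFn_sub, Pi.sub_apply]
      congr 1
      rw [lp.single_apply]
      split <;> simp_all
    rw [this]
    split
    · subst ‹j = i›; ring
    · simp
  rw [tsum_congr hcoe, Summable.tsum_add (T1.summable x) ⟨_, hasSum_ite_eq i _⟩,
    (hasSum_ite_eq i _).tsum_eq]

theorem norm_single' (i : Γ) (c : ℝ) : ‖(lp.single 1 i c : lp (fun _ : Γ => ℝ) 1)‖ = |c| := by
  have h := norm_sub_single (lp.single 1 i c) i c
  rw [sub_self, norm_zero, lp.single_apply_self] at h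
  simp only [sub_self, abs_zero, zero_sub] at h
  linarith

theorem single_eq_single {a b : Γ} {c d : ℝ} (hc : c ≠ 0)
    (h : (lp.single 1 a c : lp (fun _ : Γ => ℝ) 1) = lp.single 1 b d) : a = b ∧ c = d := by
  by_cases hab : a = b
  · subst hab
    refine ⟨rfl, ?_⟩
    have := congrFun (congrArg (fun (f : lp (fun _ : Γ => ℝ) 1) => (f : ∀ _ : Γ, ℝ)) h) a
    simpa [lp.single_apply] using this
  · exfalso
    have := congrFun (congrArg (fun (f : lp (fun _ : Γ => ℝ) 1) => (f : ∀ _ : Γ, ℝ)) h) a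
    simp [lp.single_apply, hab] at this
    exact hc this

omit [DecidableEq Γ] in
theorem dist_two (x y : lp (fun _ : Γ => ℝ) 1) (hx : ‖x‖ = 1) (hy : ‖y‖ = 1) :
    ‖x - y‖ = 2 ↔ ∀ j, (x : ∀ _ : Γ, ℝ) j * (y : ∀ _ : Γ, ℝ) j ≤ 0 := by
  have hcoe : ∀ j, ((x - y : lp (fun _ : Γ => ℝ) 1) : ∀ _ : Γ, ℝ) j
      = (x : ∀ _ : Γ, ℝ) j - (y : ∀ _ : Γ, ℝ) j := fun j => by
    rw [lp.coeFn_sub]; rfl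
  have hnorm : ‖x - y‖ = ∑' j, |(x : ∀ _ : Γ, ℝ) j - (y : ∀ _ : Γ, ℝ) j| := by
    rw [T1.norm1]; exact tsum_congr fun j => by rw [hcoe]
  have hs : Summable fun j => |(x : ∀ _ : Γ, ℝ) j - (y : ∀ _ : Γ, ℝ) j| := by
    have := T1.summable (x - y)
    exact this.congr fun j => by rw [hcoe]
  have hs2 : Summable fun j => |(x : ∀ _ : Γ, ℝ) j| + |(y : ∀ _ : Γ, ℝ) j| :=
    (T1.summable x).add (T1.summable y)
  have hsum2 : ∑' j, (|(x : ∀ _ : Γ, ℝ) j| + |(y : ∀ _ : Γ, ℝ) j|) = 2 := by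
    rw [Summable.tsum_add (T1.summable x) (T1.summable y), ← T1.norm1, ← T1.norm1, hx, hy]; norm_num
  have hle : ∀ j, |(x : ∀ _ : Γ, ℝ) j - (y : ∀ _ : Γ, ℝ) j|
      ≤ |(x : ∀ _ : Γ, ℝ) j| + |(y : ∀ _ : Γ, ℝ) j| := fun j => abs_sub _ _
  constructor
  · intro h j
    by_contra hj
    push_neg at hj
    have hne : |(x : ∀ _ : Γ, ℝ) j - (y : ∀ _ : Γ, ℝ) j|
        < |(x : ∀ _ : Γ, ℝ) j| + |(y : ∀ _ : Γ, ℝ) j| := by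
      refine lt_of_le_of_ne (hle j) fun hc => ?_
      exact absurd ((key _ _).mpr hc) (not_le.mpr hj)
    have := Summable.tsum_lt_tsum hle hne hs hs2
    rw [hsum2, ← hnorm, h] at this
    exact lt_irrefl _ this
  · intro h
    rw [hnorm, tsum_congr fun j => (key _ _).mp (h j), hsum2]

end T1

namespace T1
variable {Γ : Type*} [DecidableEq Γ]

theorem no_mid (z : lp (fun _ : Γ => ℝ) 1) (i : Γ) (hz : ‖z‖ = 1)
    (h1 : ‖z - lp.single 1 i 1‖ = 1) (h2 : ‖z - lp.single 1 i (-1)‖ = 1) : False := by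
  rw [norm_sub_single, hz] at h1 h2
  set t := (z : ∀ _ : Γ, ℝ) i with ht
  rw [sub_neg_eq_add] at h2
  rcases abs_cases t with ⟨e0,f0⟩|⟨e0,f0⟩ <;> rcases abs_cases (t-1) with ⟨e1,f1⟩|⟨e1,f1⟩ <;>
    rcases abs_cases (t+1) with ⟨e2,f2⟩|⟨e2,f2⟩ <;> linarith

theorem mid {j l : Γ} (hjl : j ≠ l) {θ η : ℝ} (hθ : θ = 1 ∨ θ = -1) (hη : η = 1 ∨ η = -1) :
    ∃ w : lp (fun _ : Γ => ℝ) 1, ‖w‖ = 1 ∧ ‖w - lp.single 1 j θ‖ = 1 ∧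
      ‖w - lp.single 1 l η‖ = 1 := by
  have habθ : |θ/2| = 1/2 := by rcases hθ with rfl|rfl <;> norm_num
  have habη : |η/2| = 1/2 := by rcases hη with rfl|rfl <;> norm_num
  have habθ2 : |θ/2 - θ| = 1/2 := by rcases hθ with rfl|rfl <;> norm_num
  have habη2 : |η/2 - η| = 1/2 := by rcases hη with rfl|rfl <;> norm_num
  set w : lp (fun _ : Γ => ℝ) 1 := lp.single 1 j (θ/2) + lp.single 1 l (η/2) with hw
  have hwj : (w : ∀ _ : Γ, ℝ) j = θ/2 := by
    rw [hw, lp.coeFn_add, Pi.add_apply]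
    rw [lp.single_apply, lp.single_apply]
    simp [hjl]
  have hwl : (w : ∀ _ : Γ, ℝ) l = η/2 := by
    rw [hw, lp.coeFn_add, Pi.add_apply]
    rw [lp.single_apply, lp.single_apply]
    simp [Ne.symm hjl]
  have hwnorm : ‖w‖ = 1 := by
    have hrw : w = lp.single 1 j (θ/2) - lp.single 1 l (-(η/2)) := by
      rw [hw, lp.single_neg, sub_neg_eq_add]
    rw [hrw, norm_sub_single, norm_single']
    simp only [lp.single_apply]
    rw [Pi.single_eq_of_ne (Ne.symm hjl)]
    simp only [zero_sub, abs_neg, abs_zero, abs_neg, sub_zero, neg_neg]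
    rw [habθ, habη]
    norm_num
  refine ⟨w, hwnorm, ?_, ?_⟩
  · rw [norm_sub_single, hwnorm, hwj, habθ2, habθ]; norm_num
  · rw [norm_sub_single, hwnorm, hwl, habη2, habη]; norm_num

end T1

namespace T1
variable {Γ : Type*} [DecidableEq Γ]

theorem single_coords (i j : Γ) (c : ℝ) :
    ((lp.single 1 i c : lp (fun _ : Γ => ℝ) 1) : ∀ _ : Γ, ℝ) j = if j = i then c else 0 := by
  rw [lp.single_apply]
  split <;> simp_all

theorem peak_iff (x : lp (fun _ : Γ => ℝ) 1) (hx : ‖x‖ = 1) :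
    (∃ i θ, (θ = (1:ℝ) ∨ θ = -1) ∧ x = lp.single 1 i θ) ↔
    (∀ z : lp (fun _ : Γ => ℝ) 1, ‖z‖ = 1 →
      (∀ y : lp (fun _ : Γ => ℝ) 1, ‖y‖ = 1 → ‖x - y‖ = 2 → ‖z - y‖ = 2) → z = x) := by
  constructor
  · rintro ⟨i, θ, hθ, rfl⟩ z hz hsub
    have hθ1 : |θ| = 1 := by rcases hθ with rfl|rfl <;> norm_num
    -- z vanishes off i
    have hk : ∀ k, k ≠ i → (z : ∀ _ : Γ, ℝ) k = 0 := by
      intro k hki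
      by_contra hzk
      set s : ℝ := if 0 < (z : ∀ _ : Γ, ℝ) k then 1 else -1 with hs
      have hy : ‖(lp.single 1 k s : lp (fun _ : Γ => ℝ) 1)‖ = 1 := by
        rw [norm_single', hs]; split <;> norm_num
      have h2 : ‖(lp.single 1 i θ : lp (fun _ : Γ => ℝ) 1) - lp.single 1 k s‖ = 2 := by
        rw [dist_two _ _ hx hy]
        intro j
        rw [single_coords, single_coords]
        by_cases hji : j = i
        · subst hji; rw [if_pos rfl, if_neg (fun h => hki h.symm)]; simp
        · rw [if_neg hji]; simp
      have h3 := hsub _ hy h2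
      rw [dist_two z _ hz hy] at h3
      have h4 := h3 k
      rw [single_coords, if_pos rfl] at h4
      by_cases h0 : 0 < (z : ∀ _ : Γ, ℝ) k
      · rw [hs, if_pos h0] at h4; nlinarith
      · have hlt : (z : ∀ _ : Γ, ℝ) k < 0 := lt_of_le_of_ne (not_lt.mp h0) hzk
        rw [hs, if_neg h0] at h4; nlinarith
    -- |z i| = 1
    have hzi : |(z : ∀ _ : Γ, ℝ) i| = 1 := by
      have h1 : ∑' j, |(z : ∀ _ : Γ, ℝ) j| = 1 := by rw [← norm1, hz]
      have he : ∀ j, |(z : ∀ _ : Γ, ℝ) j| = if j = i then |(z : ∀ _ : Γ, ℝ) i| else 0 := by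
        intro j
        by_cases hj : j = i
        · subst hj; simp
        · rw [if_neg hj, hk j hj, abs_zero]
      rw [tsum_congr he, (hasSum_ite_eq i _).tsum_eq] at h1
      exact h1
    -- z i = θ
    have hyn : ‖(lp.single 1 i (-θ) : lp (fun _ : Γ => ℝ) 1)‖ = 1 := by
      rw [norm_single', abs_neg, hθ1]
    have h2 : ‖(lp.single 1 i θ : lp (fun _ : Γ => ℝ) 1) - lp.single 1 i (-θ)‖ = 2 := by
      rw [dist_two _ _ hx hyn]
      intro j
      rw [single_coords, single_coords]
      by_cases hj : j = i
      · rw [if_pos hj, if_pos hj]; nlinarith [sq_nonneg θ]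
      · rw [if_neg hj]; simp
    have h3 := hsub _ hyn h2
    rw [dist_two z _ hz hyn] at h3
    have h4 := h3 i
    rw [single_coords, if_pos rfl] at h4
    have hzi' : (z : ∀ _ : Γ, ℝ) i = θ := by
      rcases (abs_eq (by norm_num : (0:ℝ) ≤ 1)).mp hzi with h|h <;>
        rcases hθ with rfl|rfl <;> nlinarith
    apply lp.ext
    funext j
    by_cases hj : j = i
    · subst hj; rw [hzi', single_coords, if_pos rfl]
    · rw [hk j hj, single_coords, if_neg hj]
  · intro hmax
    have hex : ∃ i, (x : ∀ _ : Γ, ℝ) i ≠ 0 := by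
      by_contra hall
      push_neg at hall
      have h0 : ‖x‖ = 0 := by
        rw [norm1]
        simp [hall]
      rw [hx] at h0; norm_num at h0
    obtain ⟨i, hi⟩ := hex
    set s : ℝ := if 0 < (x : ∀ _ : Γ, ℝ) i then 1 else -1 with hs
    have hzs : ‖(lp.single 1 i s : lp (fun _ : Γ => ℝ) 1)‖ = 1 := by
      rw [norm_single', hs]; split <;> norm_num
    have hzx : lp.single 1 i s = x := by
      apply hmax _ hzs
      intro y hy hxy
      rw [dist_two x y hx hy] at hxy
      rw [dist_two _ y hzs hy]
      intro j
      rw [single_coords]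
      by_cases hj : j = i
      · subst hj
        rw [if_pos rfl]
        have hxi := hxy j
        by_cases h0 : 0 < (x : ∀ _ : Γ, ℝ) j
        · rw [hs, if_pos h0]; nlinarith
        · have hlt : (x : ∀ _ : Γ, ℝ) j < 0 := lt_of_le_of_ne (not_lt.mp h0) hi
          rw [hs, if_neg h0]; nlinarith
      · rw [if_neg hj]; simp
    exact ⟨i, s, by rw [hs]; split; exacts [Or.inl rfl, Or.inr rfl], hzx.symm⟩

end T1

namespace T1
variable {Γ₁ Γ₂ : Type*}

noncomputable def shuffleFun (σ : Γ₂ ≃ Γ₁) (θ : Γ₂ → ℝ) (hθ : ∀ j, θ j = 1 ∨ θ j = -1)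
    (x : lp (fun _ : Γ₁ => ℝ) 1) : lp (fun _ : Γ₂ => ℝ) 1 :=
  ⟨fun j => θ j * (x : ∀ _ : Γ₁, ℝ) (σ j), by
    apply memℓp_one
    have h1 : Summable fun j : Γ₂ => |(x : ∀ _ : Γ₁, ℝ) (σ j)| :=
      (σ.summable_iff (f := fun i => |(x : ∀ _ : Γ₁, ℝ) i|)).2 (summable x)
    refine h1.congr fun j => ?_
    rw [abs_mul]
    rcases hθ j with h|h <;> rw [h] <;> norm_num⟩

theorem shuffleFun_apply (σ : Γ₂ ≃ Γ₁) (θ : Γ₂ → ℝ) (hθ : ∀ j, θ j = 1 ∨ θ j = -1)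
    (x : lp (fun _ : Γ₁ => ℝ) 1) (j : Γ₂) :
    ((shuffleFun σ θ hθ x) : ∀ _ : Γ₂, ℝ) j = θ j * (x : ∀ _ : Γ₁, ℝ) (σ j) := rfl

set_option maxHeartbeats 2000000 in
noncomputable def shuffle (σ : Γ₂ ≃ Γ₁) (θ : Γ₂ → ℝ) (hθ : ∀ j, θ j = 1 ∨ θ j = -1) :
    lp (fun _ : Γ₁ => ℝ) 1 ≃ₗᵢ[ℝ] lp (fun _ : Γ₂ => ℝ) 1 where
  toFun := shuffleFun σ θ hθ
  invFun := shuffleFun σ.symm (fun i => θ (σ.symm i)) (fun i => hθ _)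
  map_add' x y := by
    apply lp.ext
    funext j
    rw [shuffleFun_apply]
    have h1 : ((x + y : lp (fun _ : Γ₁ => ℝ) 1) : ∀ _ : Γ₁, ℝ) (σ j)
        = (x : ∀ _ : Γ₁, ℝ) (σ j) + (y : ∀ _ : Γ₁, ℝ) (σ j) := by rw [lp.coeFn_add]; rfl
    have h2 : ((shuffleFun σ θ hθ x + shuffleFun σ θ hθ y : lp (fun _ : Γ₂ => ℝ) 1) : ∀ _ : Γ₂, ℝ) j
        = θ j * (x : ∀ _ : Γ₁, ℝ) (σ j) + θ j * (y : ∀ _ : Γ₁, ℝ) (σ j) := by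
      rw [lp.coeFn_add]; rfl
    rw [h1, h2]; ring
  map_smul' c x := by
    apply lp.ext
    funext j
    rw [RingHom.id_apply]
    have h1 : ((c • x : lp (fun _ : Γ₁ => ℝ) 1) : ∀ _ : Γ₁, ℝ) (σ j)
        = c * (x : ∀ _ : Γ₁, ℝ) (σ j) := by rw [lp.coeFn_smul]; rfl
    have h2 : ((c • shuffleFun σ θ hθ x : lp (fun _ : Γ₂ => ℝ) 1) : ∀ _ : Γ₂, ℝ) j
        = c * (θ j * (x : ∀ _ : Γ₁, ℝ) (σ j)) := by rw [lp.coeFn_smul]; rfl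
    rw [shuffleFun_apply, h1, h2]; ring
  left_inv x := by
    apply lp.ext
    funext i
    rw [shuffleFun_apply, shuffleFun_apply, Equiv.apply_symm_apply]
    rcases hθ (σ.symm i) with h|h <;> rw [h] <;> ring
  right_inv y := by
    apply lp.ext
    funext j
    rw [shuffleFun_apply, shuffleFun_apply, Equiv.symm_apply_apply]
    rcases hθ j with h|h <;> rw [h] <;> ring
  norm_map' x := by
    show ‖shuffleFun σ θ hθ x‖ = ‖x‖
    rw [norm1, norm1]
    have h1 : ∀ j, |((shuffleFun σ θ hθ x) : ∀ _ : Γ₂, ℝ) j| = |(x : ∀ _ : Γ₁, ℝ) (σ j)| := by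
      intro j
      rw [shuffleFun_apply, abs_mul]
      rcases hθ j with h|h <;> rw [h] <;> norm_num
    rw [tsum_congr h1]
    exact σ.tsum_eq fun i => |(x : ∀ _ : Γ₁, ℝ) i|

set_option maxHeartbeats 1000000 in
theorem shuffle_apply (σ : Γ₂ ≃ Γ₁) (θ : Γ₂ → ℝ) (hθ : ∀ j, θ j = 1 ∨ θ j = -1)
    (x : lp (fun _ : Γ₁ => ℝ) 1) (j : Γ₂) :
    ((shuffle σ θ hθ x) : ∀ _ : Γ₂, ℝ) j = θ j * (x : ∀ _ : Γ₁, ℝ) (σ j) := rfl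

end T1

set_option maxHeartbeats 1000000 in
/-- (Ding) Every surjective isometry between the unit spheres of two real `ℓ¹` spaces is a signed
permutation of the coordinates, and in particular extends to a surjective real-linear isometry
between the whole spaces. -/
theorem tingley_ell_one
    {Γ₁ Γ₂ : Type*}
    (Δ : lp (fun _ : Γ₁ => ℝ) 1 → lp (fun _ : Γ₂ => ℝ) 1)
    (hmap : ∀ x : lp (fun _ : Γ₁ => ℝ) 1, ‖x‖ = 1 → ‖Δ x‖ = 1)
    (hsurj : ∀ y : lp (fun _ : Γ₂ => ℝ) 1, ‖y‖ = 1 →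
      ∃ x : lp (fun _ : Γ₁ => ℝ) 1, ‖x‖ = 1 ∧ Δ x = y)
    (hiso : ∀ x y : lp (fun _ : Γ₁ => ℝ) 1, ‖x‖ = 1 → ‖y‖ = 1 → ‖Δ x - Δ y‖ = ‖x - y‖) :
    (∃ (σ : Γ₂ ≃ Γ₁) (θ : Γ₂ → ℝ), (∀ j : Γ₂, θ j = 1 ∨ θ j = -1) ∧
      ∀ x : lp (fun _ : Γ₁ => ℝ) 1, ‖x‖ = 1 →
        ∀ j : Γ₂, (Δ x : ∀ _ : Γ₂, ℝ) j = θ j * (x : ∀ _ : Γ₁, ℝ) (σ j)) ∧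
      ∃ T : lp (fun _ : Γ₁ => ℝ) 1 ≃ₗᵢ[ℝ] lp (fun _ : Γ₂ => ℝ) 1,
        ∀ x : lp (fun _ : Γ₁ => ℝ) 1, ‖x‖ = 1 → T x = Δ x := by
  classical
  have hinj : ∀ x y : lp (fun _ : Γ₁ => ℝ) 1, ‖x‖ = 1 → ‖y‖ = 1 → Δ x = Δ y → x = y := by
    intro x y hx hy h
    have h2 := hiso x y hx hy
    rw [h, sub_self, norm_zero] at h2
    exact sub_eq_zero.mp (norm_eq_zero.mp h2.symm)
  have hnorm1 : ∀ (i : Γ₁) (θ : ℝ), (θ = 1 ∨ θ = -1) →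
      ‖(lp.single 1 i θ : lp (fun _ : Γ₁ => ℝ) 1)‖ = 1 := by
    intro i θ h; rw [T1.norm_single']; rcases h with rfl|rfl <;> norm_num
  have hnorm2 : ∀ (j : Γ₂) (η : ℝ), (η = 1 ∨ η = -1) →
      ‖(lp.single 1 j η : lp (fun _ : Γ₂ => ℝ) 1)‖ = 1 := by
    intro j η h; rw [T1.norm_single']; rcases h with rfl|rfl <;> norm_num
  -- image of a peak is a peak
  have himg : ∀ (i : Γ₁) (θ : ℝ), (θ = 1 ∨ θ = -1) →
      ∃ (j : Γ₂) (η : ℝ), (η = 1 ∨ η = -1) ∧ Δ (lp.single 1 i θ) = lp.single 1 j η := by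
    intro i θ hθ
    have hx := hnorm1 i θ hθ
    have hDx := hmap _ hx
    refine (T1.peak_iff _ hDx).mpr ?_
    intro w hw hsub
    obtain ⟨z, hz, rfl⟩ := hsurj w hw
    have hzx : z = lp.single 1 i θ := by
      refine (T1.peak_iff _ hx).mp ⟨i, θ, hθ, rfl⟩ z hz ?_
      intro y hy hxy
      have h1 : ‖Δ (lp.single 1 i θ) - Δ y‖ = 2 := by
        rw [hiso _ _ hx hy]; exact hxy
      have h2 := hsub (Δ y) (hmap y hy) h1
      rwa [hiso z y hz hy] at h2
    rw [hzx]
  -- preimage of a peak is a peak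
  have hpre : ∀ (j : Γ₂) (η : ℝ), (η = 1 ∨ η = -1) →
      ∃ (i : Γ₁) (θ : ℝ), (θ = 1 ∨ θ = -1) ∧ Δ (lp.single 1 i θ) = lp.single 1 j η := by
    intro j η hη
    obtain ⟨x, hx, hDx⟩ := hsurj (lp.single 1 j η) (hnorm2 j η hη)
    have hxpeak : ∃ i θ, (θ = (1:ℝ) ∨ θ = -1) ∧ x = lp.single 1 i θ := by
      refine (T1.peak_iff x hx).mpr ?_
      intro z hz hsub
      apply hinj z x hz hx
      have hDxpeak : ∃ j' η', (η' = (1:ℝ) ∨ η' = -1) ∧ Δ x = lp.single 1 j' η' :=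
        ⟨j, η, hη, hDx⟩
      refine (T1.peak_iff (Δ x) (hmap x hx)).mp hDxpeak (Δ z) (hmap z hz) ?_
      intro y' hy' hxy'
      obtain ⟨y, hy, rfl⟩ := hsurj y' hy'
      have h3 : ‖x - y‖ = 2 := by rw [← hiso x y hx hy]; exact hxy'
      have h2 := hsub y hy h3
      rw [hiso z y hz hy]; exact h2
    obtain ⟨i, θ, hθ, rfl⟩ := hxpeak
    exact ⟨i, θ, hθ, hDx⟩
  -- antipodality
  have hneg : ∀ i : Γ₁, Δ (lp.single 1 i (-1)) = - Δ (lp.single 1 i 1) := by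
    intro i
    obtain ⟨j, ηp, hηp, hp⟩ := himg i 1 (Or.inl rfl)
    obtain ⟨l, ηq, hηq, hq⟩ := himg i (-1) (Or.inr rfl)
    have hne : Δ (lp.single 1 i (-1)) ≠ Δ (lp.single 1 i 1) := by
      intro h
      have h2 := hinj _ _ (hnorm1 i (-1) (Or.inr rfl)) (hnorm1 i 1 (Or.inl rfl)) h
      obtain ⟨-, h3⟩ := T1.single_eq_single (by norm_num : (-1:ℝ) ≠ 0) h2
      norm_num at h3
    have hjl : j = l := by
      by_contra hjl
      obtain ⟨w, hwn, hw1, hw2⟩ := T1.mid hjl hηp hηq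
      obtain ⟨z, hz, rfl⟩ := hsurj w hwn
      have d1 : ‖z - lp.single 1 i 1‖ = 1 := by
        rw [← hiso z _ hz (hnorm1 i 1 (Or.inl rfl)), hp]; exact hw1
      have d2 : ‖z - lp.single 1 i (-1)‖ = 1 := by
        rw [← hiso z _ hz (hnorm1 i (-1) (Or.inr rfl)), hq]; exact hw2
      exact T1.no_mid z i hz d1 d2
    subst hjl
    have hηne : ηq ≠ ηp := by
      intro h; apply hne; rw [hp, hq, h]
    have hqp : ηq = -ηp := by
      rcases hηp with rfl|rfl <;> rcases hηq with rfl|rfl <;>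
        first
        | exact absurd rfl hηne
        | norm_num
    rw [hq, hqp, lp.single_neg, hp]
  -- the index map on peaks
  have himg1 : ∀ i : Γ₁, ∃ (j : Γ₂) (η : ℝ), (η = 1 ∨ η = -1) ∧
      Δ (lp.single 1 i 1) = lp.single 1 j η := fun i => himg i 1 (Or.inl rfl)
  choose τ th hth hτeq using himg1
  have hthne : ∀ i, th i ≠ 0 := by
    intro i; rcases hth i with h|h <;> rw [h] <;> norm_num
  have hτinj : Function.Injective τ := by
    intro a b hab
    have h1 := hτeq a
    have h2 := hτeq b
    rw [hab] at h1
    have hcase : th a = th b ∨ th a = -th b := by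
      rcases hth a with ha|ha <;> rcases hth b with hb|hb <;> rw [ha, hb] <;> norm_num
    rcases hcase with hthis|hthis
    · have heq : Δ (lp.single 1 a 1) = Δ (lp.single 1 b 1) := by
        rw [h1, hthis, h2]
      have h3 := hinj _ _ (hnorm1 a 1 (Or.inl rfl)) (hnorm1 b 1 (Or.inl rfl)) heq
      exact (T1.single_eq_single one_ne_zero h3).1
    · have heq : Δ (lp.single 1 a 1) = Δ (lp.single 1 b (-1)) := by
        rw [h1, hthis, lp.single_neg, ← h2, ← hneg b]
      have h3 := hinj _ _ (hnorm1 a 1 (Or.inl rfl)) (hnorm1 b (-1) (Or.inr rfl)) heq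
      obtain ⟨-, h4⟩ := T1.single_eq_single one_ne_zero h3
      norm_num at h4
  have hτsurj : Function.Surjective τ := by
    intro j
    obtain ⟨i, θ, hθ, hD⟩ := hpre j 1 (Or.inl rfl)
    rcases hθ with rfl|rfl
    · have h1 := (hτeq i).symm.trans hD
      exact ⟨i, (T1.single_eq_single (hthne i) h1).1⟩
    · have h1 : (lp.single 1 (τ i) (-(th i)) : lp (fun _ : Γ₂ => ℝ) 1) = lp.single 1 j 1 := by
        rw [lp.single_neg, ← hτeq i, ← hneg i]
        exact hD
      refine ⟨i, (T1.single_eq_single (neg_ne_zero.mpr (hthne i)) h1).1⟩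
  -- key identities
  have hkeyA : ∀ i : Γ₁, Δ (lp.single 1 i (th i)) = lp.single 1 (τ i) 1 := by
    intro i
    rcases hth i with h|h
    · rw [h, hτeq i, h]
    · rw [h, hneg i, hτeq i, ← lp.single_neg, h]
      norm_num
  have hkeyB : ∀ i : Γ₁, Δ (lp.single 1 i (-(th i))) = lp.single 1 (τ i) (-1) := by
    intro i
    rcases hth i with h|h
    · rw [h, hneg i, hτeq i, ← lp.single_neg, h]
    · rw [h]
      norm_num
      rw [hτeq i, h, ← lp.single_neg]
  -- main coordinate formula
  have hformula : ∀ x : lp (fun _ : Γ₁ => ℝ) 1, ‖x‖ = 1 → ∀ i : Γ₁,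
      (Δ x : ∀ _ : Γ₂, ℝ) (τ i) = th i * (x : ∀ _ : Γ₁, ℝ) i := by
    intro x hx i
    have hDx := hmap x hx
    have hA : ‖Δ x - lp.single 1 (τ i) 1‖ = ‖x - lp.single 1 i (th i)‖ := by
      rw [← hkeyA i]; exact hiso x _ hx (hnorm1 i (th i) (hth i))
    have hB : ‖Δ x - lp.single 1 (τ i) (-1)‖ = ‖x - lp.single 1 i (-(th i))‖ := by
      rw [← hkeyB i]
      exact hiso x _ hx (hnorm1 i (-(th i))
        (by rcases hth i with h|h <;> rw [h] <;> norm_num))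
    rw [T1.norm_sub_single, T1.norm_sub_single, hx, hDx] at hA hB
    rw [sub_neg_eq_add, sub_neg_eq_add] at hB
    have h1 : |(Δ x : ∀ _ : Γ₂, ℝ) (τ i)| ≤ 1 := by
      have h := lp.norm_apply_le_norm (by norm_num : (1:ℝ≥0∞) ≠ 0) (Δ x) (τ i)
      rwa [hDx, Real.norm_eq_abs] at h
    have h2 : |(x : ∀ _ : Γ₁, ℝ) i| ≤ 1 := by
      have h := lp.norm_apply_le_norm (by norm_num : (1:ℝ≥0∞) ≠ 0) x i
      rwa [hx, Real.norm_eq_abs] at h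
    have d1 := T1.diff ((Δ x : ∀ _ : Γ₂, ℝ) (τ i)) 1 h1 (Or.inl rfl)
    have d2 := T1.diff ((x : ∀ _ : Γ₁, ℝ) i) (th i) h2 (hth i)
    linarith [d1, d2, hA, hB]
  -- assemble
  have hbij : Function.Bijective τ := ⟨hτinj, hτsurj⟩
  refine ⟨⟨(Equiv.ofBijective τ hbij).symm, fun j => th ((Equiv.ofBijective τ hbij).symm j),
    fun j => hth _, ?_⟩, ?_⟩
  · intro x hx j
    have h := hformula x hx ((Equiv.ofBijective τ hbij).symm j)
    rwa [show τ ((Equiv.ofBijective τ hbij).symm j) = j from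
      Equiv.apply_symm_apply (Equiv.ofBijective τ hbij) j] at h
  · refine ⟨T1.shuffle (Equiv.ofBijective τ hbij).symm
      (fun j => th ((Equiv.ofBijective τ hbij).symm j)) (fun j => hth _), ?_⟩
    intro x hx
    apply lp.ext
    funext j
    rw [T1.shuffle_apply]
    have h := hformula x hx ((Equiv.ofBijective τ hbij).symm j)
    rw [show τ ((Equiv.ofBijective τ hbij).symm j) = j from
      Equiv.apply_symm_apply (Equiv.ofBijective τ hbij) j] at h
    exact h.symm
end

section
/- Let (Ω, Σ, μ) be a σ-finite measure space and let Y be a real Banach space. Then every surjective isometry Δ : S(L¹_ℝ(Ω, Σ, μ)) → S(Y) extends uniquely to a surjective real-linear isometry from L¹_ℝ(Ω, Σ, μ) onto Y. -/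
open MeasureTheory

section TanAux

variable {Ω : Type*} [MeasurableSpace Ω] {μ : Measure Ω}

-- real sign lemmas
private lemma r_abs_sub_eq (a b : ℝ) (h : a * b ≤ 0) : |a - b| = |a| + |b| := by
  rcases le_total a 0 with ha | ha <;> rcases le_total b 0 with hb | hb
  · -- both ≤ 0 : a*b ≥ 0 so a*b = 0
    have : 0 ≤ a * b := by nlinarith
    have hab : a * b = 0 := le_antisymm h this
    rcases mul_eq_zero.mp hab with h0 | h0 <;> subst h0 <;> simp [abs_of_nonpos, ha, hb]
  · rw [abs_of_nonpos ha, abs_of_nonneg hb, abs_of_nonpos (by linarith : a - b ≤ 0)]; ring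
  · rw [abs_of_nonneg ha, abs_of_nonpos hb, abs_of_nonneg (by linarith : 0 ≤ a - b)]; ring
  · have : 0 ≤ a * b := mul_nonneg ha hb
    have hab : a * b = 0 := le_antisymm h this
    rcases mul_eq_zero.mp hab with h0 | h0 <;> subst h0 <;> simp [abs_of_nonneg, ha, hb]

private lemma r_mul_nonpos_of_abs_sub (a b : ℝ) (h : |a - b| = |a| + |b|) : a * b ≤ 0 := by
  by_contra hc
  push_neg at hc
  rcases lt_trichotomy a 0 with ha | ha | ha
  · have hb : b < 0 := by nlinarith
    rw [abs_of_neg ha, abs_of_neg hb] at h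
    rcases abs_cases (a - b) with ⟨h1, _⟩ | ⟨h1, _⟩ <;> nlinarith
  · subst ha; simp at hc
  · have hb : 0 < b := by nlinarith
    rw [abs_of_pos ha, abs_of_pos hb] at h
    rcases abs_cases (a - b) with ⟨h1, _⟩ | ⟨h1, _⟩ <;> nlinarith

private lemma r_abs_add_eq (a b : ℝ) (h : 0 ≤ a * b) : |a + b| = |a| + |b| := by
  have := r_abs_sub_eq a (-b) (by nlinarith)
  simpa using this

-- L1 norm as integral of abs
lemma l1_norm_eq (f : Lp ℝ 1 μ) : ‖f‖ = ∫ t, |f t| ∂μ := by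
  rw [L1.norm_eq_integral_norm]
  simp [Real.norm_eq_abs]

lemma l1_integrable (f : Lp ℝ 1 μ) : Integrable f μ := L1.integrable_coeFn f

lemma l1_norm_sub_eq (f g : Lp ℝ 1 μ) : ‖f - g‖ = ∫ t, |f t - g t| ∂μ := by
  rw [l1_norm_eq (f - g)]
  refine integral_congr_ae ?_
  filter_upwards [Lp.coeFn_sub f g] with t ht
  rw [ht]; rfl

lemma l1_norm_add_eq (f g : Lp ℝ 1 μ) : ‖f + g‖ = ∫ t, |f t + g t| ∂μ := by
  rw [l1_norm_eq (f + g)]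
  refine integral_congr_ae ?_
  filter_upwards [Lp.coeFn_add f g] with t ht
  rw [ht]; rfl

/-- If `‖f - g‖ = ‖f‖ + ‖g‖` in `L¹` then `f * g ≤ 0` a.e. -/
lemma opp_sign_of_norm_sub (f g : Lp ℝ 1 μ) (h : ‖f - g‖ = ‖f‖ + ‖g‖) :
    ∀ᵐ t ∂μ, f t * g t ≤ 0 := by
  have hint : ∫ t, (|f t| + |g t| - |f t - g t|) ∂μ = 0 := by
    have hi1 : Integrable (fun t => |f t| + |g t|) μ :=
      ((l1_integrable f).abs).add ((l1_integrable g).abs)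
    have hi2 : Integrable (fun t => |f t - g t|) μ := by
      have := ((l1_integrable f).sub (l1_integrable g)).abs
      simpa using this
    rw [integral_sub hi1 hi2,
      integral_add ((l1_integrable f).abs) ((l1_integrable g).abs)]
    have h1 := l1_norm_eq f
    have h2 := l1_norm_eq g
    have h3 := l1_norm_sub_eq f g
    rw [h1, h2, h3] at h
    linarith
  have hnn : 0 ≤ᵐ[μ] fun t => |f t| + |g t| - |f t - g t| := by
    filter_upwards with t
    simp only [Pi.zero_apply]
    have : |f t - g t| ≤ |f t| + |g t| := abs_sub (f t) (g t)
    linarith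
  have hzero : (fun t => |f t| + |g t| - |f t - g t|) =ᵐ[μ] 0 :=
    (integral_eq_zero_iff_of_nonneg_ae hnn
      (by
        have hi1 : Integrable (fun t => |f t| + |g t|) μ :=
          ((l1_integrable f).abs).add ((l1_integrable g).abs)
        have hi2 : Integrable (fun t => |f t - g t|) μ := by
          have := ((l1_integrable f).sub (l1_integrable g)).abs
          simpa using this
        exact hi1.sub hi2)).mp hint
  filter_upwards [hzero] with t ht
  simp only [Pi.zero_apply] at ht
  exact r_mul_nonpos_of_abs_sub _ _ (by linarith)

/-- If `f * g ≤ 0` a.e. then `‖f - g‖ = ‖f‖ + ‖g‖` in `L¹`. -/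
lemma norm_sub_of_opp_sign (f g : Lp ℝ 1 μ) (h : ∀ᵐ t ∂μ, f t * g t ≤ 0) :
    ‖f - g‖ = ‖f‖ + ‖g‖ := by
  rw [l1_norm_sub_eq, l1_norm_eq, l1_norm_eq,
    ← integral_add ((l1_integrable f).abs) ((l1_integrable g).abs)]
  refine integral_congr_ae ?_
  filter_upwards [h] with t ht
  simpa using r_abs_sub_eq _ _ ht

/-- If `0 ≤ f * g` a.e. then `‖f + g‖ = ‖f‖ + ‖g‖` in `L¹`. -/
lemma norm_add_of_same_sign (f g : Lp ℝ 1 μ) (h : ∀ᵐ t ∂μ, 0 ≤ f t * g t) :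
    ‖f + g‖ = ‖f‖ + ‖g‖ := by
  rw [l1_norm_add_eq, l1_norm_eq, l1_norm_eq,
    ← integral_add ((l1_integrable f).abs) ((l1_integrable g).abs)]
  refine integral_congr_ae ?_
  filter_upwards [h] with t ht
  simpa using r_abs_add_eq _ _ ht

end TanAux
section TanKey

variable {Ω : Type*} [MeasurableSpace Ω] {μ : Measure Ω}
variable {Y : Type*} [NormedAddCommGroup Y] [NormedSpace ℝ Y]
variable {Δ : Lp ℝ 1 μ → Y}

private lemma r_abs_convex (a b s : ℝ) (hab : 0 ≤ a * b) (hs0 : 0 ≤ s) (hs1 : s ≤ 1) :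
    |s * a + (1 - s) * b| = s * |a| + (1 - s) * |b| := by
  have hkey : 0 ≤ s * a * ((1 - s) * b) := by
    have h0 : 0 ≤ s * (1 - s) * (a * b) :=
      mul_nonneg (mul_nonneg hs0 (by linarith)) hab
    nlinarith [h0]
  rw [r_abs_add_eq (s*a) ((1-s)*b) hkey, abs_mul, abs_mul,
    abs_of_nonneg hs0, abs_of_nonneg (by linarith : (0:ℝ) ≤ 1 - s)]

private lemma r_factor_sign (a b z s : ℝ) (hab : 0 ≤ a * b) (hs0 : 0 < s) (hs1 : s < 1)
    (h : z * (s * a + (1 - s) * b) ≤ 0) : z * a ≤ 0 := by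
  by_contra hc
  push_neg at hc
  have ha : a ≠ 0 := by rintro rfl; simp at hc
  have ha2 : 0 < a ^ 2 := by rcases ha.lt_or_gt with h | h <;> nlinarith
  have hzb : 0 ≤ z * b := by nlinarith [sq_nonneg a]
  nlinarith

/-- Convex combination of two a.e.-same-sign unit vectors is a unit vector. -/
lemma norm_combo_eq_one (x w : Lp ℝ 1 μ) (hx : ‖x‖ = 1) (hw : ‖w‖ = 1)
    (hxw : ∀ᵐ t ∂μ, 0 ≤ x t * w t) (s : ℝ) (hs0 : 0 ≤ s) (hs1 : s ≤ 1) :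
    ‖s • x + (1 - s) • w‖ = 1 := by
  have hm_coe : ∀ᵐ t ∂μ, (s • x + (1-s) • w) t = s * x t + (1-s) * w t := by
    filter_upwards [Lp.coeFn_add (s•x) ((1-s)•w), Lp.coeFn_smul s x, Lp.coeFn_smul (1-s) w]
      with t h1 h2 h3
    rw [h1, Pi.add_apply, h2, h3]; rfl
  rw [l1_norm_eq]
  have h1 : ∫ t, |(s • x + (1 - s) • w) t| ∂μ = ∫ t, (s*|x t| + (1-s)*|w t|) ∂μ := by
    refine integral_congr_ae ?_
    filter_upwards [hm_coe, hxw] with t h1 h2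
    rw [h1, r_abs_convex _ _ _ h2 hs0 hs1]
  rw [h1, integral_add ((l1_integrable x).abs.const_mul s) ((l1_integrable w).abs.const_mul (1-s)),
    integral_const_mul, integral_const_mul, ← l1_norm_eq, ← l1_norm_eq, hx, hw]
  ring

/-- KEY : a.e. same-sign unit vectors have `‖Δx + Δw‖ = 2`. -/
lemma tan_key (hmap : ∀ f : Lp ℝ 1 μ, ‖f‖ = 1 → ‖Δ f‖ = 1)
    (hsurj : ∀ y : Y, ‖y‖ = 1 → ∃ f : Lp ℝ 1 μ, ‖f‖ = 1 ∧ Δ f = y)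
    (hiso : ∀ f g : Lp ℝ 1 μ, ‖f‖ = 1 → ‖g‖ = 1 → ‖Δ f - Δ g‖ = ‖f - g‖)
    (x w : Lp ℝ 1 μ) (hx : ‖x‖ = 1) (hw : ‖w‖ = 1)
    (hxw : ∀ᵐ t ∂μ, 0 ≤ x t * w t) : ‖Δ x + Δ w‖ = 2 := by
  have hub : ‖Δ x + Δ w‖ ≤ 2 := by
    have := norm_add_le (Δ x) (Δ w)
    rw [hmap x hx, hmap w hw] at this; linarith
  have main : ∀ s : ℝ, 0 < s → s < 1 → 2 - 2*s ≤ ‖Δ x + Δ w‖ := by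
    intro s hs0 hs1
    set m := s • x + (1-s) • w with hm
    have hm_coe : ∀ᵐ t ∂μ, m t = s * x t + (1-s) * w t := by
      filter_upwards [Lp.coeFn_add (s•x) ((1-s)•w), Lp.coeFn_smul s x, Lp.coeFn_smul (1-s) w]
        with t h1 h2 h3
      rw [hm, h1, Pi.add_apply, h2, h3]; rfl
    have hm_norm : ‖m‖ = 1 := norm_combo_eq_one x w hx hw hxw s hs0.le hs1.le
    obtain ⟨z, hz_norm, hz_eq⟩ := hsurj (-(Δ m)) (by rw [norm_neg]; exact hmap m hm_norm)
    have hzm2 : ‖z - m‖ = 2 := by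
      have h1 : Δ z - Δ m = (-2 : ℝ) • Δ m := by rw [hz_eq]; module
      have h2 := hiso z m hz_norm hm_norm
      rw [h1, norm_smul, hmap m hm_norm] at h2
      rw [← h2]; norm_num
    have hopp : ∀ᵐ t ∂μ, z t * m t ≤ 0 := by
      refine opp_sign_of_norm_sub z m ?_
      rw [hzm2, hz_norm, hm_norm]; norm_num
    have hoppx : ∀ᵐ t ∂μ, x t * z t ≤ 0 := by
      filter_upwards [hopp, hm_coe, hxw] with t h1 h2 h3
      rw [h2] at h1
      have := r_factor_sign (x t) (w t) (z t) s h3 hs0 hs1 h1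
      linarith [mul_comm (z t) (x t), this]
    have hxz2 : ‖x - z‖ = 2 := by
      rw [norm_sub_of_opp_sign x z hoppx, hx, hz_norm]; norm_num
    have key_s : ‖Δ x + Δ m‖ = 2 := by
      have h2 := hiso x z hx hz_norm
      rw [hxz2, hz_eq, sub_neg_eq_add] at h2
      exact h2
    have dist_mw : ‖Δ m - Δ w‖ ≤ 2 * s := by
      rw [hiso m w hm_norm hw]
      have h1 : m - w = s • (x - w) := by rw [hm]; module
      rw [h1, norm_smul, Real.norm_eq_abs, abs_of_pos hs0]
      have : ‖x - w‖ ≤ 2 := by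
        have := norm_sub_le x w; rw [hx, hw] at this; linarith
      nlinarith
    have htri : ‖Δ x + Δ m‖ - ‖Δ m - Δ w‖ ≤ ‖Δ x + Δ w‖ := by
      have h1 : Δ x + Δ w = (Δ x + Δ m) - (Δ m - Δ w) := by module
      rw [h1]
      have := norm_sub_norm_le (Δ x + Δ m) (Δ m - Δ w)
      exact le_trans (by linarith [norm_sub_le (Δ x + Δ m) (Δ m - Δ w)]) (le_refl _)
    rw [key_s] at htri
    linarith
  refine le_antisymm hub ?_
  by_contra hc
  push_neg at hc
  have hn0 : 0 ≤ ‖Δ x + Δ w‖ := norm_nonneg _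
  set n := ‖Δ x + Δ w‖
  have := main ((2 - n)/4) (by linarith) (by linarith)
  linarith

end TanKey
section TanAnti

variable {Ω : Type*} [MeasurableSpace Ω] {μ : Measure Ω}
variable {Y : Type*} [NormedAddCommGroup Y] [NormedSpace ℝ Y]
variable {Δ : Lp ℝ 1 μ → Y}

/-- The `L¹` element obtained by restricting `f` to a measurable set. -/
noncomputable def restrL1 (f : Lp ℝ 1 μ) (B : Set Ω) (hB : MeasurableSet B) : Lp ℝ 1 μ :=
  Integrable.toL1 (B.indicator ⇑f) ((l1_integrable f).indicator hB)

lemma restrL1_coe (f : Lp ℝ 1 μ) (B : Set Ω) (hB : MeasurableSet B) :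
    ⇑(restrL1 f B hB) =ᵐ[μ] B.indicator ⇑f :=
  Integrable.coeFn_toL1 _

lemma restrL1_norm (f : Lp ℝ 1 μ) (B : Set Ω) (hB : MeasurableSet B) :
    ‖restrL1 f B hB‖ = ∫ t in B, |f t| ∂μ := by
  rw [l1_norm_eq, ← integral_indicator hB]
  refine integral_congr_ae ?_
  filter_upwards [restrL1_coe f B hB] with t ht
  rw [ht]
  by_cases h : t ∈ B <;> simp [Set.indicator_of_mem, Set.indicator_of_notMem, h]

/-- If `Δ z = -Δ u` then `z` is a.e.-opposite in sign to anything a.e.-same-sign with `u`. -/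
lemma sigma_opp (hmap : ∀ f : Lp ℝ 1 μ, ‖f‖ = 1 → ‖Δ f‖ = 1)
    (hsurj : ∀ y : Y, ‖y‖ = 1 → ∃ f : Lp ℝ 1 μ, ‖f‖ = 1 ∧ Δ f = y)
    (hiso : ∀ f g : Lp ℝ 1 μ, ‖f‖ = 1 → ‖g‖ = 1 → ‖Δ f - Δ g‖ = ‖f - g‖)
    (u v z : Lp ℝ 1 μ) (hu : ‖u‖ = 1) (hv : ‖v‖ = 1) (hz : ‖z‖ = 1)
    (hzu : Δ z = -(Δ u)) (huv : ∀ᵐ t ∂μ, 0 ≤ u t * v t) :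
    ∀ᵐ t ∂μ, z t * v t ≤ 0 := by
  have hk : ‖Δ u + Δ v‖ = 2 := tan_key hmap hsurj hiso u v hu hv huv
  have h1 : ‖z - v‖ = 2 := by
    have h2 := hiso z v hz hv
    rw [hzu] at h2
    have h3 : -(Δ u) - Δ v = -(Δ u + Δ v) := by module
    rw [h3, norm_neg, hk] at h2
    exact h2.symm
  exact opp_sign_of_norm_sub z v (by rw [h1, hz, hv]; norm_num)

/-- If `Δ z = -Δ u` then `z` vanishes a.e. on any measurable set where `u` vanishes a.e. -/
lemma sigma_supp (hmap : ∀ f : Lp ℝ 1 μ, ‖f‖ = 1 → ‖Δ f‖ = 1)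
    (hsurj : ∀ y : Y, ‖y‖ = 1 → ∃ f : Lp ℝ 1 μ, ‖f‖ = 1 ∧ Δ f = y)
    (hiso : ∀ f g : Lp ℝ 1 μ, ‖f‖ = 1 → ‖g‖ = 1 → ‖Δ f - Δ g‖ = ‖f - g‖)
    (u z : Lp ℝ 1 μ) (hu : ‖u‖ = 1) (hz : ‖z‖ = 1) (hzu : Δ z = -(Δ u))
    (A : Set Ω) (hA : MeasurableSet A) (huA : ∀ᵐ t ∂μ, t ∈ A → u t = 0) :
    ∀ᵐ t ∂μ, t ∈ A → z t = 0 := by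
  set c := ∫ t in A, |z t| ∂μ with hc_def
  have hc_nonneg : 0 ≤ c := setIntegral_nonneg hA (fun t _ => abs_nonneg _)
  by_cases hc : c = 0
  · -- then |z| vanishes a.e. on A
    have h1 : ∫ t, A.indicator (fun s => |z s|) t ∂μ = 0 := by
      rw [integral_indicator hA]; exact hc
    have h2 := (integral_eq_zero_iff_of_nonneg_ae
      (by filter_upwards with t; by_cases h : t ∈ A <;>
        simp [Set.indicator_of_mem, Set.indicator_of_notMem, h, abs_nonneg])
      (((l1_integrable z).abs).indicator hA)).mp h1
    filter_upwards [h2] with t ht hta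
    have := ht
    simp only [Set.indicator_of_mem hta, Pi.zero_apply] at this
    exact abs_eq_zero.mp this
  · have hc_pos : 0 < c := lt_of_le_of_ne hc_nonneg (Ne.symm hc)
    set v := c⁻¹ • restrL1 z A hA with hv_def
    have hv_coe : ∀ᵐ t ∂μ, v t = c⁻¹ * A.indicator (⇑z) t := by
      filter_upwards [Lp.coeFn_smul c⁻¹ (restrL1 z A hA), restrL1_coe z A hA] with t h1 h2
      rw [hv_def, h1, Pi.smul_apply, h2]; rfl
    have hv_norm : ‖v‖ = 1 := by
      rw [hv_def, norm_smul, Real.norm_eq_abs, abs_of_pos (inv_pos.mpr hc_pos),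
        restrL1_norm, ← hc_def, inv_mul_cancel₀ hc]
    have huv : ∀ᵐ t ∂μ, 0 ≤ u t * v t := by
      filter_upwards [hv_coe, huA] with t h1 h2
      by_cases h : t ∈ A
      · rw [h2 h]; simp
      · rw [h1, Set.indicator_of_notMem h]; simp
    have hzv := sigma_opp hmap hsurj hiso u v z hu hv_norm hz hzu huv
    -- z * v ≤ 0 a.e.; on A this gives z² ≤ 0 hence z = 0
    filter_upwards [hzv, hv_coe] with t h1 h2 hta
    rw [h2, Set.indicator_of_mem hta] at h1
    have h3 : z t * (c⁻¹ * z t) = c⁻¹ * (z t)^2 := by ring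
    rw [h3] at h1
    have h4 : 0 ≤ c⁻¹ * (z t)^2 := by positivity
    have h5 : c⁻¹ * (z t)^2 = 0 := le_antisymm h1 h4
    have h6 : (z t)^2 = 0 := by
      rcases mul_eq_zero.mp h5 with h | h
      · exact absurd h (by positivity)
      · exact h
    exact pow_eq_zero_iff (by norm_num) |>.mp h6

/-- Antipodality: `Δ (-u) = -Δ u` for every unit vector `u`. -/
lemma tan_antipodal [SigmaFinite μ] (hmap : ∀ f : Lp ℝ 1 μ, ‖f‖ = 1 → ‖Δ f‖ = 1)
    (hsurj : ∀ y : Y, ‖y‖ = 1 → ∃ f : Lp ℝ 1 μ, ‖f‖ = 1 ∧ Δ f = y)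
    (hiso : ∀ f g : Lp ℝ 1 μ, ‖f‖ = 1 → ‖g‖ = 1 → ‖Δ f - Δ g‖ = ‖f - g‖)
    (u : Lp ℝ 1 μ) (hu : ‖u‖ = 1) : Δ (-u) = -(Δ u) := by
  obtain ⟨z₀, hz0n, hz0⟩ := hsurj (-(Δ u)) (by rw [norm_neg]; exact hmap u hu)
  -- main claim: z₀ = -u
  suffices hmain : z₀ = -u by rw [← hmain, hz0]
  -- a.e. facts
  have f1 : ∀ᵐ t ∂μ, z₀ t * u t ≤ 0 :=
    sigma_opp hmap hsurj hiso u u z₀ hu hu hz0n hz0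
      (by filter_upwards with t; exact mul_self_nonneg _)
  -- mass domination: for every measurable B, ∫_B |u| ≤ ∫_B |z₀|
  have f3 : ∀ B : Set Ω, MeasurableSet B → ∫ t in B, |u t| ∂μ ≤ ∫ t in B, |z₀ t| ∂μ := by
    intro B hB
    set τ := ∫ t in B, |u t| ∂μ with hτ_def
    rcases le_or_gt τ 0 with hτ | hτ
    · exact le_trans hτ (setIntegral_nonneg hB (fun t _ => abs_nonneg _))
    · have hτ1 : τ ≤ 1 := by
        rw [hτ_def]
        calc ∫ t in B, |u t| ∂μ ≤ ∫ t, |u t| ∂μ :=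
              setIntegral_le_integral ((l1_integrable u).abs)
                (by filter_upwards with t; exact abs_nonneg _)
          _ = 1 := by rw [← l1_norm_eq, hu]
      set uB := τ⁻¹ • restrL1 u B hB with huB_def
      have huB_coe : ∀ᵐ t ∂μ, uB t = τ⁻¹ * B.indicator (⇑u) t := by
        filter_upwards [Lp.coeFn_smul τ⁻¹ (restrL1 u B hB), restrL1_coe u B hB] with t h1 h2
        rw [huB_def, h1, Pi.smul_apply, h2]; rfl
      have huB_norm : ‖uB‖ = 1 := by
        rw [huB_def, norm_smul, Real.norm_eq_abs, abs_of_pos (inv_pos.mpr hτ),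
          restrL1_norm, ← hτ_def, inv_mul_cancel₀ (ne_of_gt hτ)]
      obtain ⟨zB, hzBn, hzB⟩ := hsurj (-(Δ uB)) (by rw [norm_neg]; exact hmap uB huB_norm)
      have dist1 : ‖z₀ - zB‖ = ‖u - uB‖ := by
        have h2 := hiso z₀ zB hz0n hzBn
        rw [hz0, hzB] at h2
        have h3 : -(Δ u) - -(Δ uB) = -(Δ u - Δ uB) := by module
        rw [h3, norm_neg, hiso u uB hu huB_norm] at h2
        exact h2.symm
      have comp1 : ‖u - uB‖ = 2 * (1 - τ) := by
        rw [l1_norm_sub_eq]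
        have hpt : ∀ᵐ t ∂μ, |u t - uB t|
            = |u t| + (τ⁻¹ - 2) * B.indicator (fun s => |u s|) t := by
          filter_upwards [huB_coe] with t ht
          rw [ht]
          by_cases h : t ∈ B
          · rw [Set.indicator_of_mem h, Set.indicator_of_mem h]
            have h1 : u t - τ⁻¹ * u t = (1 - τ⁻¹) * u t := by ring
            rw [h1, abs_mul]
            have hτi : 1 ≤ τ⁻¹ := (one_le_inv₀ hτ).mpr hτ1
            rw [abs_of_nonpos (by linarith : 1 - τ⁻¹ ≤ 0)]
            ring
          · rw [Set.indicator_of_notMem h, Set.indicator_of_notMem h]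
            simp
        rw [integral_congr_ae hpt, integral_add ((l1_integrable u).abs)
          ((((l1_integrable u).abs).indicator hB).const_mul _),
          integral_const_mul, integral_indicator hB, ← l1_norm_eq, hu, ← hτ_def]
        field_simp
        ring
      have suppB : ∀ᵐ t ∂μ, t ∈ Bᶜ → zB t = 0 := by
        refine sigma_supp hmap hsurj hiso uB zB huB_norm hzBn hzB Bᶜ hB.compl ?_
        filter_upwards [huB_coe] with t ht htb
        rw [ht, Set.indicator_of_notMem htb]; simp
      have massB : ∫ t in B, |zB t| ∂μ = 1 := by
        have hsplit := integral_add_compl hB ((l1_integrable zB).abs)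
        have hzero : ∫ t in Bᶜ, |zB t| ∂μ = 0 := by
          rw [setIntegral_congr_ae hB.compl
            (by filter_upwards [suppB] with t ht htb; rw [ht htb]; simp : ∀ᵐ t ∂μ, t ∈ Bᶜ → |zB t| = (0:ℝ))]
          simp
        rw [hzero] at hsplit
        have : ∫ t, |zB t| ∂μ = 1 := by rw [← l1_norm_eq, hzBn]
        linarith
      -- the estimate
      have hle1 : (1:ℝ) - ∫ t in B, |z₀ t| ∂μ ≤ ∫ t in B, |z₀ t - zB t| ∂μ := by
        have h1 : ∫ t in B, (|zB t| - |z₀ t|) ∂μ ≤ ∫ t in B, |z₀ t - zB t| ∂μ := by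
          refine setIntegral_mono_ae (((l1_integrable zB).abs.sub
            (l1_integrable z₀).abs).integrableOn)
            (((l1_integrable z₀).sub (l1_integrable zB)).abs.integrableOn) ?_
          filter_upwards with t
          have := abs_sub (z₀ t) (zB t)
          have h2 := abs_sub_abs_le_abs_sub (zB t) (z₀ t)
          calc |zB t| - |z₀ t| ≤ |zB t - z₀ t| := h2
            _ = |z₀ t - zB t| := abs_sub_comm _ _
        have h3 : ∫ t in B, (|zB t| - |z₀ t|) ∂μ
            = 1 - ∫ t in B, |z₀ t| ∂μ := by
          rw [integral_sub ((l1_integrable zB).abs.integrableOn)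
            ((l1_integrable z₀).abs.integrableOn), massB]
        linarith
      have hle2 : (1:ℝ) - ∫ t in B, |z₀ t| ∂μ = ∫ t in Bᶜ, |z₀ t - zB t| ∂μ := by
        have h1 : ∫ t in Bᶜ, |z₀ t - zB t| ∂μ = ∫ t in Bᶜ, |z₀ t| ∂μ := by
          refine setIntegral_congr_ae hB.compl ?_
          filter_upwards [suppB] with t ht htb
          rw [ht htb]; simp
        have hsplit := integral_add_compl hB ((l1_integrable z₀).abs)
        have h2 : ∫ t, |z₀ t| ∂μ = 1 := by rw [← l1_norm_eq, hz0n]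
        rw [h1]; linarith
      have htotal : ∫ t, |z₀ t - zB t| ∂μ = 2 * (1 - τ) := by
        rw [← l1_norm_sub_eq z₀ zB, dist1, comp1]
      have hsplit2 := integral_add_compl hB (((l1_integrable z₀).sub (l1_integrable zB)).abs)
      have hsplit3 : ∫ t in B, |z₀ t - zB t| ∂μ + ∫ t in Bᶜ, |z₀ t - zB t| ∂μ = 2 * (1-τ) := by
        rw [← htotal]
        convert hsplit2 using 2 <;> rfl
      linarith
  -- conclude |z₀| = |u| a.e.
  have hge : ∀ᵐ t ∂μ, |u t| ≤ |z₀ t| := by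
    set u' := (Lp.aestronglyMeasurable u).mk ⇑u with hu'_def
    set z' := (Lp.aestronglyMeasurable z₀).mk ⇑z₀ with hz'_def
    have hu'ae : ⇑u =ᵐ[μ] u' := (Lp.aestronglyMeasurable u).ae_eq_mk
    have hz'ae : ⇑z₀ =ᵐ[μ] z' := (Lp.aestronglyMeasurable z₀).ae_eq_mk
    set B₀ := {t | |z' t| < |u' t|} with hB₀_def
    have hB₀m : MeasurableSet B₀ := by
      have h1 : Measurable u' := (Lp.aestronglyMeasurable u).stronglyMeasurable_mk.measurable
      have h2 : Measurable z' := (Lp.aestronglyMeasurable z₀).stronglyMeasurable_mk.measurable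
      exact measurableSet_lt h2.abs h1.abs
    have hB₀ : μ B₀ = 0 := by
      set ν := μ.restrict B₀ with hν_def
      have hint : Integrable (fun t => |u t| - |z₀ t|) ν :=
        ((l1_integrable u).abs.sub (l1_integrable z₀).abs).integrableOn
      have hle : ∫ t, (|u t| - |z₀ t|) ∂ν ≤ 0 := by
        have h1 := f3 B₀ hB₀m
        rw [integral_sub ((l1_integrable u).abs.integrableOn)
          ((l1_integrable z₀).abs.integrableOn)]
        linarith
      have hpos : ∀ᵐ t ∂ν, 0 < |u t| - |z₀ t| := by
        filter_upwards [ae_restrict_mem hB₀m, ae_restrict_of_ae hu'ae,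
          ae_restrict_of_ae hz'ae] with t h1 h2 h3
        rw [h2, h3]
        have : |z' t| < |u' t| := h1
        linarith
      have hnn : 0 ≤ᵐ[ν] fun t => |u t| - |z₀ t| := by
        filter_upwards [hpos] with t ht; exact ht.le
      have hzero : (fun t => |u t| - |z₀ t|) =ᵐ[ν] 0 :=
        (integral_eq_zero_iff_of_nonneg_ae hnn hint).mp
          (le_antisymm hle (integral_nonneg_of_ae hnn))
      have hfalse : ∀ᵐ t ∂ν, False := by
        filter_upwards [hzero, hpos] with t h1 h2
        simp only [Pi.zero_apply] at h1
        linarith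
      have h2 : ν Set.univ = 0 := by
        have := hfalse
        rw [ae_iff] at this
        simpa using this
      rw [hν_def, Measure.restrict_apply_univ] at h2
      exact h2
    have hB₀c : ∀ᵐ t ∂μ, t ∉ B₀ := by
      rw [ae_iff]
      simpa using hB₀
    filter_upwards [hB₀c, hu'ae, hz'ae] with t h1 h2 h3
    rw [h2, h3]
    simpa [hB₀_def, not_lt] using h1
  -- equality of absolute values
  have heq : ∀ᵐ t ∂μ, |z₀ t| = |u t| := by
    have hnn : 0 ≤ᵐ[μ] fun t => |z₀ t| - |u t| := by
      filter_upwards [hge] with t ht; simpa using ht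
    have hint : Integrable (fun t => |z₀ t| - |u t|) μ :=
      (l1_integrable z₀).abs.sub (l1_integrable u).abs
    have hzero : ∫ t, (|z₀ t| - |u t|) ∂μ = 0 := by
      rw [integral_sub ((l1_integrable z₀).abs) ((l1_integrable u).abs)]
      have h1 : ∫ t, |z₀ t| ∂μ = 1 := by rw [← l1_norm_eq, hz0n]
      have h2 : ∫ t, |u t| ∂μ = 1 := by rw [← l1_norm_eq, hu]
      linarith
    have := (integral_eq_zero_iff_of_nonneg_ae hnn hint).mp hzero
    filter_upwards [this] with t ht
    simp only [Pi.zero_apply] at ht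
    linarith
  -- pointwise conclusion
  refine Lp.ext ?_
  have hcoe := Lp.coeFn_neg u
  filter_upwards [f1, heq, hcoe] with t h1 h2 h3
  rw [h3, Pi.neg_apply]
  rcases abs_eq_abs.mp h2 with h | h
  · -- z₀ t = u t, combined with z₀ t * u t ≤ 0 forces both zero
    rw [h] at h1 ⊢
    have : u t = 0 := by nlinarith
    rw [this]; ring
  · exact h

end TanAnti
section GoodSet

variable {Ω : Type*} [MeasurableSpace Ω] {μ : Measure Ω}

/-- If `g < h` a.e. on a positive-measure set `E` but `∫_E h ≤ ∫_E g`, contradiction. -/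
lemma tan_strict_contra {g h : Ω → ℝ} {E : Set Ω} (hEm : MeasurableSet E) (hE0 : 0 < μ E)
    (hgint : IntegrableOn g E μ) (hhint : IntegrableOn h E μ)
    (hlt : ∀ᵐ t ∂μ.restrict E, g t < h t)
    (hle : ∫ t in E, h t ∂μ ≤ ∫ t in E, g t ∂μ) : False := by
  have hnn : 0 ≤ᵐ[μ.restrict E] fun t => h t - g t := by
    filter_upwards [hlt] with t ht; simp only [Pi.zero_apply]; linarith
  have hint : Integrable (fun t => h t - g t) (μ.restrict E) := hhint.sub hgint
  have hzero : ∫ t in E, (h t - g t) ∂μ = 0 := by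
    refine le_antisymm ?_ (integral_nonneg_of_ae hnn)
    rw [integral_sub hhint hgint]; linarith
  have haezero := (integral_eq_zero_iff_of_nonneg_ae hnn hint).mp hzero
  have hfalse : ∀ᵐ t ∂μ.restrict E, False := by
    filter_upwards [haezero, hlt] with t h1 h2
    simp only [Pi.zero_apply] at h1; linarith
  rw [ae_iff] at hfalse
  simp only [not_false_eq_true, Set.setOf_true] at hfalse
  rw [Measure.restrict_apply_univ] at hfalse
  exact absurd hfalse (ne_of_gt hE0)

/-- On a positive-measure set we can find a positive finite-measure subset on which two given
integrable functions with `∫|·| ≤ 1` are a.e. bounded by `(μ E).toReal⁻¹`. -/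
lemma tan_good_set [SigmaFinite μ] {D : Set Ω} (hD : MeasurableSet D) (hDpos : 0 < μ D)
    (F1 F2 : Ω → ℝ) (h1 : Integrable F1 μ) (h2 : Integrable F2 μ)
    (hn1 : ∫ t, |F1 t| ∂μ ≤ 1) (hn2 : ∫ t, |F2 t| ∂μ ≤ 1) :
    ∃ E : Set Ω, MeasurableSet E ∧ E ⊆ D ∧ 0 < μ E ∧ μ E < ⊤ ∧
      (∀ᵐ t ∂μ.restrict E, |F1 t| ≤ (μ E).toReal⁻¹ ∧ |F2 t| ≤ (μ E).toReal⁻¹) := by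
  classical
  set G1 := h1.1.mk F1 with hG1_def
  set G2 := h2.1.mk F2 with hG2_def
  have hG1m : Measurable G1 := h1.1.stronglyMeasurable_mk.measurable
  have hG2m : Measurable G2 := h2.1.stronglyMeasurable_mk.measurable
  have hae1 : F1 =ᵐ[μ] G1 := h1.1.ae_eq_mk
  have hae2 : F2 =ᵐ[μ] G2 := h2.1.ae_eq_mk
  obtain ⟨n, hn⟩ : ∃ n, 0 < μ (D ∩ spanningSets μ n) := by
    by_contra hc
    push_neg at hc
    simp only [le_zero_iff] at hc
    have h3 : μ (⋃ n, D ∩ spanningSets μ n) = 0 := by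
      rw [measure_iUnion_null_iff]; exact hc
    rw [← Set.inter_iUnion, iUnion_spanningSets, Set.inter_univ] at h3
    exact absurd h3 (ne_of_gt hDpos)
  set D1 := D ∩ spanningSets μ n with hD1_def
  have hD1m : MeasurableSet D1 := hD.inter (measurableSet_spanningSets μ n)
  have hD1fin : μ D1 < ⊤ :=
    lt_of_le_of_lt (measure_mono Set.inter_subset_right) (measure_spanningSets_lt_top μ n)
  obtain ⟨M, hM⟩ : ∃ M : ℕ, 0 < μ (D1 ∩ {t | |G1 t| ≤ M ∧ |G2 t| ≤ M}) := by
    by_contra hc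
    push_neg at hc
    simp only [le_zero_iff] at hc
    have hcover : (⋃ M : ℕ, D1 ∩ {t | |G1 t| ≤ M ∧ |G2 t| ≤ M}) = D1 := by
      ext t
      simp only [Set.mem_iUnion, Set.mem_inter_iff, Set.mem_setOf_eq]
      constructor
      · rintro ⟨M, hM1, _⟩; exact hM1
      · intro ht
        obtain ⟨M, hMx⟩ := exists_nat_ge (max |G1 t| |G2 t|)
        exact ⟨M, ht, le_trans (le_max_left _ _) hMx, le_trans (le_max_right _ _) hMx⟩
    have h3 : μ (⋃ M : ℕ, D1 ∩ {t | |G1 t| ≤ M ∧ |G2 t| ≤ M}) = 0 := by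
      rw [measure_iUnion_null_iff]; exact hc
    rw [hcover] at h3
    exact absurd h3 (ne_of_gt hn)
  set K : ℝ := (M : ℝ) + 1 with hK_def
  have hK_pos : (0:ℝ) < K := by positivity
  set D2 := D1 ∩ {t | |G1 t| ≤ M ∧ |G2 t| ≤ M} with hD2_def
  have hD2m : MeasurableSet D2 := by
    refine hD1m.inter ?_
    exact (measurableSet_le hG1m.abs measurable_const).inter
      (measurableSet_le hG2m.abs measurable_const)
  have hD2fin : μ D2 < ⊤ := lt_of_le_of_lt (measure_mono Set.inter_subset_left) hD1fin
  have hD2D : D2 ⊆ D := fun t ht => ht.1.1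
  have hD2bd : ∀ t ∈ D2, |G1 t| ≤ K ∧ |G2 t| ≤ K := by
    intro t ht
    have h3 := ht.2
    simp only [Set.mem_setOf_eq] at h3
    constructor
    · calc |G1 t| ≤ (M:ℝ) := h3.1
        _ ≤ K := by rw [hK_def]; linarith
    · calc |G2 t| ≤ (M:ℝ) := h3.2
        _ ≤ K := by rw [hK_def]; linarith
  have finish : ∀ E : Set Ω, MeasurableSet E → E ⊆ D2 → 0 < μ E → μ E < ⊤ →
      (∀ᵐ t ∂μ.restrict E, |G1 t| ≤ (μ E).toReal⁻¹) →
      (∀ᵐ t ∂μ.restrict E, |G2 t| ≤ (μ E).toReal⁻¹) →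
      ∃ E : Set Ω, MeasurableSet E ∧ E ⊆ D ∧ 0 < μ E ∧ μ E < ⊤ ∧
        (∀ᵐ t ∂μ.restrict E, |F1 t| ≤ (μ E).toReal⁻¹ ∧ |F2 t| ≤ (μ E).toReal⁻¹) := by
    intro E hEm hED2 hE0 hEfin hb1 hb2
    refine ⟨E, hEm, fun t ht => hD2D (hED2 ht), hE0, hEfin, ?_⟩
    filter_upwards [hb1, hb2, ae_restrict_of_ae hae1, ae_restrict_of_ae hae2] with t k1 k2 k3 k4
    rw [k3, k4]; exact ⟨k1, k2⟩
  by_cases hex : ∃ E : Set Ω, MeasurableSet E ∧ E ⊆ D2 ∧ 0 < μ E ∧ μ E ≤ ENNReal.ofReal (1/K)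
  · obtain ⟨E, hEm, hED2, hE0, hEle⟩ := hex
    have hEfin : μ E < ⊤ := lt_of_le_of_lt hEle ENNReal.ofReal_lt_top
    have htr : (μ E).toReal ≤ 1/K := ENNReal.toReal_le_of_le_ofReal (by positivity) hEle
    have htr0 : 0 < (μ E).toReal := ENNReal.toReal_pos (ne_of_gt hE0) (ne_of_lt hEfin)
    have hKinv : K ≤ (μ E).toReal⁻¹ := by
      have h3 : 1 / (1/K) ≤ 1 / (μ E).toReal := one_div_le_one_div_of_le htr0 htr
      rwa [one_div_one_div, one_div] at h3
    refine finish E hEm hED2 hE0 hEfin ?_ ?_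
    · filter_upwards [ae_restrict_mem hEm] with t ht
      exact le_trans (hD2bd t (hED2 ht)).1 hKinv
    · filter_upwards [ae_restrict_mem hEm] with t ht
      exact le_trans (hD2bd t (hED2 ht)).2 hKinv
  · push_neg at hex
    set S : Set ENNReal := {m | ∃ E : Set Ω, MeasurableSet E ∧ E ⊆ D2 ∧ 0 < μ E ∧ μ E = m}
      with hS_def
    have hSne : (μ D2) ∈ S := ⟨D2, hD2m, le_refl _, hM, rfl⟩
    set α := sInf S with hα_def
    have hδS : ∀ m ∈ S, ENNReal.ofReal (1/K) < m := by
      rintro m ⟨E, hEm, hED2, hE0, rfl⟩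
      exact hex E hEm hED2 hE0
    have hα_pos : 0 < α := by
      have h0 : (0:ENNReal) < ENNReal.ofReal (1/K) := ENNReal.ofReal_pos.mpr (by positivity)
      exact lt_of_lt_of_le h0 (le_sInf fun m hm => (hδS m hm).le)
    have hα_fin : α < ⊤ := lt_of_le_of_lt (sInf_le hSne) hD2fin
    have h2α : α < α + α := ENNReal.lt_add_right (ne_of_lt hα_fin) (ne_of_gt hα_pos)
    obtain ⟨m, hmS, hmlt⟩ := sInf_lt_iff.mp h2α
    obtain ⟨E, hEm, hED2, hE0, hEμ⟩ := hmS
    have hEfin : μ E < ⊤ := by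
      rw [hEμ]
      exact hmlt.trans (ENNReal.add_lt_top.mpr ⟨hα_fin, hα_fin⟩)
    have hatom : ∀ F : Set Ω, MeasurableSet F → F ⊆ E → μ F = 0 ∨ μ (E \ F) = 0 := by
      intro F hFm hFE
      by_contra hc
      push_neg at hc
      obtain ⟨hF0, hEF0⟩ := hc
      have hF_S : μ F ∈ S :=
        ⟨F, hFm, subset_trans hFE hED2, pos_iff_ne_zero.mpr hF0, rfl⟩
      have hEF_S : μ (E \ F) ∈ S :=
        ⟨E \ F, hEm.diff hFm, subset_trans Set.diff_subset hED2,
          pos_iff_ne_zero.mpr hEF0, rfl⟩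
      have ha1 : α ≤ μ F := sInf_le hF_S
      have ha2 : α ≤ μ (E \ F) := sInf_le hEF_S
      have h3 : μ (E ∩ F) + μ (E \ F) = μ E := measure_inter_add_diff E hFm
      rw [Set.inter_eq_self_of_subset_right hFE] at h3
      have h4 : α + α ≤ μ E := by rw [← h3]; exact add_le_add ha1 ha2
      rw [hEμ] at h4
      exact absurd (lt_of_le_of_lt h4 hmlt) (lt_irrefl _)
    have hbound : ∀ (G F : Ω → ℝ), Measurable G → F =ᵐ[μ] G → Integrable F μ →
        (∫ t, |F t| ∂μ ≤ 1) → ∀ᵐ t ∂μ.restrict E, |G t| ≤ (μ E).toReal⁻¹ := by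
      intro G F hGm hae hint hnorm
      set c := (μ E).toReal⁻¹ with hc_def
      set Gs := E ∩ {t | c < |G t|} with hGs_def
      have hGsm : MeasurableSet Gs := hEm.inter (measurableSet_lt measurable_const hGm.abs)
      rcases hatom Gs hGsm Set.inter_subset_left with h0 | hfull
      · have hae0 : ∀ᵐ t ∂μ, t ∉ Gs := by
          rw [ae_iff]
          simpa using h0
        filter_upwards [ae_restrict_of_ae hae0, ae_restrict_mem hEm] with t h3 h4
        by_contra hc5
        push_neg at hc5
        exact h3 ⟨h4, hc5⟩
      · exfalso
        have hμG : μ Gs = μ E := by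
          have h3 : μ (E ∩ Gs) + μ (E \ Gs) = μ E := measure_inter_add_diff E hGsm
          rw [Set.inter_eq_self_of_subset_right Set.inter_subset_left, hfull, add_zero] at h3
          exact h3
        have hμG_pos : 0 < μ Gs := by rw [hμG]; exact hE0
        have hμG_fin : μ Gs < ⊤ := by rw [hμG]; exact hEfin
        have htr0 : 0 < (μ E).toReal := ENNReal.toReal_pos (ne_of_gt hE0) (ne_of_lt hEfin)
        have hc_pos : 0 < c := inv_pos.mpr htr0
        refine tan_strict_contra (g := fun _ => c) (h := fun t => |F t|) hGsm hμG_pos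
          (integrableOn_const (ne_of_lt hμG_fin)) (hint.abs.integrableOn) ?_ ?_
        · filter_upwards [ae_restrict_mem hGsm, ae_restrict_of_ae hae] with t h3 h4
          rw [h4]
          exact h3.2
        · have h5 : ∫ t in Gs, (fun _ => c) t ∂μ = c * (μ Gs).toReal := by
            rw [setIntegral_const]
            simp [mul_comm, measureReal_def]
          have h6 : ∫ t in Gs, |F t| ∂μ ≤ 1 := by
            refine le_trans (setIntegral_le_integral hint.abs ?_) hnorm
            filter_upwards with t; exact abs_nonneg _
          have h7 : c * (μ Gs).toReal = 1 := by
            rw [hμG, hc_def]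
            field_simp
          rw [h5, h7]
          exact h6
    exact finish E hEm hED2 hE0 hEfin (hbound G1 F1 hG1m hae1 h1 hn1)
      (hbound G2 F2 hG2m hae2 h2 hn2)

end GoodSet
section TanCone

variable {Ω : Type*} [MeasurableSpace Ω] {μ : Measure Ω}
variable {Y : Type*} [NormedAddCommGroup Y] [NormedSpace ℝ Y]
variable {Δ : Lp ℝ 1 μ → Y}

private lemma r_sign_pos (a b : ℝ) (hab : 0 ≤ a * b) :
    (if 0 ≤ a + b then (1:ℝ) else -1) * a = |a| := by
  split_ifs with h
  · rw [one_mul, abs_of_nonneg]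
    by_contra hc
    push_neg at hc
    have hb : b ≤ 0 := by nlinarith
    linarith
  · push_neg at h
    rw [neg_one_mul, abs_of_nonpos]
    by_contra hc
    push_neg at hc
    have hb : 0 ≤ b := by nlinarith
    linarith

private lemma r_btw (a b c : ℝ) (h : |a - b| + |b - c| = |a - c|) :
    min a c ≤ b ∧ b ≤ max a c := by
  constructor
  · by_contra hc
    push_neg at hc
    rw [lt_min_iff] at hc
    rw [abs_of_pos (by linarith [hc.1] : 0 < a - b),
      abs_of_neg (by linarith [hc.2] : b - c < 0)] at h
    rcases abs_cases (a - c) with ⟨h3, _⟩ | ⟨h3, _⟩ <;> linarith [hc.1, hc.2]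
  · by_contra hc
    push_neg at hc
    rw [max_lt_iff] at hc
    rw [abs_of_neg (by linarith [hc.1] : a - b < 0),
      abs_of_pos (by linarith [hc.2] : 0 < b - c)] at h
    rcases abs_cases (a - c) with ⟨h3, _⟩ | ⟨h3, _⟩ <;> linarith [hc.1, hc.2]

private lemma r_btw_sign (s a b c : ℝ) (hs : s = 1 ∨ s = -1)
    (h : |a - b| + |b - c| = |a - c|) (ha : s * a = |a|) (hc : s * c = |c|) :
    s * b = |b| ∧ |b| ≤ max |a| |c| := by
  obtain ⟨h1, h2⟩ := r_btw a b c h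
  rcases hs with hs | hs
  · subst hs
    rw [one_mul] at ha hc ⊢
    have ha' : 0 ≤ a := by rw [ha]; exact abs_nonneg _
    have hc' : 0 ≤ c := by rw [hc]; exact abs_nonneg _
    have hb' : 0 ≤ b := le_trans (le_min ha' hc') h1
    rw [abs_of_nonneg hb']
    exact ⟨rfl, by rw [← ha, ← hc]; exact h2⟩
  · subst hs
    have ha' : a ≤ 0 := by nlinarith [abs_nonneg a]
    have hc' : c ≤ 0 := by nlinarith [abs_nonneg c]
    have hb' : b ≤ 0 := le_trans h2 (max_le ha' hc')
    rw [neg_one_mul, abs_of_nonpos hb']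
    refine ⟨rfl, ?_⟩
    rw [abs_of_nonpos ha', abs_of_nonpos hc']
    rcases le_total a c with h4 | h4
    · rw [min_eq_left h4] at h1
      exact le_trans (by linarith) (le_max_left (-a) (-c))
    · rw [min_eq_right h4] at h1
      exact le_trans (by linarith) (le_max_right (-a) (-c))

/-- Cone additivity : `Δ` is affine on a.e.-same-sign unit vectors. -/
lemma tan_cone_add [SigmaFinite μ] (hmap : ∀ f : Lp ℝ 1 μ, ‖f‖ = 1 → ‖Δ f‖ = 1)
    (hsurj : ∀ y : Y, ‖y‖ = 1 → ∃ f : Lp ℝ 1 μ, ‖f‖ = 1 ∧ Δ f = y)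
    (hiso : ∀ f g : Lp ℝ 1 μ, ‖f‖ = 1 → ‖g‖ = 1 → ‖Δ f - Δ g‖ = ‖f - g‖)
    (x w : Lp ℝ 1 μ) (hx : ‖x‖ = 1) (hw : ‖w‖ = 1)
    (hxw : ∀ᵐ t ∂μ, 0 ≤ x t * w t) (lam : ℝ) (hl0 : 0 < lam) (hl1 : lam < 1) :
    Δ (lam • x + (1-lam) • w) = lam • Δ x + (1-lam) • Δ w := by
  classical
  have key2 : ‖Δ x + Δ w‖ = 2 := tan_key hmap hsurj hiso x w hx hw hxw
  have hne : Δ x + Δ w ≠ 0 := by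
    intro h; rw [h, norm_zero] at key2; norm_num at key2
  obtain ⟨g, hg1, hg2⟩ := exists_dual_vector ℝ (Δ x + Δ w) (norm_ne_zero_iff.mpr hne)
  have hsum : g (Δ x) + g (Δ w) = 2 := by
    have h3 := hg2
    rw [key2, map_add] at h3
    exact_mod_cast h3
  have hx1 : g (Δ x) ≤ 1 := by
    have h3 := g.le_opNorm (Δ x)
    rw [hg1, hmap x hx, one_mul, Real.norm_eq_abs] at h3
    linarith [le_abs_self (g (Δ x))]
  have hw1 : g (Δ w) ≤ 1 := by
    have h3 := g.le_opNorm (Δ w)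
    rw [hg1, hmap w hw, one_mul, Real.norm_eq_abs] at h3
    linarith [le_abs_self (g (Δ w))]
  have hgx : g (Δ x) = 1 := by linarith
  have hgw : g (Δ w) = 1 := by linarith
  set Sl := lam • Δ x + (1-lam) • Δ w with hSl_def
  have hSl_norm : ‖Sl‖ = 1 := by
    have hle : ‖Sl‖ ≤ 1 := by
      calc ‖Sl‖ ≤ ‖lam • Δ x‖ + ‖(1-lam) • Δ w‖ := norm_add_le _ _
        _ = 1 := by
            rw [norm_smul, norm_smul, hmap x hx, hmap w hw, Real.norm_eq_abs,
              Real.norm_eq_abs, abs_of_pos hl0, abs_of_pos (by linarith : (0:ℝ) < 1 - lam)]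
            ring
    have hge : (1:ℝ) ≤ ‖Sl‖ := by
      have h3 : g Sl = 1 := by
        rw [hSl_def, map_add, _root_.map_smul, _root_.map_smul, hgx, hgw, smul_eq_mul, smul_eq_mul]
        ring
      have h4 := g.le_opNorm Sl
      rw [hg1, one_mul, Real.norm_eq_abs] at h4
      calc (1:ℝ) = g Sl := h3.symm
        _ ≤ |g Sl| := le_abs_self _
        _ ≤ ‖Sl‖ := h4
    linarith
  obtain ⟨v'', hv2n, hv2Δ⟩ := hsurj Sl hSl_norm
  set v := lam • x + (1-lam) • w with hv_def
  have hv_coe : ∀ᵐ t ∂μ, v t = lam * x t + (1-lam) * w t := by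
    filter_upwards [Lp.coeFn_add (lam•x) ((1-lam)•w), Lp.coeFn_smul lam x,
      Lp.coeFn_smul (1-lam) w] with t h1 h2 h3
    rw [hv_def, h1, Pi.add_apply, h2, h3]; rfl
  have hv_norm : ‖v‖ = 1 := norm_combo_eq_one x w hx hw hxw lam hl0.le hl1.le
  suffices hfin : v'' = v by rw [← hfin, hv2Δ]
  have hrho : ‖Δ x - Δ w‖ = ‖x - w‖ := hiso x w hx hw
  have n1 : ‖x - v''‖ = (1-lam) * ‖x - w‖ := by
    have h3 := hiso x v'' hx hv2n
    rw [hv2Δ] at h3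
    have h4 : Δ x - Sl = (1-lam) • (Δ x - Δ w) := by rw [hSl_def]; module
    rw [h4, norm_smul, Real.norm_eq_abs, abs_of_pos (by linarith : (0:ℝ) < 1 - lam), hrho] at h3
    exact h3.symm
  have n2 : ‖v'' - w‖ = lam * ‖x - w‖ := by
    have h3 := hiso v'' w hv2n hw
    rw [hv2Δ] at h3
    have h4 : Sl - Δ w = lam • (Δ x - Δ w) := by rw [hSl_def]; module
    rw [h4, norm_smul, Real.norm_eq_abs, abs_of_pos hl0, hrho] at h3
    exact h3.symm
  -- a.e. betweenness
  have hbet : ∀ᵐ t ∂μ, |x t - v'' t| + |v'' t - w t| = |x t - w t| := by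
    have i1 : Integrable (fun t => |x t - v'' t|) μ :=
      ((l1_integrable x).sub (l1_integrable v'')).abs
    have i2 : Integrable (fun t => |v'' t - w t|) μ :=
      ((l1_integrable v'').sub (l1_integrable w)).abs
    have i3 : Integrable (fun t => |x t - w t|) μ :=
      ((l1_integrable x).sub (l1_integrable w)).abs
    have hnn : 0 ≤ᵐ[μ] fun t => |x t - v'' t| + |v'' t - w t| - |x t - w t| := by
      filter_upwards with t
      simp only [Pi.zero_apply]
      have := abs_sub_le (x t) (v'' t) (w t)
      linarith
    have i12 : Integrable (fun t => |x t - v'' t| + |v'' t - w t|) μ := i1.add i2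
    have hzero : ∫ t, (|x t - v'' t| + |v'' t - w t| - |x t - w t|) ∂μ = 0 := by
      rw [integral_sub i12 i3, integral_add i1 i2]
      have e1 : ∫ t, |x t - v'' t| ∂μ = (1-lam) * ‖x - w‖ := by
        rw [← l1_norm_sub_eq, n1]
      have e2 : ∫ t, |v'' t - w t| ∂μ = lam * ‖x - w‖ := by
        rw [← l1_norm_sub_eq, n2]
      have e3 : ∫ t, |x t - w t| ∂μ = ‖x - w‖ := (l1_norm_sub_eq x w).symm
      rw [e1, e2, e3]; ring
    have := (integral_eq_zero_iff_of_nonneg_ae hnn (i12.sub i3)).mp hzero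
    filter_upwards [this] with t ht
    simp only [Pi.zero_apply] at ht
    linarith
  -- sign pattern
  set x' := (Lp.aestronglyMeasurable x).mk ⇑x with hx'_def
  set w' := (Lp.aestronglyMeasurable w).mk ⇑w with hw'_def
  have hx'm : Measurable x' := (Lp.aestronglyMeasurable x).stronglyMeasurable_mk.measurable
  have hw'm : Measurable w' := (Lp.aestronglyMeasurable w).stronglyMeasurable_mk.measurable
  have hx'ae : ⇑x =ᵐ[μ] x' := (Lp.aestronglyMeasurable x).ae_eq_mk
  have hw'ae : ⇑w =ᵐ[μ] w' := (Lp.aestronglyMeasurable w).ae_eq_mk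
  set s : Ω → ℝ := fun t => if 0 ≤ x' t + w' t then 1 else -1 with hs_def
  have hs_pm : ∀ t, s t = 1 ∨ s t = -1 := by
    intro t
    by_cases h : 0 ≤ x' t + w' t
    · left; simp [hs_def, h]
    · right; simp [hs_def, h]
  have hs_meas : Measurable s := by
    refine Measurable.ite ?_ measurable_const measurable_const
    exact measurableSet_le measurable_const (hx'm.add hw'm)
  have hsx : ∀ᵐ t ∂μ, s t * x t = |x t| := by
    filter_upwards [hxw, hx'ae, hw'ae] with t hab h2 h3
    rw [hs_def]
    simp only
    rw [← h2, ← h3]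
    exact r_sign_pos (x t) (w t) hab
  have hsw : ∀ᵐ t ∂μ, s t * w t = |w t| := by
    filter_upwards [hxw, hx'ae, hw'ae] with t hab h2 h3
    rw [hs_def]
    simp only
    rw [← h2, ← h3]
    have h4 : (if 0 ≤ x t + w t then (1:ℝ) else -1) * w t = |w t| := by
      have h5 := r_sign_pos (w t) (x t) (by linarith [mul_comm (x t) (w t)] )
      rw [add_comm (w t) (x t)] at h5
      exact h5
    exact h4
  have hsv : ∀ᵐ t ∂μ, s t * v t = |v t| ∧ |v t| = lam * |x t| + (1-lam) * |w t| := by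
    filter_upwards [hv_coe, hsx, hsw, hxw] with t h1 h2 h3 h4
    have habs : |v t| = lam * |x t| + (1-lam) * |w t| := by
      rw [h1]; exact r_abs_convex (x t) (w t) lam h4 hl0.le hl1.le
    refine ⟨?_, habs⟩
    rw [h1, r_abs_convex (x t) (w t) lam h4 hl0.le hl1.le]
    calc s t * (lam * x t + (1-lam) * w t)
        = lam * (s t * x t) + (1-lam) * (s t * w t) := by ring
      _ = lam * |x t| + (1-lam) * |w t| := by rw [h2, h3]
  have hsv2 : ∀ᵐ t ∂μ, s t * v'' t = |v'' t| ∧ |v'' t| ≤ max |x t| |w t| := by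
    filter_upwards [hbet, hsx, hsw] with t h1 h2 h3
    exact r_btw_sign (s t) (x t) (v'' t) (w t) (hs_pm t) h1 h2 h3
  -- mass comparison
  have hmass : ∀ᵐ t ∂μ, |v t| ≤ |v'' t| := by
    set v1' := (Lp.aestronglyMeasurable v).mk ⇑v with hv1'_def
    set v2' := (Lp.aestronglyMeasurable v'').mk ⇑v'' with hv2'_def
    have hv1'm : Measurable v1' := (Lp.aestronglyMeasurable v).stronglyMeasurable_mk.measurable
    have hv2'm : Measurable v2' := (Lp.aestronglyMeasurable v'').stronglyMeasurable_mk.measurable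
    have hv1'ae : ⇑v =ᵐ[μ] v1' := (Lp.aestronglyMeasurable v).ae_eq_mk
    have hv2'ae : ⇑v'' =ᵐ[μ] v2' := (Lp.aestronglyMeasurable v'').ae_eq_mk
    set D := {t | |v2' t| < |v1' t|} with hD_def
    have hDm : MeasurableSet D := measurableSet_lt hv2'm.abs hv1'm.abs
    by_cases hD0 : μ D = 0
    · have hDc : ∀ᵐ t ∂μ, t ∉ D := by
        rw [ae_iff]; simpa using hD0
      filter_upwards [hDc, hv1'ae, hv2'ae] with t h1 h2 h3
      rw [h2, h3]
      simpa [hD_def, not_lt] using h1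
    · exfalso
      have hDpos : 0 < μ D := pos_iff_ne_zero.mpr hD0
      obtain ⟨E, hEm, hED, hE0, hEfin, hEbd⟩ := tan_good_set hDm hDpos (⇑x) (⇑w)
        (l1_integrable x) (l1_integrable w)
        (le_of_eq (by rw [← l1_norm_eq, hx]))
        (le_of_eq (by rw [← l1_norm_eq, hw]))
      set q := (μ E).toReal⁻¹ with hq_def
      have hc_pos : 0 < (μ E).toReal := ENNReal.toReal_pos (ne_of_gt hE0) (ne_of_lt hEfin)
      have hq_pos : 0 < q := inv_pos.mpr hc_pos
      have hsE_int : Integrable (E.indicator s) μ := by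
        rw [integrable_indicator_iff hEm]
        refine Measure.integrableOn_of_bounded (M := 1) (ne_of_lt hEfin)
          hs_meas.aestronglyMeasurable ?_
        filter_upwards with t
        rcases hs_pm t with h | h <;> rw [h] <;> simp
      set yE := q • (Integrable.toL1 _ hsE_int) with hyE_def
      have hyE_coe : ∀ᵐ t ∂μ, yE t = q * E.indicator s t := by
        filter_upwards [Lp.coeFn_smul q (Integrable.toL1 _ hsE_int),
          Integrable.coeFn_toL1 hsE_int] with t h1 h2
        rw [hyE_def, h1, Pi.smul_apply, h2]; rfl
      have hyE_norm : ‖yE‖ = 1 := by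
        rw [l1_norm_eq]
        have h1 : ∫ t, |yE t| ∂μ = ∫ t, q * E.indicator (fun _ => (1:ℝ)) t ∂μ := by
          refine integral_congr_ae ?_
          filter_upwards [hyE_coe] with t ht
          rw [ht]
          by_cases h : t ∈ E
          · rw [Set.indicator_of_mem h, Set.indicator_of_mem h, abs_mul,
              abs_of_pos hq_pos, mul_one]
            rcases hs_pm t with h2 | h2 <;> rw [h2] <;> norm_num
          · rw [Set.indicator_of_notMem h, Set.indicator_of_notMem h]
            simp
        rw [h1, integral_const_mul, integral_indicator hEm, setIntegral_const, measureReal_def, smul_eq_mul,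
          mul_one, hq_def, inv_mul_cancel₀ (ne_of_gt hc_pos)]
      -- bounds
      have hbx : ∀ᵐ t ∂μ.restrict E, |x t| ≤ q := by
        filter_upwards [hEbd] with t ht; exact ht.1
      have hbw : ∀ᵐ t ∂μ.restrict E, |w t| ≤ q := by
        filter_upwards [hEbd] with t ht; exact ht.2
      have hbv2 : ∀ᵐ t ∂μ.restrict E, |v'' t| ≤ q := by
        filter_upwards [hEbd, ae_restrict_of_ae hsv2] with t h1 h2
        exact le_trans h2.2 (max_le h1.1 h1.2)
      -- distance computation
      have comp : ∀ f : Lp ℝ 1 μ, ‖f‖ = 1 → (∀ᵐ t ∂μ.restrict E, |f t| ≤ q) →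
          (∀ᵐ t ∂μ, s t * f t = |f t|) →
          ‖f - yE‖ = 2 - 2 * ∫ t in E, |f t| ∂μ := by
        intro f hfn hfb hsf
        rw [l1_norm_sub_eq]
        have hsplit := integral_add_compl hEm (((l1_integrable f).sub (l1_integrable yE)).abs)
        have hfb' : ∀ᵐ t ∂μ, t ∈ E → |f t| ≤ q := (ae_restrict_iff' hEm).mp hfb
        have hE1 : ∫ t in E, |f t - yE t| ∂μ = ∫ t in E, (q - |f t|) ∂μ := by
          refine setIntegral_congr_ae hEm ?_
          filter_upwards [hfb', hyE_coe, hsf] with t h1 h2 h3 htE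
          rw [h2, Set.indicator_of_mem htE]
          have hq1 : |f t| ≤ q := h1 htE
          rcases hs_pm t with h4 | h4 <;> rw [h4] at h3
          · rw [one_mul] at h3
            rw [h4, mul_one]
            have h5 : f t - q ≤ 0 := by linarith [le_abs_self (f t)]
            rw [abs_of_nonpos h5, ← h3]
            ring
          · rw [neg_one_mul] at h3
            rw [h4, mul_neg_one, sub_neg_eq_add]
            have h6 : f t = -|f t| := by linarith
            have h7 : (0:ℝ) ≤ -|f t| + q := by linarith
            rw [h6, abs_of_nonneg h7, abs_neg, abs_abs]
            ring
        have hE2 : ∫ t in E, (q - |f t|) ∂μ = 1 - ∫ t in E, |f t| ∂μ := by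
          rw [integral_sub (integrableOn_const (C := q) (ne_of_lt hEfin))
            ((l1_integrable f).abs.integrableOn), setIntegral_const, measureReal_def, smul_eq_mul,
            hq_def, mul_inv_cancel₀ (ne_of_gt hc_pos)]
        have hE3 : ∫ t in Eᶜ, |f t - yE t| ∂μ = ∫ t in Eᶜ, |f t| ∂μ := by
          refine setIntegral_congr_ae hEm.compl ?_
          filter_upwards [hyE_coe] with t ht htE
          rw [ht, Set.indicator_of_notMem htE]
          simp
        have hE4 : ∫ t in Eᶜ, |f t| ∂μ = 1 - ∫ t in E, |f t| ∂μ := by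
          have h5 := integral_add_compl hEm ((l1_integrable f).abs)
          have h6 : ∫ t, |f t| ∂μ = 1 := by rw [← l1_norm_eq, hfn]
          rw [h6] at h5
          linarith
        have h7 : ∫ t, |f t - yE t| ∂μ
            = ∫ t in E, |f t - yE t| ∂μ + ∫ t in Eᶜ, |f t - yE t| ∂μ := hsplit.symm
        rw [h7, hE1, hE2, hE3, hE4]
        ring
      have hcx := comp x hx hbx hsx
      have hcw := comp w hw hbw hsw
      have hcv := comp v'' hv2n hbv2 (by filter_upwards [hsv2] with t ht; exact ht.1)
      have cineq : ‖v'' - yE‖ ≤ lam * ‖x - yE‖ + (1-lam) * ‖w - yE‖ := by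
        have h3 := hiso v'' yE hv2n hyE_norm
        rw [hv2Δ] at h3
        have h4 : Sl - Δ yE = lam • (Δ x - Δ yE) + (1-lam) • (Δ w - Δ yE) := by
          rw [hSl_def]; module
        calc ‖v'' - yE‖ = ‖Sl - Δ yE‖ := h3.symm
          _ ≤ ‖lam • (Δ x - Δ yE)‖ + ‖(1-lam) • (Δ w - Δ yE)‖ := by
              rw [h4]; exact norm_add_le _ _
          _ = lam * ‖Δ x - Δ yE‖ + (1-lam) * ‖Δ w - Δ yE‖ := by
              rw [norm_smul, norm_smul, Real.norm_eq_abs, Real.norm_eq_abs,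
                abs_of_pos hl0, abs_of_pos (by linarith : (0:ℝ) < 1 - lam)]
          _ = lam * ‖x - yE‖ + (1-lam) * ‖w - yE‖ := by
              rw [hiso x yE hx hyE_norm, hiso w yE hw hyE_norm]
      rw [hcx, hcw, hcv] at cineq
      have hIv : ∫ t in E, |v t| ∂μ
          = lam * ∫ t in E, |x t| ∂μ + (1-lam) * ∫ t in E, |w t| ∂μ := by
        rw [← integral_const_mul, ← integral_const_mul,
          ← integral_add (((l1_integrable x).abs.integrableOn).const_mul lam)
            (((l1_integrable w).abs.integrableOn).const_mul (1-lam))]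
        refine setIntegral_congr_ae hEm ?_
        filter_upwards [hsv] with t ht _
        exact ht.2
      have hfinal : ∫ t in E, |v t| ∂μ ≤ ∫ t in E, |v'' t| ∂μ := by
        rw [hIv]; linarith
      refine tan_strict_contra (g := fun t => |v'' t|) (h := fun t => |v t|) hEm hE0
        ((l1_integrable v'').abs.integrableOn) ((l1_integrable v).abs.integrableOn)
        ?_ hfinal
      filter_upwards [ae_restrict_mem hEm, ae_restrict_of_ae hv1'ae,
        ae_restrict_of_ae hv2'ae] with t h1 h2 h3
      have h4 : t ∈ D := hED h1
      rw [hD_def] at h4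
      simp only [Set.mem_setOf_eq] at h4
      rw [h2, h3]
      exact h4
  -- |v''| = |v| a.e.
  have heq : ∀ᵐ t ∂μ, |v'' t| = |v t| := by
    have hnn : 0 ≤ᵐ[μ] fun t => |v'' t| - |v t| := by
      filter_upwards [hmass] with t ht; simpa using ht
    have hint : Integrable (fun t => |v'' t| - |v t|) μ :=
      (l1_integrable v'').abs.sub (l1_integrable v).abs
    have hzero : ∫ t, (|v'' t| - |v t|) ∂μ = 0 := by
      rw [integral_sub ((l1_integrable v'').abs) ((l1_integrable v).abs)]
      have h1 : ∫ t, |v'' t| ∂μ = 1 := by rw [← l1_norm_eq, hv2n]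
      have h2 : ∫ t, |v t| ∂μ = 1 := by rw [← l1_norm_eq, hv_norm]
      linarith
    have := (integral_eq_zero_iff_of_nonneg_ae hnn hint).mp hzero
    filter_upwards [this] with t ht
    simp only [Pi.zero_apply] at ht
    linarith
  refine Lp.ext ?_
  filter_upwards [heq, hsv, hsv2] with t h1 h2 h3
  have h4 : s t * v'' t = s t * v t := by rw [h3.1, h1, ← h2.1]
  have h5 : s t ≠ 0 := by rcases hs_pm t with h | h <;> rw [h] <;> norm_num
  exact mul_left_cancel₀ h5 h4

end TanCone
section TanExt

variable {Ω : Type*} [MeasurableSpace Ω] {μ : Measure Ω}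
variable {Y : Type*} [NormedAddCommGroup Y] [NormedSpace ℝ Y]

open scoped Classical in
/-- Positively homogeneous extension of a unit-sphere map. -/
noncomputable def tanExt (Δ : Lp ℝ 1 μ → Y) (f : Lp ℝ 1 μ) : Y :=
  if f = 0 then 0 else ‖f‖ • Δ (‖f‖⁻¹ • f)

variable {Δ : Lp ℝ 1 μ → Y}

lemma tanExt_zero : tanExt Δ (0 : Lp ℝ 1 μ) = 0 := by simp [tanExt]

lemma unit_smul_norm (f : Lp ℝ 1 μ) (hf : f ≠ 0) : ‖(‖f‖⁻¹ • f : Lp ℝ 1 μ)‖ = 1 := by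
  have h0 : ‖f‖ ≠ 0 := norm_ne_zero_iff.mpr hf
  rw [norm_smul, Real.norm_eq_abs, abs_of_pos (inv_pos.mpr (norm_pos_iff.mpr hf)),
    inv_mul_cancel₀ h0]

lemma tanExt_sphere (f : Lp ℝ 1 μ) (hf : ‖f‖ = 1) : tanExt Δ f = Δ f := by
  have h0 : f ≠ 0 := by intro h; rw [h, norm_zero] at hf; norm_num at hf
  simp only [tanExt]
  rw [if_neg h0, hf]
  norm_num

lemma tanExt_norm (hmap : ∀ f : Lp ℝ 1 μ, ‖f‖ = 1 → ‖Δ f‖ = 1) (f : Lp ℝ 1 μ) :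
    ‖tanExt Δ f‖ = ‖f‖ := by
  by_cases h0 : f = 0
  · rw [h0, tanExt_zero, norm_zero, norm_zero]
  · simp only [tanExt]
    rw [if_neg h0, norm_smul, Real.norm_eq_abs,
      abs_of_pos (norm_pos_iff.mpr h0), hmap _ (unit_smul_norm f h0), mul_one]

lemma tanExt_smul_pos (f : Lp ℝ 1 μ) (c : ℝ) (hc : 0 < c) :
    tanExt Δ (c • f) = c • tanExt Δ f := by
  by_cases h0 : f = 0
  · rw [h0, smul_zero, tanExt_zero, smul_zero]
  · have h1 : c • f ≠ 0 := smul_ne_zero (ne_of_gt hc) h0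
    have h2 : ‖c • f‖ = c * ‖f‖ := by
      rw [norm_smul, Real.norm_eq_abs, abs_of_pos hc]
    have hcne : c ≠ 0 := ne_of_gt hc
    have hfne : ‖f‖ ≠ 0 := norm_ne_zero_iff.mpr h0
    have h3 : ‖c • f‖⁻¹ • (c • f) = ‖f‖⁻¹ • f := by
      rw [h2, smul_smul]
      congr 1
      field_simp
    simp only [tanExt]
    rw [if_neg h1, h3, if_neg h0, h2, smul_smul]

lemma tanExt_neg [SigmaFinite μ] (hmap : ∀ f : Lp ℝ 1 μ, ‖f‖ = 1 → ‖Δ f‖ = 1)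
    (hsurj : ∀ y : Y, ‖y‖ = 1 → ∃ f : Lp ℝ 1 μ, ‖f‖ = 1 ∧ Δ f = y)
    (hiso : ∀ f g : Lp ℝ 1 μ, ‖f‖ = 1 → ‖g‖ = 1 → ‖Δ f - Δ g‖ = ‖f - g‖)
    (f : Lp ℝ 1 μ) : tanExt Δ (-f) = -tanExt Δ f := by
  by_cases h0 : f = 0
  · rw [h0, neg_zero, tanExt_zero, neg_zero]
  · have h1 : -f ≠ 0 := neg_ne_zero.mpr h0
    have h2 : ‖-f‖ = ‖f‖ := norm_neg f
    have h3 : ‖-f‖⁻¹ • (-f) = -(‖f‖⁻¹ • f) := by rw [h2, smul_neg]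
    simp only [tanExt]
    rw [if_neg h1, h3,
      tan_antipodal hmap hsurj hiso _ (unit_smul_norm f h0), h2, if_neg h0, smul_neg]

lemma tanExt_add_same [SigmaFinite μ] (hmap : ∀ f : Lp ℝ 1 μ, ‖f‖ = 1 → ‖Δ f‖ = 1)
    (hsurj : ∀ y : Y, ‖y‖ = 1 → ∃ f : Lp ℝ 1 μ, ‖f‖ = 1 ∧ Δ f = y)
    (hiso : ∀ f g : Lp ℝ 1 μ, ‖f‖ = 1 → ‖g‖ = 1 → ‖Δ f - Δ g‖ = ‖f - g‖)
    (f g : Lp ℝ 1 μ) (hfg : ∀ᵐ t ∂μ, 0 ≤ f t * g t) :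
    tanExt Δ (f + g) = tanExt Δ f + tanExt Δ g := by
  by_cases hf0 : f = 0
  · rw [hf0, zero_add, tanExt_zero, zero_add]
  by_cases hg0 : g = 0
  · rw [hg0, add_zero, tanExt_zero, add_zero]
  set a := ‖f‖ with ha_def
  set b := ‖g‖ with hb_def
  have ha : 0 < a := norm_pos_iff.mpr hf0
  have hb : 0 < b := norm_pos_iff.mpr hg0
  have hab : 0 < a + b := by linarith
  set x : Lp ℝ 1 μ := a⁻¹ • f with hx_def
  set w : Lp ℝ 1 μ := b⁻¹ • g with hw_def
  have hxn : ‖x‖ = 1 := unit_smul_norm f hf0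
  have hwn : ‖w‖ = 1 := unit_smul_norm g hg0
  have hxw : ∀ᵐ t ∂μ, 0 ≤ x t * w t := by
    filter_upwards [Lp.coeFn_smul a⁻¹ f, Lp.coeFn_smul b⁻¹ g, hfg] with t h1 h2 h3
    rw [hx_def, hw_def, h1, h2, Pi.smul_apply, Pi.smul_apply, smul_eq_mul, smul_eq_mul]
    have h4 : a⁻¹ * f t * (b⁻¹ * g t) = (a⁻¹ * b⁻¹) * (f t * g t) := by ring
    rw [h4]
    positivity
  set lam := a / (a + b) with hlam_def
  have hl0 : 0 < lam := div_pos ha hab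
  have hl1 : lam < 1 := by
    rw [hlam_def, div_lt_one hab]; linarith
  have hlam1 : 1 - lam = b / (a + b) := by
    rw [hlam_def]; field_simp; try ring
  have hcone := tan_cone_add hmap hsurj hiso x w hxn hwn hxw lam hl0 hl1
  have ha' : a ≠ 0 := ne_of_gt ha
  have hb' : b ≠ 0 := ne_of_gt hb
  have hab' : a + b ≠ 0 := ne_of_gt hab
  have s1 : lam * a⁻¹ = (a+b)⁻¹ := by
    rw [hlam_def]; field_simp; try ring
  have s2 : (1-lam) * b⁻¹ = (a+b)⁻¹ := by
    rw [hlam1]; field_simp; try ring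
  have hcomb : lam • x + (1-lam) • w = (a+b)⁻¹ • (f + g) := by
    rw [hx_def, hw_def, smul_smul, smul_smul, s1, s2, smul_add]
  have hnorm_sum : ‖f + g‖ = a + b := by
    rw [norm_add_of_same_sign f g hfg]
  have hsum0 : f + g ≠ 0 := by
    intro h
    rw [h, norm_zero] at hnorm_sum
    linarith
  have s3 : (a+b) * lam = a := by
    rw [hlam_def]; field_simp; try ring
  have s4 : (a+b) * (1-lam) = b := by
    rw [hlam1]; field_simp; try ring
  simp only [tanExt]
  rw [if_neg hsum0, hnorm_sum, if_neg hf0, if_neg hg0,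
    ← ha_def, ← hb_def, ← hcomb, hcone, smul_add, smul_smul, smul_smul, s3, s4]

private lemma r_parts (p q : ℝ) :
    max (p+q) 0 + (max (-p) 0 + max (-q) 0) = max (-(p+q)) 0 + (max p 0 + max q 0) := by
  rcases le_total p 0 with hp | hp <;> rcases le_total q 0 with hq | hq <;>
    rcases le_total (p+q) 0 with hpq | hpq <;>
    simp only [max_def] <;> split_ifs <;> linarith

lemma tanExt_add [SigmaFinite μ] (hmap : ∀ f : Lp ℝ 1 μ, ‖f‖ = 1 → ‖Δ f‖ = 1)
    (hsurj : ∀ y : Y, ‖y‖ = 1 → ∃ f : Lp ℝ 1 μ, ‖f‖ = 1 ∧ Δ f = y)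
    (hiso : ∀ f g : Lp ℝ 1 μ, ‖f‖ = 1 → ‖g‖ = 1 → ‖Δ f - Δ g‖ = ‖f - g‖)
    (f g : Lp ℝ 1 μ) : tanExt Δ (f + g) = tanExt Δ f + tanExt Δ g := by
  classical
  set T := tanExt Δ with hT_def
  have hPnn : ∀ h : Lp ℝ 1 μ, ∀ᵐ t ∂μ, 0 ≤ (Lp.posPart h) t := by
    intro h
    filter_upwards [Lp.coeFn_posPart h] with t ht
    rw [ht]; exact le_max_right _ _
  have hNnn : ∀ h : Lp ℝ 1 μ, ∀ᵐ t ∂μ, 0 ≤ (Lp.negPart h) t := by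
    intro h
    filter_upwards [Lp.coeFn_negPart_eq_max h] with t ht
    rw [ht]; exact le_max_right _ _
  -- additivity on nonneg pairs
  have hadd_nn : ∀ p q : Lp ℝ 1 μ, (∀ᵐ t ∂μ, 0 ≤ p t) → (∀ᵐ t ∂μ, 0 ≤ q t) →
      T (p + q) = T p + T q := by
    intro p q hp hq
    refine tanExt_add_same hmap hsurj hiso p q ?_
    filter_upwards [hp, hq] with t h1 h2
    positivity
  have hsum_nn : ∀ p q : Lp ℝ 1 μ, (∀ᵐ t ∂μ, 0 ≤ p t) → (∀ᵐ t ∂μ, 0 ≤ q t) →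
      (∀ᵐ t ∂μ, 0 ≤ (p + q) t) := by
    intro p q hp hq
    filter_upwards [hp, hq, Lp.coeFn_add p q] with t h1 h2 h3
    rw [h3, Pi.add_apply]; linarith
  -- T h = T (posPart h) - T (negPart h)
  have hTsplit : ∀ h : Lp ℝ 1 μ, T h = T (Lp.posPart h) - T (Lp.negPart h) := by
    intro h
    have hdecomp : h = Lp.posPart h + (-(Lp.negPart h)) := by
      refine Lp.ext ?_
      filter_upwards [Lp.coeFn_posPart h, Lp.coeFn_negPart_eq_max h,
        Lp.coeFn_add (Lp.posPart h) (-(Lp.negPart h)), Lp.coeFn_neg (Lp.negPart h)]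
        with t h1 h2 h3 h4
      rw [h3, Pi.add_apply, h4, Pi.neg_apply, h1, h2]
      rcases le_total (h t) 0 with h5 | h5
      · rw [max_eq_right h5, max_eq_left (by linarith : 0 ≤ -h t)]; ring
      · rw [max_eq_left h5, max_eq_right (by linarith : -h t ≤ 0)]; ring
    have hopp : ∀ᵐ t ∂μ, 0 ≤ (Lp.posPart h) t * (-(Lp.negPart h)) t := by
      filter_upwards [Lp.coeFn_posPart h, Lp.coeFn_negPart_eq_max h,
        Lp.coeFn_neg (Lp.negPart h)] with t h1 h2 h3
      rw [h3, Pi.neg_apply, h1, h2]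
      rcases le_total (h t) 0 with h5 | h5
      · rw [max_eq_right h5]; simp
      · rw [max_eq_right (by linarith : -h t ≤ 0)]; simp
    calc T h = T (Lp.posPart h + (-(Lp.negPart h))) := by rw [← hdecomp]
      _ = T (Lp.posPart h) + T (-(Lp.negPart h)) :=
          tanExt_add_same hmap hsurj hiso _ _ hopp
      _ = T (Lp.posPart h) - T (Lp.negPart h) := by
          have h9 : T (-Lp.negPart h) = -T (Lp.negPart h) := tanExt_neg hmap hsurj hiso _
          rw [h9]; abel
  -- the key identity
  have hkey : Lp.posPart (f+g) + (Lp.negPart f + Lp.negPart g)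
      = Lp.negPart (f+g) + (Lp.posPart f + Lp.posPart g) := by
    refine Lp.ext ?_
    filter_upwards [Lp.coeFn_posPart (f+g), Lp.coeFn_negPart_eq_max (f+g),
      Lp.coeFn_posPart f, Lp.coeFn_negPart_eq_max f, Lp.coeFn_posPart g,
      Lp.coeFn_negPart_eq_max g, Lp.coeFn_add f g,
      Lp.coeFn_add (Lp.posPart (f+g)) (Lp.negPart f + Lp.negPart g),
      Lp.coeFn_add (Lp.negPart (f+g)) (Lp.posPart f + Lp.posPart g),
      Lp.coeFn_add (Lp.negPart f) (Lp.negPart g),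
      Lp.coeFn_add (Lp.posPart f) (Lp.posPart g)]
      with t e1 e2 e3 e4 e5 e6 e7 e8 e9 e10 e11
    rw [e8, e9, Pi.add_apply, Pi.add_apply, e10, e11, Pi.add_apply, Pi.add_apply,
      e1, e2, e3, e4, e5, e6, e7, Pi.add_apply]
    exact r_parts (f t) (g t)
  -- combine
  have e1 : T (Lp.posPart (f+g) + (Lp.negPart f + Lp.negPart g))
      = T (Lp.posPart (f+g)) + (T (Lp.negPart f) + T (Lp.negPart g)) := by
    rw [hadd_nn _ _ (hPnn _) (hsum_nn _ _ (hNnn f) (hNnn g)),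
      hadd_nn _ _ (hNnn f) (hNnn g)]
  have e2 : T (Lp.negPart (f+g) + (Lp.posPart f + Lp.posPart g))
      = T (Lp.negPart (f+g)) + (T (Lp.posPart f) + T (Lp.posPart g)) := by
    rw [hadd_nn _ _ (hNnn _) (hsum_nn _ _ (hPnn f) (hPnn g)),
      hadd_nn _ _ (hPnn f) (hPnn g)]
  have e3 : T (Lp.posPart (f+g)) + (T (Lp.negPart f) + T (Lp.negPart g))
      = T (Lp.negPart (f+g)) + (T (Lp.posPart f) + T (Lp.posPart g)) := by
    rw [← e1, ← e2, hkey]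
  have e5 : T (Lp.posPart (f+g)) - T (Lp.negPart (f+g))
      = (T (Lp.posPart f) + T (Lp.posPart g)) - (T (Lp.negPart f) + T (Lp.negPart g)) := by
    rw [sub_eq_sub_iff_add_eq_add]
    exact e3.trans (by abel)
  rw [hTsplit (f+g), hTsplit f, hTsplit g, e5]
  abel

lemma tanExt_smul [SigmaFinite μ] (hmap : ∀ f : Lp ℝ 1 μ, ‖f‖ = 1 → ‖Δ f‖ = 1)
    (hsurj : ∀ y : Y, ‖y‖ = 1 → ∃ f : Lp ℝ 1 μ, ‖f‖ = 1 ∧ Δ f = y)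
    (hiso : ∀ f g : Lp ℝ 1 μ, ‖f‖ = 1 → ‖g‖ = 1 → ‖Δ f - Δ g‖ = ‖f - g‖)
    (c : ℝ) (f : Lp ℝ 1 μ) : tanExt Δ (c • f) = c • tanExt Δ f := by
  rcases lt_trichotomy c 0 with hc | hc | hc
  · have h1 : c • f = -((-c) • f) := by module
    rw [h1, tanExt_neg hmap hsurj hiso, tanExt_smul_pos f (-c) (by linarith)]
    module
  · rw [hc, zero_smul, zero_smul, tanExt_zero]
  · exact tanExt_smul_pos f c hc

end TanExt
/-- (Tan) Every surjective isometry from the unit sphere of a real `L¹` space over a σ-finite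
measure space onto the unit sphere of a real Banach space extends uniquely to a surjective
real-linear isometry between the spaces. -/
theorem tingley_L1_sigma_finite
    {Ω : Type*} [MeasurableSpace Ω] (μ : Measure Ω) [SigmaFinite μ]
    {Y : Type*} [NormedAddCommGroup Y] [NormedSpace ℝ Y] [CompleteSpace Y]
    (Δ : Lp ℝ 1 μ → Y)
    (hmap : ∀ f : Lp ℝ 1 μ, ‖f‖ = 1 → ‖Δ f‖ = 1)
    (hsurj : ∀ y : Y, ‖y‖ = 1 → ∃ f : Lp ℝ 1 μ, ‖f‖ = 1 ∧ Δ f = y)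
    (hiso : ∀ f g : Lp ℝ 1 μ, ‖f‖ = 1 → ‖g‖ = 1 → ‖Δ f - Δ g‖ = ‖f - g‖) :
    ∃! T : Lp ℝ 1 μ ≃ₗᵢ[ℝ] Y, ∀ f : Lp ℝ 1 μ, ‖f‖ = 1 → T f = Δ f := by
  have key : ∃ T : Lp ℝ 1 μ ≃ₗᵢ[ℝ] Y, ∀ f : Lp ℝ 1 μ, ‖f‖ = 1 → T f = Δ f := by
    set Tlin : Lp ℝ 1 μ →ₗ[ℝ] Y :=
      { toFun := tanExt Δ
        map_add' := fun f g => tanExt_add hmap hsurj hiso f g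
        map_smul' := fun c f => tanExt_smul hmap hsurj hiso c f } with hTlin_def
    set Tiso : Lp ℝ 1 μ →ₗᵢ[ℝ] Y := ⟨Tlin, fun f => tanExt_norm hmap f⟩ with hTiso_def
    have hTsurj : Function.Surjective Tiso := by
      intro y
      by_cases hy : y = 0
      · exact ⟨0, by rw [hy]; exact map_zero Tiso⟩
      · have hy0 : ‖y‖ ≠ 0 := norm_ne_zero_iff.mpr hy
        have hyn : ‖(‖y‖⁻¹ • y : Y)‖ = 1 := by
          rw [norm_smul, Real.norm_eq_abs, abs_of_pos (inv_pos.mpr (norm_pos_iff.mpr hy)),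
            inv_mul_cancel₀ hy0]
        obtain ⟨u, hun, huΔ⟩ := hsurj _ hyn
        refine ⟨‖y‖ • u, ?_⟩
        show tanExt Δ (‖y‖ • u) = y
        rw [tanExt_smul_pos u ‖y‖ (norm_pos_iff.mpr hy), tanExt_sphere u hun, huΔ,
          smul_smul, mul_inv_cancel₀ hy0, one_smul]
    refine ⟨LinearIsometryEquiv.ofSurjective Tiso hTsurj, ?_⟩
    intro f hf
    have h1 : (LinearIsometryEquiv.ofSurjective Tiso hTsurj) f = Tiso f := by
      rw [LinearIsometryEquiv.coe_ofSurjective]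
    rw [h1]
    show tanExt Δ f = Δ f
    exact tanExt_sphere f hf
  obtain ⟨T, hT⟩ := key
  refine ⟨T, hT, ?_⟩
  intro T' hT'
  ext f
  rcases eq_or_ne f 0 with rfl | hf
  · simp
  · have hn : ‖f‖ ≠ 0 := norm_ne_zero_iff.mpr hf
    have hg : ‖(‖f‖⁻¹ • f : Lp ℝ 1 μ)‖ = 1 := by
      rw [norm_smul, norm_inv, norm_norm, inv_mul_cancel₀ hn]
    have e1 : T' (‖f‖⁻¹ • f) = T (‖f‖⁻¹ • f) := by rw [hT' _ hg, hT _ hg]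
    have e2 : ‖f‖ • T' (‖f‖⁻¹ • f) = ‖f‖ • T (‖f‖⁻¹ • f) := by rw [e1]
    simpa [_root_.map_smul, smul_smul, mul_inv_cancel₀ hn] using e2
end
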